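/- arXiv:2401.10538 — 8 statements merged into one kernel-verified Lean document; each statement's English description precedes it below -/
import Mathlib

section
/- For every finite simple graph G = (V, E) with m edges there exists an assignment q : E → {−1, 1} such that (i) for every vertex v ∈ V, the discrepancy |Σ_{e incident to v} q(e)| is at most 2, and (ii) one of the two values is assigned to exactly ⌊m/2⌋ edges and the other to exactly ⌈m/2⌉ edges. -/
namespace DSaux

variable {V : Type*} [DecidableEq V]

/-- Alternating sum of signs at vertex `v` along a list of edges, starting with sign `c`. -/
def altSum (v : V) : ℤ → List (Sym2 V) → ℤ
  | _, [] => 0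
  | c, e :: l => (if v ∈ e then c else 0) + altSum v (-c) l

@[simp] lemma altSum_nil (v : V) (c : ℤ) : altSum v c [] = 0 := rfl

@[simp] lemma altSum_cons (v : V) (c : ℤ) (e : Sym2 V) (l : List (Sym2 V)) :
    altSum v c (e :: l) = (if v ∈ e then c else 0) + altSum v (-c) l := rfl

lemma altSum_append (v : V) (c : ℤ) (l₁ l₂ : List (Sym2 V)) :
    altSum v c (l₁ ++ l₂) = altSum v c l₁ + altSum v ((-1) ^ l₁.length * c) l₂ := by
  induction l₁ generalizing c with
  | nil => simp
  | cons e l ih =>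
    simp only [List.cons_append, altSum_cons, ih (-c), List.length_cons, pow_succ]
    ring_nf

lemma even_altSum_sub_countP (v : V) (l : List (Sym2 V)) :
    ∀ c : ℤ, (c = 1 ∨ c = -1) →
      Even (altSum v c l - (l.countP (fun e => decide (v ∈ e)) : ℤ)) := by
  induction l with
  | nil => intro c _; simp
  | cons e l ih =>
    intro c hc
    have h2 := ih (-c) (by rcases hc with h | h <;> simp [h])
    rw [altSum_cons, List.countP_cons]
    rw [Int.even_iff] at h2 ⊢
    rcases hc with rfl | rfl <;> by_cases hv : v ∈ e <;> simp [hv] at * <;> omega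


open SimpleGraph


lemma altSum_edges (G : SimpleGraph V) {a b : V} (W : G.Walk a b) (hW : 0 < W.length)
    (v : V) (c : ℤ) :
    altSum v c W.edges =
      (if v = a then c else 0) + (if v = b then (-1) ^ (W.length - 1) * c else 0) := by
  induction W generalizing c with
  | nil => simp at hW
  | @cons a a' b h W ih =>
    have hne : a ≠ a' := h.ne
    rcases Nat.eq_zero_or_pos W.length with h0 | hpos
    · cases W with
      | nil =>
        simp only [Walk.edges_cons, Walk.edges_nil, altSum_cons, altSum_nil,
          Walk.length_cons, Walk.length_nil, Sym2.mem_iff]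
        by_cases h1 : v = a <;> by_cases h2 : v = a' <;> subst_vars <;>
          simp_all <;> ring_nf
      | cons h' W' => simp at h0
    · obtain ⟨n, hn⟩ : ∃ n, W.length = n + 1 := ⟨W.length - 1, by omega⟩
      rw [Walk.edges_cons, altSum_cons, ih hpos (-c)]
      rw [Walk.length_cons, hn]
      simp only [Nat.add_sub_cancel, Sym2.mem_iff]
      by_cases h1 : v = a <;> by_cases h2 : v = a' <;> by_cases h3 : v = b <;> subst_vars <;>
        simp_all [pow_succ] <;> ring_nf


lemma exists_first_edge {G : SimpleGraph V} {a b : V} (W : G.Walk a b) (hW : 0 < W.length) :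
    ∃ e ∈ W.edges, a ∈ e := by
  cases W with
  | nil => simp at hW
  | @cons _ c _ h W =>
    exact ⟨s(a, c), by rw [Walk.edges_cons]; exact List.mem_cons_self,
      Sym2.mem_mk_left _ _⟩

lemma exists_last_edge {G : SimpleGraph V} {a b : V} (W : G.Walk a b) (hW : 0 < W.length) :
    ∃ e ∈ W.edges, b ∈ e := by
  obtain ⟨e, he, hbe⟩ := exists_first_edge W.reverse (by simpa using hW)
  exact ⟨e, by simpa [Walk.edges_reverse] using he, hbe⟩

lemma exists_max_trail (G : SimpleGraph V) (E' : Finset (Sym2 V))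
    (hE' : ∀ e ∈ E', e ∈ G.edgeSet) (u : V) :
    ∃ (b : V) (W : G.Walk u b), W.IsTrail ∧ (∀ e ∈ W.edges, e ∈ E') ∧
      (∀ e ∈ E', b ∈ e → e ∈ W.edges) ∧ ((∃ e ∈ E', u ∈ e) → 0 < W.length) := by
  classical
  set P : ℕ → Prop := fun n =>
    ∃ (b : V) (W : G.Walk u b), W.IsTrail ∧ (∀ e ∈ W.edges, e ∈ E') ∧ W.length = n with hP
  have hbound : ∀ n, P n → n ≤ E'.card := by
    rintro n ⟨b, W, hT, hsub, rfl⟩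
    have h1 : W.edges.toFinset ⊆ E' := fun e he => hsub e (List.mem_toFinset.mp he)
    have h2 := Finset.card_le_card h1
    rwa [List.toFinset_card_of_nodup hT.edges_nodup, Walk.length_edges] at h2
  have hP0 : P 0 := ⟨u, Walk.nil, by simp, by simp, rfl⟩
  have hspec : P (Nat.findGreatest P E'.card) :=
    Nat.findGreatest_spec (Nat.zero_le _) hP0
  obtain ⟨b, W, hT, hsub, hlen⟩ := hspec
  have hmax : ∀ m, P m → m ≤ W.length := fun m hm =>
    hlen ▸ Nat.le_findGreatest (hbound m hm) hm
  refine ⟨b, W, hT, hsub, ?_, ?_⟩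
  · intro e heE hbe
    by_contra hnot
    obtain ⟨c, rfl⟩ := Sym2.mem_iff_exists.mp hbe
    have hadj : G.Adj b c := (G.mem_edgeSet).mp (hE' _ heE)
    have hT' : (W.concat hadj).IsTrail := by
      rw [Walk.isTrail_def, Walk.edges_concat]
      simp [List.nodup_append, hT.edges_nodup, hnot]
      intro a ha h; exact hnot (h ▸ ha)
    have : P (W.length + 1) := by
      refine ⟨c, W.concat hadj, hT', ?_, by simp [Walk.length_concat]⟩
      intro e he
      simp only [Walk.edges_concat, List.concat_eq_append, List.mem_append, List.mem_singleton] at he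
      rcases he with he | he
      · exact hsub e he
      · subst he; exact heE
    have := hmax _ this
    omega
  · rintro ⟨e, heE, hue⟩
    obtain ⟨c, rfl⟩ := Sym2.mem_iff_exists.mp hue
    have hadj : G.Adj u c := (G.mem_edgeSet).mp (hE' _ heE)
    have : P 1 := ⟨c, Walk.cons hadj Walk.nil, by simp [Walk.isTrail_def], by
      intro e he; simp at he; subst he; exact heE, by simp⟩
    have := hmax _ this
    omega


lemma neg_one_pow_cases (k : ℕ) : ((-1 : ℤ)) ^ k = 1 ∨ ((-1 : ℤ)) ^ k = -1 := by
  rcases Nat.even_or_odd k with h | h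
  · exact Or.inl h.neg_one_pow
  · exact Or.inr h.neg_one_pow

lemma countP_parity {G : SimpleGraph V} {a b : V} (W : G.Walk a b) (hW : 0 < W.length)
    (v : V) :
    Odd (W.edges.countP (fun e => decide (v ∈ e))) ↔ (a ≠ b ∧ (v = a ∨ v = b)) := by
  have h1 := even_altSum_sub_countP v W.edges 1 (Or.inl rfl)
  rw [altSum_edges G W hW v 1] at h1
  rw [Int.even_iff] at h1
  rw [Nat.odd_iff]
  rcases neg_one_pow_cases (W.length - 1) with hp | hp <;> rw [hp] at h1 <;>
    by_cases hva : v = a <;> by_cases hvb : v = b <;> by_cases hab : a = b <;>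
      subst_vars <;> simp_all <;> omega

lemma abs_altSum_le {G : SimpleGraph V} {a b : V} (W : G.Walk a b) (hW : 0 < W.length)
    (v : V) (c : ℤ) (hc : c = 1 ∨ c = -1) :
    |altSum v c W.edges| ≤ (if v = a then 1 else 0) + (if v = b then 1 else 0) := by
  rw [altSum_edges G W hW v c]
  rcases neg_one_pow_cases (W.length - 1) with hp | hp <;> rw [hp] <;>
    rcases hc with rfl | rfl <;>
      by_cases hva : v = a <;> by_cases hvb : v = b <;> by_cases hab : a = b <;>
        subst_vars <;> simp_all <;> decide

lemma card_filter_toFinset (l : List (Sym2 V)) (hl : l.Nodup) (v : V) :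
    (l.toFinset.filter (fun e => v ∈ e)).card = l.countP (fun e => decide (v ∈ e)) := by
  rw [List.countP_eq_length_filter, ← List.toFinset_card_of_nodup (hl.filter _),
    List.toFinset_filter]
  congr 1
  exact Finset.filter_congr (fun x _ => by simp)

lemma filter_sdiff_card {α : Type*} [DecidableEq α] (s t : Finset α) (hts : t ⊆ s)
    (p : α → Prop) [DecidablePred p] :
    ((s \ t).filter p).card = (s.filter p).card - (t.filter p).card := by
  have h1 : (s \ t).filter p = s.filter p \ t.filter p := by
    ext a; simp only [Finset.mem_filter, Finset.mem_sdiff]; tauto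
  rw [h1, Finset.card_sdiff_of_subset (Finset.filter_subset_filter _ hts)]

lemma splice (G : SimpleGraph V) (E' : Finset (Sym2 V)) (hE'G : ∀ e ∈ E', e ∈ G.edgeSet)
    (heven : ∀ v : V, Even ((E'.filter (fun e => v ∈ e)).card)) :
    ∀ k (u : V) (W : G.Walk u u), W.IsTrail → 0 < W.length → (∀ e ∈ W.edges, e ∈ E') →
      E'.card - W.length = k →
      ∃ W' : G.Walk u u, W'.IsTrail ∧ 0 < W'.length ∧ (∀ e ∈ W'.edges, e ∈ E') ∧
        (∀ e ∈ E', (∃ x ∈ W'.support, x ∈ e) → e ∈ W'.edges) := by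
  intro k
  induction k using Nat.strong_induction_on with
  | _ k ih =>
  intro u W hT hpos hsub hk
  by_cases hdone : ∀ e ∈ E', (∃ x ∈ W.support, x ∈ e) → e ∈ W.edges
  · exact ⟨W, hT, hpos, hsub, hdone⟩
  · push_neg at hdone
    obtain ⟨e₀, he₀E, ⟨x, hxsup, hxe⟩, he₀not⟩ := hdone
    set E'' := E' \ W.edges.toFinset with hE''def
    have hsubfin : W.edges.toFinset ⊆ E' := fun e he => hsub e (List.mem_toFinset.mp he)
    have hE''sub : ∀ e ∈ E'', e ∈ G.edgeSet := fun e he =>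
      hE'G e (Finset.mem_sdiff.mp he).1
    have hE''W : ∀ e ∈ E'', e ∉ W.edges := fun e he =>
      fun hmem => (Finset.mem_sdiff.mp he).2 (List.mem_toFinset.mpr hmem)
    have hWlen : W.edges.length = W.length := Walk.length_edges W
    -- all degrees in E'' are even
    have hevenE'' : ∀ w : V, Even ((E''.filter (fun e => w ∈ e)).card) := by
      intro w
      rw [hE''def, filter_sdiff_card E' W.edges.toFinset hsubfin]
      have hcnt : (W.edges.toFinset.filter (fun e => w ∈ e)).card
          = W.edges.countP (fun e => decide (w ∈ e)) :=
        card_filter_toFinset W.edges hT.edges_nodup w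
      have hclosed : ¬ Odd (W.edges.countP (fun e => decide (w ∈ e))) := by
        rw [countP_parity W hpos w]; simp
      rw [Nat.not_odd_iff_even] at hclosed
      have h1 := heven w
      rw [Nat.even_sub] at *
      · rw [hcnt]; simp [hclosed, h1]
      · rw [hcnt]
        calc W.edges.countP (fun e => decide (w ∈ e))
            = (W.edges.toFinset.filter (fun e => w ∈ e)).card := hcnt.symm
          _ ≤ (E'.filter (fun e => w ∈ e)).card :=
              Finset.card_le_card (Finset.filter_subset_filter _ hsubfin)
    -- maximal trail from x inside E''
    obtain ⟨y, S, hStrail, hSsub, hSsat, hSpos⟩ := exists_max_trail G E'' hE''sub x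
    have he₀E'' : e₀ ∈ E'' := Finset.mem_sdiff.mpr ⟨he₀E, fun h => he₀not (List.mem_toFinset.mp h)⟩
    have hSpos' : 0 < S.length := hSpos ⟨e₀, he₀E'', hxe⟩
    have hyx : y = x := by
      by_contra hne
      have hset : E''.filter (fun e => y ∈ e) = S.edges.toFinset.filter (fun e => y ∈ e) := by
        ext e
        simp only [Finset.mem_filter, List.mem_toFinset]
        exact ⟨fun ⟨h1, h2⟩ => ⟨hSsat e h1 h2, h2⟩, fun ⟨h1, h2⟩ => ⟨hSsub e h1, h2⟩⟩
      have hodd : Odd ((E''.filter (fun e => y ∈ e)).card) := by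
        rw [hset, card_filter_toFinset S.edges hStrail.edges_nodup y,
          countP_parity S hSpos' y]
        exact ⟨fun h => hne h.symm, Or.inr rfl⟩
      exact (Nat.not_odd_iff_even.mpr (hevenE'' y)) hodd
    subst hyx
    -- splice S into W at x
    set T1 := W.takeUntil _ hxsup with hT1
    set T2 := W.dropUntil _ hxsup with hT2
    have hWspec : T1.append T2 = W := W.take_spec hxsup
    have hWedges : T1.edges ++ T2.edges = W.edges := by
      rw [← Walk.edges_append, hWspec]
    set W2 : G.Walk u u := T1.append (S.append T2) with hW2
    have hW2edges : W2.edges = T1.edges ++ (S.edges ++ T2.edges) := by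
      rw [hW2, Walk.edges_append, Walk.edges_append]
    have hSdisjW : S.edges.Disjoint W.edges := by
      intro e he hw
      exact hE''W e (hSsub e he) hw
    have hW2nodup : W2.edges.Nodup := by
      rw [hW2edges]
      have hperm : (T1.edges ++ (S.edges ++ T2.edges)).Perm
          (S.edges ++ (T1.edges ++ T2.edges)) := by
        refine (List.perm_append_comm).trans ?_
        rw [List.append_assoc]
        exact List.Perm.append_left _ List.perm_append_comm
      refine hperm.symm.nodup ?_
      rw [List.nodup_append]
      refine ⟨hStrail.edges_nodup, ?_, ?_⟩
      · rw [hWedges]; exact hT.edges_nodup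
      · rw [hWedges]; exact fun a ha b hb hab => hSdisjW ha (by subst hab; exact hb)
    have hW2trail : W2.IsTrail := (Walk.isTrail_def W2).mpr hW2nodup
    have hW2pos : 0 < W2.length := by
      rw [hW2, Walk.length_append, Walk.length_append]
      omega
    have hW2sub : ∀ e ∈ W2.edges, e ∈ E' := by
      intro e he
      rw [hW2edges] at he
      rcases List.mem_append.mp he with h1 | h2
      · exact hsub e (hWedges ▸ List.mem_append.mpr (Or.inl h1))
      · rcases List.mem_append.mp h2 with h3 | h4
        · exact (Finset.mem_sdiff.mp (hSsub e h3)).1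
        · exact hsub e (hWedges ▸ List.mem_append.mpr (Or.inr h4))
    have hW2len : W2.length = W.length + S.length := by
      rw [hW2, Walk.length_append, Walk.length_append]
      have : T1.length + T2.length = W.length := by
        rw [← Walk.length_append, hWspec]
      omega
    have hW2bound : W2.length ≤ E'.card := by
      have h1 : W2.edges.toFinset ⊆ E' := fun e he => hW2sub e (List.mem_toFinset.mp he)
      have h2 := Finset.card_le_card h1
      rwa [List.toFinset_card_of_nodup hW2nodup, Walk.length_edges] at h2
    exact ih (E'.card - W2.length) (by omega) u W2 hW2trail hW2pos hW2sub rfl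

def wt {G : SimpleGraph V} (v : V) (T : Σ a b : V, G.Walk a b) : ℕ :=
  (if v = T.1 then 1 else 0) + (if v = T.2.1 then 1 else 0)

def edgesOf {G : SimpleGraph V} (T : Σ a b : V, G.Walk a b) : List (Sym2 V) :=
  T.2.2.edges

/-- The invariant for our trail decompositions. -/
def Good (G : SimpleGraph V) (E' : Finset (Sym2 V))
    (D : List (Σ a b : V, G.Walk a b)) : Prop :=
  (∀ T ∈ D, T.2.2.IsTrail ∧ 0 < T.2.2.length) ∧
  (D.map edgesOf).flatten.Nodup ∧
  (D.map edgesOf).flatten.toFinset = E' ∧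
  ∀ v : V, (D.map (wt v)).sum ≤ 2 ∧
    (Odd ((E'.filter (fun e => v ∈ e)).card) → (D.map (wt v)).sum ≤ 1)

lemma mem_E'_of_mem_edges {G : SimpleGraph V} {E' : Finset (Sym2 V)}
    {D : List (Σ a b : V, G.Walk a b)} (hD : Good G E' D)
    {T} (hT : T ∈ D) {e : Sym2 V} (he : e ∈ T.2.2.edges) : e ∈ E' := by
  rw [← hD.2.2.1]
  exact List.mem_toFinset.mpr
    (List.mem_flatten.mpr ⟨edgesOf T, List.mem_map_of_mem hT, he⟩)

lemma wt_eq_zero_of_no_edge {G : SimpleGraph V} {E' : Finset (Sym2 V)}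
    {D : List (Σ a b : V, G.Walk a b)} (hD : Good G E' D)
    {v : V} (hv : ∀ e ∈ E', v ∉ e) : ∀ T ∈ D, wt v T = 0 := by
  intro T hT
  obtain ⟨htrail, hpos⟩ := hD.1 T hT
  obtain ⟨e1, he1, hae1⟩ := exists_first_edge T.2.2 hpos
  obtain ⟨e2, he2, hbe2⟩ := exists_last_edge T.2.2 hpos
  have h1 : v ≠ T.1 := fun h => hv e1 (mem_E'_of_mem_edges hD hT he1) (h ▸ hae1)
  have h2 : v ≠ T.2.1 := fun h => hv e2 (mem_E'_of_mem_edges hD hT he2) (h ▸ hbe2)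
  simp [wt, h1, h2]

lemma sum_wt_eq_zero_of_no_edge {G : SimpleGraph V} {E' : Finset (Sym2 V)}
    {D : List (Σ a b : V, G.Walk a b)} (hD : Good G E' D)
    {v : V} (hv : ∀ e ∈ E', v ∉ e) : (D.map (wt v)).sum = 0 := by
  apply List.sum_eq_zero
  intro x hx
  obtain ⟨T, hT, rfl⟩ := List.mem_map.mp hx
  exact wt_eq_zero_of_no_edge hD hv T hT

lemma good_reverse {G : SimpleGraph V} {E' : Finset (Sym2 V)}
    (l1 l2 : List (Σ a b : V, G.Walk a b)) (x y : V) (S : G.Walk x y)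
    (h : Good G E' (l1 ++ ⟨x, y, S⟩ :: l2)) :
    Good G E' (l1 ++ ⟨y, x, S.reverse⟩ :: l2) := by
  obtain ⟨h1, h2, h3, h4⟩ := h
  have hperm : ((l1 ++ ⟨y, x, S.reverse⟩ :: l2).map edgesOf).flatten.Perm
      ((l1 ++ ⟨x, y, S⟩ :: l2).map edgesOf).flatten := by
    simp only [List.map_append, List.map_cons, List.flatten_append, List.flatten_cons]
    refine List.Perm.append_left _ (List.Perm.append ?_ (List.Perm.refl _))
    simpa [edgesOf, Walk.edges_reverse] using (List.reverse_perm S.edges)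
  have hwt : ∀ v : V, ((l1 ++ ⟨y, x, S.reverse⟩ :: l2).map (wt v)).sum
      = ((l1 ++ ⟨x, y, S⟩ :: l2).map (wt v)).sum := by
    intro v
    simp only [List.map_append, List.map_cons, List.sum_append, List.sum_cons]
    have : wt v (⟨y, x, S.reverse⟩ : Σ a b : V, G.Walk a b)
        = wt v (⟨x, y, S⟩ : Σ a b : V, G.Walk a b) := by
      simp [wt]; omega
    rw [this]
  refine ⟨?_, hperm.symm.nodup h2, by rw [List.toFinset_eq_of_perm _ _ hperm, h3], fun v => by
    rw [hwt v]; exact h4 v⟩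
  intro T hT
  rcases List.mem_append.mp hT with h | h
  · exact h1 T (List.mem_append.mpr (Or.inl h))
  · rcases List.mem_cons.mp h with rfl | h
    · obtain ⟨hS, hSpos⟩ := h1 ⟨x, y, S⟩ (List.mem_append.mpr (Or.inr (List.mem_cons_self)))
      exact ⟨hS.reverse, by simpa using hSpos⟩
    · exact h1 T (List.mem_append.mpr (Or.inr (List.mem_cons_of_mem _ h)))

lemma odd_deg_sdiff {G : SimpleGraph V} {E' : Finset (Sym2 V)} {u w v : V}
    (W : G.Walk u w) (hWtrail : W.IsTrail) (hWpos : 0 < W.length)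
    (hWsub : ∀ e ∈ W.edges, e ∈ E') (hvu : v ≠ u) (hvw : v ≠ w)
    (hOdd : Odd ((E'.filter (fun e => v ∈ e)).card)) :
    Odd (((E' \ W.edges.toFinset).filter (fun e => v ∈ e)).card) := by
  have hfin : W.edges.toFinset ⊆ E' := fun e he => hWsub e (List.mem_toFinset.mp he)
  rw [filter_sdiff_card E' _ hfin]
  have hcnt := card_filter_toFinset W.edges hWtrail.edges_nodup v
  have heven : ¬ Odd (W.edges.countP (fun e => decide (v ∈ e))) := by
    rw [countP_parity W hWpos v]
    rintro ⟨h1, h2 | h2⟩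
    · exact hvu h2
    · exact hvw h2
  have hle : (W.edges.toFinset.filter (fun e => v ∈ e)).card
      ≤ (E'.filter (fun e => v ∈ e)).card :=
    Finset.card_le_card (Finset.filter_subset_filter _ hfin)
  rw [Nat.not_odd_iff_even, Nat.even_iff] at heven
  rw [Nat.odd_iff] at hOdd ⊢
  rw [hcnt] at hle
  omega

lemma good_merge {G : SimpleGraph V} {E' : Finset (Sym2 V)}
    {u w : V} (W : G.Walk u w) (hWtrail : W.IsTrail) (hWpos : 0 < W.length)
    (hWsub : ∀ e ∈ W.edges, e ∈ E') (hWsat : ∀ e ∈ E', w ∈ e → e ∈ W.edges)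
    (hwu : w ≠ u)
    (l1 l2 : List (Σ a b : V, G.Walk a b)) (x : V) (S : G.Walk x u)
    (hGood : Good G (E' \ W.edges.toFinset) (l1 ++ ⟨x, u, S⟩ :: l2)) :
    Good G E' (l1 ++ ⟨x, w, S.append W⟩ :: l2) := by
  classical
  set E'' := E' \ W.edges.toFinset with hE''def
  have hfin : W.edges.toFinset ⊆ E' := fun e he => hWsub e (List.mem_toFinset.mp he)
  have hE''W : ∀ e ∈ E'', e ∉ W.edges := fun e he hmem =>
    (Finset.mem_sdiff.mp he).2 (List.mem_toFinset.mpr hmem)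
  have hE''E' : ∀ e ∈ E'', e ∈ E' := fun e he => (Finset.mem_sdiff.mp he).1
  have hmidmem : (⟨x, u, S⟩ : Σ a b : V, G.Walk a b) ∈ l1 ++ ⟨x, u, S⟩ :: l2 :=
    List.mem_append.mpr (Or.inr (List.mem_cons_self))
  obtain ⟨hStrail, hSpos⟩ := hGood.1 _ hmidmem
  have hSsub : ∀ e ∈ S.edges, e ∈ E'' := fun e he => by
    have := mem_E'_of_mem_edges hGood hmidmem (e := e) he
    exact this
  have hwE'' : ∀ e ∈ E'', w ∉ e := fun e he hw => hE''W e he (hWsat e (hE''E' e he) hw)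
  -- the new trail
  have hMtrail : (S.append W).IsTrail := by
    rw [Walk.isTrail_def, Walk.edges_append, List.nodup_append]
    exact ⟨hStrail.edges_nodup, hWtrail.edges_nodup,
      fun e he b hb hab => hE''W e (hSsub e he) (by subst hab; exact hb)⟩
  have hMpos : 0 < (S.append W).length := by rw [Walk.length_append]; omega
  -- flatten permutation
  have hperm : ((l1 ++ ⟨x, w, S.append W⟩ :: l2).map edgesOf).flatten.Perm
      (((l1 ++ ⟨x, u, S⟩ :: l2).map edgesOf).flatten ++ W.edges) := by
    simp only [List.map_append, List.map_cons, List.flatten_append, List.flatten_cons,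
      edgesOf, Walk.edges_append, List.append_assoc]
    refine List.Perm.append_left _ (List.Perm.append_left _ ?_)
    exact (List.perm_append_comm).trans (List.Perm.append_left _ (List.Perm.refl _))
  have holdsub : ∀ e ∈ ((l1 ++ ⟨x, u, S⟩ :: l2).map edgesOf).flatten, e ∈ E'' := by
    intro e he
    rw [← hGood.2.2.1]
    exact List.mem_toFinset.mpr he
  have hnodup : ((l1 ++ ⟨x, w, S.append W⟩ :: l2).map edgesOf).flatten.Nodup := by
    refine hperm.symm.nodup ?_
    rw [List.nodup_append]
    exact ⟨hGood.2.1, hWtrail.edges_nodup, fun e he b hb hab => hE''W e (holdsub e he) (by subst hab; exact hb)⟩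
  have htofin : ((l1 ++ ⟨x, w, S.append W⟩ :: l2).map edgesOf).flatten.toFinset = E' := by
    rw [List.toFinset_eq_of_perm _ _ hperm, List.toFinset_append, hGood.2.2.1]
    exact Finset.sdiff_union_of_subset hfin
  -- trails
  have htrails : ∀ T ∈ l1 ++ ⟨x, w, S.append W⟩ :: l2, T.2.2.IsTrail ∧ 0 < T.2.2.length := by
    intro T hT
    rcases List.mem_append.mp hT with h | h
    · exact hGood.1 T (List.mem_append.mpr (Or.inl h))
    · rcases List.mem_cons.mp h with rfl | h
      · exact ⟨hMtrail, hMpos⟩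
      · exact hGood.1 T (List.mem_append.mpr (Or.inr (List.mem_cons_of_mem _ h)))
  refine ⟨htrails, hnodup, htofin, ?_⟩
  -- weights
  intro v
  have hsum_new : ((l1 ++ ⟨x, w, S.append W⟩ :: l2).map (wt v)).sum
      = (l1.map (wt v)).sum + wt v (⟨x, w, S.append W⟩ : Σ a b : V, G.Walk a b)
        + (l2.map (wt v)).sum := by
    simp [List.map_append, List.sum_append]; ring
  have hsum_old : ((l1 ++ ⟨x, u, S⟩ :: l2).map (wt v)).sum
      = (l1.map (wt v)).sum + wt v (⟨x, u, S⟩ : Σ a b : V, G.Walk a b)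
        + (l2.map (wt v)).sum := by
    simp [List.map_append, List.sum_append]; ring
  have h4 := hGood.2.2.2 v
  by_cases hvw : v = w
  · -- v = w : weight is exactly 1
    subst hvw
    have hzero : ∀ T ∈ l1 ++ ⟨x, u, S⟩ :: l2, wt v T = 0 :=
      wt_eq_zero_of_no_edge hGood hwE''
    have hA : (l1.map (wt v)).sum = 0 := by
      apply List.sum_eq_zero; intro a ha
      obtain ⟨T, hT, rfl⟩ := List.mem_map.mp ha
      exact hzero T (List.mem_append.mpr (Or.inl hT))
    have hB : (l2.map (wt v)).sum = 0 := by
      apply List.sum_eq_zero; intro a ha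
      obtain ⟨T, hT, rfl⟩ := List.mem_map.mp ha
      exact hzero T (List.mem_append.mpr (Or.inr (List.mem_cons_of_mem _ hT)))
    have hvx : v ≠ x := by
      have := hzero _ hmidmem
      simp only [wt] at this
      intro h; rw [if_pos h] at this; omega
    rw [hsum_new, hA, hB]
    simp [wt, hvx]
  · by_cases hvu : v = u
    · -- v = u : weight drops by 1
      have hnew_old : wt v (⟨x, w, S.append W⟩ : Σ a b : V, G.Walk a b) + 1
          = wt v (⟨x, u, S⟩ : Σ a b : V, G.Walk a b) := by
        simp only [wt]
        rw [if_neg hvw, if_pos hvu]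
      have h2 := h4.1
      rw [hsum_old, ← hnew_old] at h2
      constructor
      · rw [hsum_new]; omega
      · intro _; rw [hsum_new]; omega
    · -- other vertices : weight unchanged
      have heq : wt v (⟨x, w, S.append W⟩ : Σ a b : V, G.Walk a b)
          = wt v (⟨x, u, S⟩ : Σ a b : V, G.Walk a b) := by
        simp only [wt]
        rw [if_neg hvw, if_neg hvu]
      rw [hsum_new, heq, ← hsum_old]
      refine ⟨h4.1, fun hodd => h4.2 ?_⟩
      exact odd_deg_sdiff W hWtrail hWpos hWsub hvu hvw hodd

lemma good_cons {G : SimpleGraph V} {E' : Finset (Sym2 V)}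
    {u w : V} (W : G.Walk u w) (hWtrail : W.IsTrail) (hWpos : 0 < W.length)
    (hWsub : ∀ e ∈ W.edges, e ∈ E')
    {D' : List (Σ a b : V, G.Walk a b)}
    (hGood' : Good G (E' \ W.edges.toFinset) D') :
    ((((⟨u, w, W⟩ : Σ a b : V, G.Walk a b) :: D').map edgesOf).flatten.Nodup ∧
     (((⟨u, w, W⟩ : Σ a b : V, G.Walk a b) :: D').map edgesOf).flatten.toFinset = E') ∧
    (∀ T ∈ (⟨u, w, W⟩ : Σ a b : V, G.Walk a b) :: D', T.2.2.IsTrail ∧ 0 < T.2.2.length) := by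
  have hfin : W.edges.toFinset ⊆ E' := fun e he => hWsub e (List.mem_toFinset.mp he)
  have hE''W : ∀ e ∈ E' \ W.edges.toFinset, e ∉ W.edges := fun e he hmem =>
    (Finset.mem_sdiff.mp he).2 (List.mem_toFinset.mpr hmem)
  have hflat : ∀ e ∈ (D'.map edgesOf).flatten, e ∈ E' \ W.edges.toFinset := by
    intro e he; rw [← hGood'.2.2.1]; exact List.mem_toFinset.mpr he
  refine ⟨⟨?_, ?_⟩, ?_⟩
  · simp only [List.map_cons, List.flatten_cons]
    rw [List.nodup_append]
    refine ⟨hWtrail.edges_nodup, hGood'.2.1, ?_⟩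
    intro e he b hb hab
    subst hab
    exact hE''W e (hflat e hb) he
  · simp only [List.map_cons, List.flatten_cons]
    rw [List.toFinset_append, hGood'.2.2.1]
    exact Finset.union_sdiff_of_subset hfin
  · rintro T hT
    rcases List.mem_cons.mp hT with rfl | h
    · exact ⟨hWtrail, hWpos⟩
    · exact hGood'.1 T h

lemma decomp (G : SimpleGraph V) :
    ∀ (n : ℕ) (E' : Finset (Sym2 V)), E'.card = n → (∀ e ∈ E', e ∈ G.edgeSet) →
      ∃ D : List (Σ a b : V, G.Walk a b), Good G E' D := by
  intro n
  induction n using Nat.strong_induction_on with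
  | _ n ih =>
  intro E' hcard hsub
  rcases Finset.eq_empty_or_nonempty E' with rfl | hne
  · exact ⟨[], by simp [Good]⟩
  by_cases hodd : ∃ u : V, Odd ((E'.filter (fun e => u ∈ e)).card)
  · -- Case A: some vertex of odd degree
    obtain ⟨u, hu⟩ := hodd
    obtain ⟨w, W, hWtrail, hWsub, hWsat, hWposc⟩ := exists_max_trail G E' hsub u
    have hupos : ∃ e ∈ E', u ∈ e := by
      have hpos : (E'.filter (fun e => u ∈ e)).Nonempty := by
        rw [← Finset.card_pos]; rcases hu with ⟨k, hk⟩; omega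
      obtain ⟨e, he⟩ := hpos
      exact ⟨e, (Finset.mem_filter.mp he).1, (Finset.mem_filter.mp he).2⟩
    have hWpos : 0 < W.length := hWposc hupos
    have hwfilter : E'.filter (fun e => w ∈ e)
        = W.edges.toFinset.filter (fun e => w ∈ e) := by
      ext e
      simp only [Finset.mem_filter, List.mem_toFinset]
      exact ⟨fun ⟨h1, h2⟩ => ⟨hWsat e h1 h2, h2⟩, fun ⟨h1, h2⟩ => ⟨hWsub e h1, h2⟩⟩
    have hwu : w ≠ u := by
      rintro rfl
      have h1 : (E'.filter (fun e => w ∈ e)).card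
          = W.edges.countP (fun e => decide (w ∈ e)) := by
        rw [hwfilter]; exact card_filter_toFinset _ hWtrail.edges_nodup _
      have h2 : ¬ Odd (W.edges.countP (fun e => decide (w ∈ e))) := by
        rw [countP_parity W hWpos w]; simp
      rw [h1] at hu; exact h2 hu
    have hfin : W.edges.toFinset ⊆ E' := fun e he => hWsub e (List.mem_toFinset.mp he)
    have hcard'' : (E' \ W.edges.toFinset).card < n := by
      have h1 : W.edges.toFinset.card = W.length := by
        rw [List.toFinset_card_of_nodup hWtrail.edges_nodup, Walk.length_edges]
      rw [Finset.card_sdiff_of_subset hfin]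
      have h2 := Finset.card_le_card hfin
      omega
    obtain ⟨D', hGood'⟩ := ih _ hcard'' (E' \ W.edges.toFinset) rfl
      (fun e he => hsub e ((Finset.mem_sdiff.mp he).1))
    by_cases hS : ∃ T ∈ D', T.1 = u ∨ T.2.1 = u
    · obtain ⟨T₀, hT₀mem, hT₀end⟩ := hS
      obtain ⟨ls, lt, rfl⟩ := List.append_of_mem hT₀mem
      obtain ⟨x, y, S⟩ := T₀
      rcases hT₀end with h | h
      · dsimp only at h
        subst h
        have hGood'' := good_reverse ls lt x y S hGood'
        exact ⟨_, good_merge W hWtrail hWpos hWsub hWsat hwu ls lt y S.reverse hGood''⟩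
      · dsimp only at h
        subst h
        exact ⟨_, good_merge W hWtrail hWpos hWsub hWsat hwu ls lt x S hGood'⟩
    · push_neg at hS
      have hwE'' : ∀ e ∈ E' \ W.edges.toFinset, w ∉ e := by
        intro e he hw
        have h1 : e ∈ E'.filter (fun e => w ∈ e) :=
          Finset.mem_filter.mpr ⟨(Finset.mem_sdiff.mp he).1, hw⟩
        rw [hwfilter] at h1
        exact (Finset.mem_sdiff.mp he).2 (Finset.mem_filter.mp h1).1
      obtain ⟨⟨hnodup, htofin⟩, htrails⟩ := good_cons W hWtrail hWpos hWsub hGood'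
      refine ⟨⟨u, w, W⟩ :: D', htrails, hnodup, htofin, ?_⟩
      intro v
      have hsum : (((⟨u, w, W⟩ : Σ a b : V, G.Walk a b) :: D').map (wt v)).sum
          = wt v (⟨u, w, W⟩ : Σ a b : V, G.Walk a b) + (D'.map (wt v)).sum := by
        simp
      by_cases hvu : v = u
      · have hzero : (D'.map (wt v)).sum = 0 := by
          apply List.sum_eq_zero; intro a ha
          obtain ⟨T, hT, rfl⟩ := List.mem_map.mp ha
          have h1 : ¬ v = T.1 := fun hh => (hS T hT).1 (by rw [← hh, hvu])
          have h2 : ¬ v = T.2.1 := fun hh => (hS T hT).2 (by rw [← hh, hvu])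
          simp [wt, h1, h2]
        have hvw : ¬ v = w := by rw [hvu]; exact fun hh => hwu hh.symm
        have hhead : wt v (⟨u, w, W⟩ : Σ a b : V, G.Walk a b) = 1 := by
          simp [wt, hvu, hvw, Ne.symm hwu]
        rw [hsum, hzero, hhead]
        exact ⟨by omega, fun _ => by omega⟩
      · by_cases hvw : v = w
        · have hzero : (D'.map (wt v)).sum = 0 :=
            sum_wt_eq_zero_of_no_edge hGood' (by rw [hvw]; exact hwE'')
          have hhead : wt v (⟨u, w, W⟩ : Σ a b : V, G.Walk a b) = 1 := by
            simp [wt, hvu, hvw, hwu]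
          rw [hsum, hzero, hhead]
          exact ⟨by omega, fun _ => by omega⟩
        · have hhead : wt v (⟨u, w, W⟩ : Σ a b : V, G.Walk a b) = 0 := by
            simp [wt, hvu, hvw]
          rw [hsum, hhead]
          have h4 := hGood'.2.2.2 v
          refine ⟨by omega, fun hoddv => ?_⟩
          have := h4.2 (odd_deg_sdiff W hWtrail hWpos hWsub hvu hvw hoddv)
          omega
  · -- Case B: all degrees even
    push_neg at hodd
    have heven : ∀ v : V, Even ((E'.filter (fun e => v ∈ e)).card) := fun v =>
      Nat.not_odd_iff_even.mp (hodd v)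
    obtain ⟨e₀, he₀⟩ := hne
    obtain ⟨u, hu0⟩ : ∃ u : V, u ∈ e₀ := ⟨e₀.out.1, Sym2.out_fst_mem e₀⟩
    obtain ⟨y, W, hWtrail, hWsub, hWsat, hWposc⟩ := exists_max_trail G E' hsub u
    have hWpos : 0 < W.length := hWposc ⟨e₀, he₀, hu0⟩
    have hyu : y = u := by
      by_contra hne'
      have hyfilter : E'.filter (fun e => y ∈ e)
          = W.edges.toFinset.filter (fun e => y ∈ e) := by
        ext e
        simp only [Finset.mem_filter, List.mem_toFinset]
        exact ⟨fun ⟨h1, h2⟩ => ⟨hWsat e h1 h2, h2⟩, fun ⟨h1, h2⟩ => ⟨hWsub e h1, h2⟩⟩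
      have h1 : (E'.filter (fun e => y ∈ e)).card
          = W.edges.countP (fun e => decide (y ∈ e)) := by
        rw [hyfilter]; exact card_filter_toFinset _ hWtrail.edges_nodup _
      have h2 : Odd (W.edges.countP (fun e => decide (y ∈ e))) := by
        rw [countP_parity W hWpos y]
        exact ⟨fun hh => hne' hh.symm, Or.inr rfl⟩
      rw [← h1] at h2
      exact (Nat.not_odd_iff_even.mpr (heven y)) h2
    have hyu' : u = y := hyu.symm
    subst hyu'
    obtain ⟨W', hW'trail, hW'pos, hW'sub, hW'sat⟩ :=
      splice G E' hsub heven (E'.card - W.length) _ W hWtrail hWpos hWsub rfl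
    have hfin : W'.edges.toFinset ⊆ E' := fun e he => hW'sub e (List.mem_toFinset.mp he)
    have hcard'' : (E' \ W'.edges.toFinset).card < n := by
      have h1 : W'.edges.toFinset.card = W'.length := by
        rw [List.toFinset_card_of_nodup hW'trail.edges_nodup, Walk.length_edges]
      rw [Finset.card_sdiff_of_subset hfin]
      have h2 := Finset.card_le_card hfin
      omega
    obtain ⟨D', hGood'⟩ := ih _ hcard'' (E' \ W'.edges.toFinset) rfl
      (fun e he => hsub e ((Finset.mem_sdiff.mp he).1))
    obtain ⟨⟨hnodup, htofin⟩, htrails⟩ := good_cons W' hW'trail hW'pos hW'sub hGood'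
    refine ⟨⟨u, u, W'⟩ :: D', htrails, hnodup, htofin, ?_⟩
    have hE''nou : ∀ e ∈ E' \ W'.edges.toFinset, u ∉ e := by
      intro e he hue
      have h1 := hW'sat e (Finset.mem_sdiff.mp he).1 ⟨u, W'.start_mem_support, hue⟩
      exact (Finset.mem_sdiff.mp he).2 (List.mem_toFinset.mpr h1)
    intro v
    have hsum : (((⟨u, u, W'⟩ : Σ a b : V, G.Walk a b) :: D').map (wt v)).sum
        = wt v (⟨u, u, W'⟩ : Σ a b : V, G.Walk a b) + (D'.map (wt v)).sum := by
      simp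
    by_cases hvu : v = u
    · have hzero : (D'.map (wt v)).sum = 0 :=
        sum_wt_eq_zero_of_no_edge hGood' (by rw [hvu]; exact hE''nou)
      have hhead : wt v (⟨u, u, W'⟩ : Σ a b : V, G.Walk a b) = 2 := by
        simp [wt, hvu]
      rw [hsum, hzero, hhead]
      exact ⟨by omega, fun hoddv => ((Nat.not_odd_iff_even.mpr (heven v)) hoddv).elim⟩
    · have hhead : wt v (⟨u, u, W'⟩ : Σ a b : V, G.Walk a b) = 0 := by
        simp [wt, hvu]
      rw [hsum, hhead]
      have h4 := hGood'.2.2.2 v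
      exact ⟨by omega, fun hoddv => ((Nat.not_odd_iff_even.mpr (heven v)) hoddv).elim⟩

lemma sum_ite_indexOf (v : V) : ∀ (l : List (Sym2 V)), l.Nodup → ∀ c : ℤ,
    (∑ e ∈ l.toFinset, if v ∈ e then c * (-1) ^ (l.idxOf e) else 0) = altSum v c l := by
  intro l
  induction l with
  | nil => intro _ c; simp
  | cons a l ih =>
    intro hl c
    obtain ⟨ha, hl'⟩ := List.nodup_cons.mp hl
    rw [List.toFinset_cons]
    have hna : a ∉ l.toFinset := fun h => ha (List.mem_toFinset.mp h)
    rw [Finset.sum_insert hna]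
    have hcong : ∀ e ∈ l.toFinset,
        (if v ∈ e then c * (-1 : ℤ) ^ ((a :: l).idxOf e) else 0)
          = (if v ∈ e then (-c) * (-1 : ℤ) ^ (l.idxOf e) else 0) := by
      intro e he
      have hea : a ≠ e := fun hh => ha (hh ▸ List.mem_toFinset.mp he)
      rw [List.idxOf_cons_ne _ hea]
      by_cases hv : v ∈ e <;> simp [hv, pow_succ] <;> ring
    rw [Finset.sum_congr rfl hcong, ih hl' (-c), altSum_cons, List.idxOf_cons_self]
    simp

lemma abs_altSum_flatten_le {G : SimpleGraph V} (v : V) :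
    ∀ (D : List (Σ a b : V, G.Walk a b)),
      (∀ T ∈ D, T.2.2.IsTrail ∧ 0 < T.2.2.length) → ∀ c : ℤ, (c = 1 ∨ c = -1) →
      |altSum v c (D.map edgesOf).flatten| ≤ ((D.map (wt v)).sum : ℤ) := by
  intro D
  induction D with
  | nil => intro _ c _; simp
  | cons T D ih =>
    intro hT c hc
    rw [List.map_cons, List.flatten_cons, altSum_append]
    have h1 : |altSum v c (edgesOf T)| ≤ (wt v T : ℤ) := by
      have h0 := abs_altSum_le T.2.2 (hT T (List.mem_cons_self)).2 v c hc
      have hwt : ((wt v T : ℤ))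
          = (if v = T.1 then 1 else 0) + (if v = T.2.1 then 1 else 0) := by
        simp [wt]
      rw [hwt]
      exact h0
    have hc' : (-1 : ℤ) ^ (edgesOf T).length * c = 1 ∨ (-1 : ℤ) ^ (edgesOf T).length * c = -1 := by
      rcases neg_one_pow_cases (edgesOf T).length with hp | hp <;> rw [hp] <;>
        rcases hc with rfl | rfl <;> norm_num
    have h2 := ih (fun S hS => hT S (List.mem_cons_of_mem _ hS)) _ hc'
    calc |altSum v c (edgesOf T) + altSum v ((-1) ^ (edgesOf T).length * c) (D.map edgesOf).flatten|
        ≤ |altSum v c (edgesOf T)|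
          + |altSum v ((-1) ^ (edgesOf T).length * c) (D.map edgesOf).flatten| := abs_add_le _ _
      _ ≤ (wt v T : ℤ) + ((D.map (wt v)).sum : ℤ) := add_le_add h1 h2
      _ = (((T :: D).map (wt v)).sum : ℤ) := by push_cast [List.map_cons, List.sum_cons]; ring

lemma count_indexOf : ∀ (l : List (Sym2 V)), l.Nodup →
    ((l.toFinset.filter (fun e => ((-1 : ℤ)) ^ (l.idxOf e) = 1)).card = (l.length + 1) / 2 ∧
     (l.toFinset.filter (fun e => ((-1 : ℤ)) ^ (l.idxOf e) = -1)).card = l.length / 2) := by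
  intro l
  induction l with
  | nil => intro _; simp
  | cons a l ih =>
    intro hl
    obtain ⟨ha, hl'⟩ := List.nodup_cons.mp hl
    obtain ⟨ih1, ih2⟩ := ih hl'
    have hna : a ∉ l.toFinset := fun h => ha (List.mem_toFinset.mp h)
    have hcong1 : l.toFinset.filter (fun e => ((-1 : ℤ)) ^ ((a :: l).idxOf e) = 1)
        = l.toFinset.filter (fun e => ((-1 : ℤ)) ^ (l.idxOf e) = -1) := by
      apply Finset.filter_congr
      intro e he
      have hea : a ≠ e := fun hh => ha (hh ▸ List.mem_toFinset.mp he)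
      rw [List.idxOf_cons_ne _ hea, pow_succ]
      rcases neg_one_pow_cases (l.idxOf e) with hp | hp <;> rw [hp] <;> norm_num
    have hcong2 : l.toFinset.filter (fun e => ((-1 : ℤ)) ^ ((a :: l).idxOf e) = -1)
        = l.toFinset.filter (fun e => ((-1 : ℤ)) ^ (l.idxOf e) = 1) := by
      apply Finset.filter_congr
      intro e he
      have hea : a ≠ e := fun hh => ha (hh ▸ List.mem_toFinset.mp he)
      rw [List.idxOf_cons_ne _ hea, pow_succ]
      rcases neg_one_pow_cases (l.idxOf e) with hp | hp <;> rw [hp] <;> norm_num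
    rw [List.toFinset_cons]
    constructor
    · rw [Finset.filter_insert]
      rw [if_pos (by rw [List.idxOf_cons_self]; norm_num)]
      rw [Finset.card_insert_of_notMem (fun h => hna (Finset.mem_filter.mp h).1)]
      rw [hcong1, ih2]
      simp only [List.length_cons]
      omega
    · rw [Finset.filter_insert]
      rw [if_neg (by rw [List.idxOf_cons_self]; norm_num)]
      rw [hcong2, ih1]
      simp only [List.length_cons]

end DSaux

/-- Degree-splitting with discrepancy at most 2 and balanced color classes. -/
theorem degree_splitting_exists {V : Type*} [Fintype V] [DecidableEq V]
    (G : SimpleGraph V) [DecidableRel G.Adj] :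
    ∃ q : Sym2 V → ℤ,
      (∀ e ∈ G.edgeFinset, q e = 1 ∨ q e = -1) ∧
      (∀ v : V, |∑ e ∈ G.edgeFinset.filter (fun e => v ∈ e), q e| ≤ 2) ∧
      (((G.edgeFinset.filter (fun e => q e = 1)).card = G.edgeFinset.card / 2 ∧
        (G.edgeFinset.filter (fun e => q e = -1)).card = (G.edgeFinset.card + 1) / 2) ∨
       ((G.edgeFinset.filter (fun e => q e = 1)).card = (G.edgeFinset.card + 1) / 2 ∧
        (G.edgeFinset.filter (fun e => q e = -1)).card = G.edgeFinset.card / 2)) := by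
  classical
  obtain ⟨D, hGood⟩ := DSaux.decomp G G.edgeFinset.card G.edgeFinset rfl
    (fun e he => SimpleGraph.mem_edgeFinset.mp he)
  obtain ⟨htrails, hnodup, htofin, hwt⟩ := hGood
  set ES := (D.map DSaux.edgesOf).flatten with hES
  refine ⟨fun e => (-1 : ℤ) ^ (ES.idxOf e), ?_, ?_, ?_⟩
  · intro e _
    exact DSaux.neg_one_pow_cases (ES.idxOf e)
  · intro v
    have h1 := DSaux.sum_ite_indexOf v ES hnodup 1
    have h2 := DSaux.abs_altSum_flatten_le v D htrails 1 (Or.inl rfl)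
    have h3 := (hwt v).1
    have h4 : ∑ e ∈ G.edgeFinset.filter (fun e => v ∈ e), (-1 : ℤ) ^ (ES.idxOf e)
        = DSaux.altSum v 1 ES := by
      rw [← h1, ← htofin, Finset.sum_filter]
      apply Finset.sum_congr rfl
      intro e _
      by_cases hv : v ∈ e <;> simp [hv]
    rw [h4]
    calc |DSaux.altSum v 1 ES| ≤ ((D.map (DSaux.wt v)).sum : ℤ) := h2
      _ ≤ 2 := by exact_mod_cast h3
  · right
    obtain ⟨hc1, hc2⟩ := DSaux.count_indexOf ES hnodup
    constructor
    · rw [← htofin, hc1, List.toFinset_card_of_nodup hnodup]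
    · rw [← htofin, hc2, List.toFinset_card_of_nodup hnodup]
end

section
/- Let G = (V, E) be a finite simple graph with maximum degree Δ and let i be a natural number with 2^i ≤ Δ. Then there exists a partition of E into 2^i pairwise disjoint sets E_1, …, E_{2^i} such that for every j ∈ {1, …, 2^i}, the maximum degree Δ_j of the spanning subgraph (V, E_j) satisfies Δ/2^i − 2 ≤ Δ_j ≤ Δ/2^i + 2 (as inequalities between real numbers). -/
open Finset

/-- The maximum degree of the spanning subgraph `(V, F)` determined by a set `F` of edges. -/
def maxDegreeOn {V : Type*} [Fintype V] [DecidableEq V] (F : Finset (Sym2 V)) : ℕ :=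
  Finset.univ.sup (fun v : V => (F.filter (fun e => v ∈ e)).card)

section Aux

variable {V : Type*} [Fintype V] [DecidableEq V]

/-- Degree of `u` in the edge set `F`. -/
def degOn (F : Finset (Sym2 V)) (u : V) : ℕ := (F.filter (fun e => u ∈ e)).card

lemma maxDegreeOn_eq (F : Finset (Sym2 V)) : maxDegreeOn F = Finset.univ.sup (degOn F) := rfl

lemma degOn_union (A B : Finset (Sym2 V)) (h : Disjoint A B) (u : V) :
    degOn (A ∪ B) u = degOn A u + degOn B u := by
  unfold degOn
  rw [filter_union, card_union_of_disjoint (disjoint_filter_filter h)]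

lemma degOn_mono {A B : Finset (Sym2 V)} (h : A ⊆ B) (u : V) : degOn A u ≤ degOn B u :=
  card_le_card (filter_subset_filter _ h)

@[simp] lemma degOn_empty (u : V) : degOn (∅ : Finset (Sym2 V)) u = 0 := by
  simp [degOn]

lemma degOn_add_sdiff {T F : Finset (Sym2 V)} (h : T ⊆ F) (u : V) :
    degOn T u + degOn (F \ T) u = degOn F u := by
  rw [← degOn_union T (F \ T) sdiff_disjoint.symm u, union_sdiff_of_subset h]

lemma degOn_insert {e : Sym2 V} {A : Finset (Sym2 V)} (he : e ∉ A) (u : V) :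
    degOn (insert e A) u = (if u ∈ e then 1 else 0) + degOn A u := by
  unfold degOn
  rw [filter_insert]
  split
  · rw [card_insert_of_notMem (fun hc => he (mem_filter.mp hc).1)]; omega
  · omega

/-- The invariant for growing a 2-coloured maximal trail from `z`, with `c` the colour of the
next edge to be attached at `z`.  `S1, S2` are the two colour classes, `z'` the far end of the
trail (which is exhausted in the remainder), and `a, b` the colour imbalances created at `z`
and `z'` respectively. -/
def ExtProp (R : Finset (Sym2 V)) (z : V) (c : Bool) (S1 S2 : Finset (Sym2 V)) (z' : V)
    (a b : ℤ) : Prop :=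
  Disjoint S1 S2 ∧ S1 ∪ S2 ⊆ R ∧ degOn (R \ (S1 ∪ S2)) z' = 0 ∧
  |a| ≤ 1 ∧ |b| ≤ 1 ∧
  (∀ u : V, (degOn S1 u : ℤ) - degOn S2 u
      = (if u = z then a else 0) + (if u = z' then b else 0)) ∧
  (S1 = ∅ ∧ S2 = ∅ → z' = z ∧ a = 0 ∧ b = 0) ∧
  ((S1 ∪ S2).Nonempty → a = (if c then 1 else -1))

lemma extProp_swap {R : Finset (Sym2 V)} {z : V} {c : Bool} {S1 S2 : Finset (Sym2 V)}
    {z' : V} {a b : ℤ} (h : ExtProp R z c S1 S2 z' a b) :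
    ExtProp R z (!c) S2 S1 z' (-a) (-b) := by
  obtain ⟨h1, h2, h3, h4, h5, h6, h7, h8⟩ := h
  refine ⟨h1.symm, by rwa [union_comm], by rwa [union_comm], by simpa using h4,
    by simpa using h5, fun u => ?_, fun hu => ?_, fun hu => ?_⟩
  · have := h6 u
    split_ifs at this ⊢ <;> omega
  · obtain ⟨hz, ha, hb⟩ := h7 ⟨hu.2, hu.1⟩
    exact ⟨hz, by omega, by omega⟩
  · have := h8 (by rwa [union_comm] at hu)
    cases c <;> simp_all

lemma ext_step {R : Finset (Sym2 V)} {e : Sym2 V} (he : e ∈ R) {z x : V} (hzx : z ≠ x)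
    (hex : e = s(z, x)) {S1 S2 : Finset (Sym2 V)} {z' : V} {a b : ℤ}
    (h : ExtProp (R.erase e) x false S1 S2 z' a b) :
    ExtProp R z true (insert e S1) S2 z' 1 (if S1 = ∅ ∧ S2 = ∅ then 1 else b) := by
  obtain ⟨h1, h2, h3, h4, h5, h6, h7, h8⟩ := h
  have heS1 : e ∉ S1 := fun hc => (notMem_erase e R) (h2 (mem_union_left _ hc))
  have heS2 : e ∉ S2 := fun hc => (notMem_erase e R) (h2 (mem_union_right _ hc))
  have hsd : R \ (insert e S1 ∪ S2) = R.erase e \ (S1 ∪ S2) := by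
    ext f
    simp only [mem_sdiff, mem_union, mem_insert, mem_erase, not_or]
    tauto
  have hmem : ∀ u : V, (u ∈ e) ↔ (u = z ∨ u = x) := by
    intro u; rw [hex, Sym2.mem_iff]
  refine ⟨?_, ?_, ?_, by norm_num, ?_, fun u => ?_, ?_, fun _ => rfl⟩
  · exact (disjoint_insert_left).mpr ⟨heS2, h1⟩
  · intro f hf
    rcases mem_union.mp hf with hf | hf
    · rcases mem_insert.mp hf with rfl | hf
      · exact he
      · exact (erase_subset e R) (h2 (mem_union_left _ hf))
    · exact (erase_subset e R) (h2 (mem_union_right _ hf))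
  · rw [hsd]; exact h3
  · split
    · norm_num
    · exact h5
  · have hd := degOn_insert heS1 u
    have h6u := h6 u
    by_cases hS : S1 = ∅ ∧ S2 = ∅
    · obtain ⟨hz', ha, hb⟩ := h7 hS
      subst hz'
      rw [if_pos hS, hd]
      push_cast
      obtain ⟨hS1, hS2⟩ := hS
      simp only [hS1, hS2, degOn_empty, Nat.cast_zero, add_zero, sub_zero]
      by_cases hu1 : u = z <;> by_cases hu2 : u = z'
      · exact absurd (hu1.symm.trans hu2) hzx
      all_goals simp [hmem, hu1, hu2, hzx, Ne.symm hzx]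
    · have ha : a = -1 := by
        have hne : (S1 ∪ S2).Nonempty := by
          rw [nonempty_iff_ne_empty]
          intro hc
          exact hS ⟨(union_eq_empty.mp hc).1, (union_eq_empty.mp hc).2⟩
        simpa using h8 hne
      rw [if_neg hS, hd]
      push_cast
      rw [ha] at h6u
      have hneg : (if u = x then (-1:ℤ) else 0) = -(if u = x then 1 else 0) := by
        split <;> ring
      rw [hneg] at h6u
      have hchi : (if u ∈ e then (1:ℤ) else 0)
          = (if u = z then 1 else 0) + (if u = x then 1 else 0) := by
        by_cases hu1 : u = z <;> by_cases hu2 : u = x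
        · exact absurd (hu1.symm.trans hu2) hzx
        all_goals simp [hmem, hu1, hu2, hzx, Ne.symm hzx]
      rw [hchi]
      linear_combination h6u
  · intro hc
    exact absurd hc.1 (insert_ne_empty _ _)

lemma ext_exists : ∀ (R : Finset (Sym2 V)), (∀ e ∈ R, ¬ e.IsDiag) → ∀ (z : V) (c : Bool),
    ∃ S1 S2 z' a b, ExtProp R z c S1 S2 z' a b := by
  intro R
  induction R using Finset.strongInduction with
  | _ R ih =>
    intro hR z c
    by_cases h0 : degOn R z = 0
    · refine ⟨∅, ∅, z, 0, 0, disjoint_empty_left _, by simp, by simpa using h0,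
        by norm_num, by norm_num, fun u => by simp, fun _ => ⟨rfl, rfl, rfl⟩, fun hc => ?_⟩
      · simp at hc
    · have hne : (R.filter (fun e => z ∈ e)).Nonempty := by
        rw [← card_pos]
        exact Nat.pos_of_ne_zero h0
      obtain ⟨e, hef⟩ := hne
      obtain ⟨heR, hze⟩ := mem_filter.mp hef
      obtain ⟨x, hex⟩ := Sym2.mem_iff_exists.mp hze
      have hzx : z ≠ x := by
        intro hc
        exact hR e heR (by rw [hex, Sym2.mk_isDiag_iff]; exact hc)
      have hR' : ∀ f ∈ R.erase e, ¬ f.IsDiag := fun f hf => hR f ((erase_subset e R) hf)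
      obtain ⟨S1, S2, z', a, b, hprop⟩ := ih (R.erase e) (erase_ssubset heR) hR' x false
      cases c with
      | true => exact ⟨_, _, _, _, _, ext_step heR hzx hex hprop⟩
      | false =>
        have := extProp_swap (ext_step heR hzx hex hprop)
        exact ⟨_, _, _, _, _, this⟩


lemma exists_trail (F : Finset (Sym2 V)) (hF : ∀ e ∈ F, ¬ e.IsDiag) (w : V)
    (hw : degOn F w ≠ 0) :
    ∃ T1 T2 : Finset (Sym2 V), Disjoint T1 T2 ∧ T1 ∪ T2 ⊆ F ∧ (T1 ∪ T2).Nonempty ∧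
      ∀ u, |(degOn T1 u : ℤ) - degOn T2 u| ≤ 2 ∧
        ((degOn T1 u : ℤ) - degOn T2 u ≠ 0 → degOn (F \ (T1 ∪ T2)) u = 0) := by
  obtain ⟨S1, S2, z1, a1, b1, p⟩ := ext_exists F hF w true
  obtain ⟨q1, q2, q3, q4, q5, q6, q7, q8⟩ := p
  have hSne : (S1 ∪ S2).Nonempty := by
    rw [nonempty_iff_ne_empty]
    intro hc
    obtain ⟨hz, -, -⟩ := q7 ⟨(union_eq_empty.mp hc).1, (union_eq_empty.mp hc).2⟩
    rw [hc, hz] at q3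
    simp only [sdiff_empty] at q3
    exact hw q3
  have ha1 : a1 = 1 := by simpa using q8 hSne
  have hF' : ∀ e ∈ F \ (S1 ∪ S2), ¬ e.IsDiag := fun e he => hF e (mem_sdiff.mp he).1
  obtain ⟨S1', S2', z2, a2, b2, p'⟩ := ext_exists (F \ (S1 ∪ S2)) hF' w false
  obtain ⟨r1, r2, r3, r4, r5, r6, r7, r8⟩ := p'
  have hdisjS : Disjoint (S1 ∪ S2) (F \ (S1 ∪ S2)) := sdiff_disjoint.symm
  have hd1 : Disjoint S1 S1' := hdisjS.mono subset_union_left (subset_union_left.trans r2)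
  have hd2 : Disjoint S2 S2' := hdisjS.mono subset_union_right (subset_union_right.trans r2)
  have hd12 : Disjoint S1 S2' := hdisjS.mono subset_union_left (subset_union_right.trans r2)
  have hd21 : Disjoint S2 S1' := hdisjS.mono subset_union_right (subset_union_left.trans r2)
  have hsubF : (S1 ∪ S1') ∪ (S2 ∪ S2') ⊆ F := by
    have h1 : S1 ⊆ F := subset_union_left.trans q2
    have h2 : S2 ⊆ F := subset_union_right.trans q2
    have h3 : S1' ⊆ F := (subset_union_left.trans r2).trans sdiff_subset
    have h4 : S2' ⊆ F := (subset_union_right.trans r2).trans sdiff_subset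
    intro f hf
    rcases mem_union.mp hf with hf | hf
    · rcases mem_union.mp hf with hf | hf
      exacts [h1 hf, h3 hf]
    · rcases mem_union.mp hf with hf | hf
      exacts [h2 hf, h4 hf]
  refine ⟨S1 ∪ S1', S2 ∪ S2', ?_, hsubF, ?_, ?_⟩
  · rw [disjoint_union_left]
    constructor
    · rw [disjoint_union_right]; exact ⟨q1, hd12⟩
    · rw [disjoint_union_right]; exact ⟨hd21.symm, r1⟩
  · obtain ⟨f, hf⟩ := hSne
    rcases mem_union.mp hf with hf | hf
    · exact ⟨f, mem_union_left _ (mem_union_left _ hf)⟩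
    · exact ⟨f, mem_union_right _ (mem_union_left _ hf)⟩
  · intro u
    have hadd1 := degOn_union S1 S1' hd1 u
    have hadd2 := degOn_union S2 S2' hd2 u
    have e1 := q6 u
    have e2 := r6 u
    rw [ha1] at e1
    have hsub : F \ ((S1 ∪ S1') ∪ (S2 ∪ S2')) = (F \ (S1 ∪ S2)) \ (S1' ∪ S2') := by
      ext f
      simp only [mem_sdiff, mem_union, not_or]
      constructor
      · rintro ⟨hf, ⟨h1, h2⟩, h3, h4⟩
        exact ⟨⟨hf, h1, h3⟩, h2, h4⟩
      · rintro ⟨⟨hf, h1, h3⟩, h2, h4⟩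
        exact ⟨hf, ⟨h1, h2⟩, h3, h4⟩
    have hmono : degOn (F \ ((S1 ∪ S1') ∪ (S2 ∪ S2'))) u ≤ degOn (F \ (S1 ∪ S2)) u := by
      rw [hsub]; exact degOn_mono sdiff_subset u
    rw [abs_le] at q4 q5 r4 r5
    by_cases hS' : S1' = ∅ ∧ S2' = ∅
    · obtain ⟨hz2, ha2, hb2⟩ := r7 hS'
      have hz1' : degOn S1' u = 0 := by rw [hS'.1]; simp
      have hz2' : degOn S2' u = 0 := by rw [hS'.2]; simp
      have hr3' : degOn (F \ (S1 ∪ S2)) w = 0 := by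
        rw [hz2] at r3
        simpa [hS'.1, hS'.2] using r3
      constructor
      · rw [hadd1, hadd2, hz1', hz2']
        push_cast
        rw [abs_le]
        split_ifs at e1 <;> omega
      · intro hD
        rw [hadd1, hadd2, hz1', hz2'] at hD
        push_cast at hD
        by_cases hu1 : u = w
        · rw [hu1] at hmono ⊢
          omega
        · by_cases hu2 : u = z1
          · refine Nat.le_zero.mp (hmono.trans (le_of_eq ?_))
            rw [hu2]; exact q3
          · rw [if_neg hu1, if_neg hu2] at e1
            omega
    · have ha2 : a2 = -1 := by
        have hne : (S1' ∪ S2').Nonempty := by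
          rw [nonempty_iff_ne_empty]
          intro hc
          exact hS' ⟨(union_eq_empty.mp hc).1, (union_eq_empty.mp hc).2⟩
        simpa using r8 hne
      rw [ha2] at e2
      constructor
      · rw [hadd1, hadd2]
        push_cast
        rw [abs_le]
        split_ifs at e1 e2 <;> omega
      · intro hD
        rw [hadd1, hadd2] at hD
        push_cast at hD
        by_cases hu1 : u = z1
        · refine Nat.le_zero.mp (hmono.trans (le_of_eq ?_))
          rw [hu1]; exact q3
        · by_cases hu2 : u = z2
          · refine Nat.le_zero.mp (le_of_eq ?_)
            rw [hsub, hu2]; exact r3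
          · exfalso
            rw [if_neg hu1] at e1
            rw [if_neg hu2] at e2
            split_ifs at e1 e2 <;> omega

lemma exists_split : ∀ F : Finset (Sym2 V), (∀ e ∈ F, ¬ e.IsDiag) →
    ∃ F1, F1 ⊆ F ∧ ∀ u, |(degOn F1 u : ℤ) - degOn (F \ F1) u| ≤ 2 := by
  intro F
  induction F using Finset.strongInduction with
  | _ F ih =>
    intro hF
    rcases F.eq_empty_or_nonempty with rfl | ⟨e, he⟩
    · exact ⟨∅, by simp, fun u => by simp⟩
    · have hw : degOn F (Quot.out e).1 ≠ 0 := by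
        apply card_ne_zero_of_mem (a := e)
        exact mem_filter.mpr ⟨he, Sym2.out_fst_mem e⟩
      obtain ⟨T1, T2, hdis, hsubF, hne, hprop⟩ := exists_trail F hF _ hw
      have hss : F \ (T1 ∪ T2) ⊂ F := sdiff_ssubset hsubF hne
      obtain ⟨G1, hG1sub, hGdev⟩ := ih _ hss (fun f hf => hF f (mem_sdiff.mp hf).1)
      have hT1F : T1 ⊆ F := subset_union_left.trans hsubF
      have hT2F : T2 ⊆ F := subset_union_right.trans hsubF
      have hG1F : G1 ⊆ F := hG1sub.trans sdiff_subset
      have hdisG : Disjoint G1 T1 := sdiff_disjoint.mono hG1sub subset_union_left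
      refine ⟨G1 ∪ T1, union_subset hG1F hT1F, fun u => ?_⟩
      have hadd : degOn (G1 ∪ T1) u = degOn G1 u + degOn T1 u := degOn_union _ _ hdisG u
      have hsplit : F \ (G1 ∪ T1) = ((F \ (T1 ∪ T2)) \ G1) ∪ T2 := by
        ext f
        simp only [mem_sdiff, mem_union, not_or]
        constructor
        · rintro ⟨hf, hg, ht1⟩
          by_cases ht2 : f ∈ T2
          · exact Or.inr ht2
          · exact Or.inl ⟨⟨hf, ht1, ht2⟩, hg⟩
        · rintro (⟨⟨hf, ht1, ht2⟩, hg⟩ | ht2)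
          · exact ⟨hf, hg, ht1⟩
          · refine ⟨hT2F ht2, ?_, ?_⟩
            · intro hc
              simpa using (sdiff_disjoint.mono hG1sub subset_union_right).le_bot
                (mem_inter.mpr ⟨hc, ht2⟩)
            · intro hc
              simpa using hdis.le_bot (mem_inter.mpr ⟨hc, ht2⟩)
      have hdisR : Disjoint ((F \ (T1 ∪ T2)) \ G1) T2 :=
        sdiff_disjoint.mono sdiff_subset subset_union_right
      have hadd2 : degOn (F \ (G1 ∪ T1)) u
          = degOn ((F \ (T1 ∪ T2)) \ G1) u + degOn T2 u := by
        rw [hsplit]; exact degOn_union _ _ hdisR u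
      have hGdev' := hGdev u
      obtain ⟨hTb, hTz⟩ := hprop u
      rw [hadd, hadd2, abs_le]
      rw [abs_le] at hGdev' hTb
      push_cast
      by_cases hT : (degOn T1 u : ℤ) = degOn T2 u
      · omega
      · have h0 : degOn (F \ (T1 ∪ T2)) u = 0 := hTz (by omega)
        have hG0 : degOn G1 u = 0 :=
          Nat.le_zero.mp ((degOn_mono hG1sub u).trans_eq h0)
        have hR0 : degOn ((F \ (T1 ∪ T2)) \ G1) u = 0 :=
          Nat.le_zero.mp ((degOn_mono sdiff_subset u).trans_eq h0)
        omega

lemma rec_partition (i : ℕ) : ∀ (F : Finset (Sym2 V)), (∀ e ∈ F, ¬ e.IsDiag) →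
    ∃ E : Fin (2 ^ i) → Finset (Sym2 V),
      (∀ j k, j ≠ k → Disjoint (E j) (E k)) ∧
      Finset.univ.biUnion E = F ∧
      ∀ j u, |(degOn (E j) u : ℝ) - (degOn F u : ℝ) / 2 ^ i| ≤ 2 - 2 / 2 ^ i := by
  induction i with
  | zero =>
    intro F hF
    refine ⟨fun _ => F, fun j k hjk => absurd (Fin.ext (by omega)) hjk, ?_, ?_⟩
    · ext f
      simp
    · intro j u
      simp
  | succ i ih =>
    intro F hF
    obtain ⟨F1, hF1sub, hdev⟩ := exists_split F hF
    obtain ⟨E1, hdis1, hun1, hb1⟩ := ih F1 (fun e he => hF e (hF1sub he))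
    obtain ⟨E2, hdis2, hun2, hb2⟩ := ih (F \ F1) (fun e he => hF e (mem_sdiff.mp he).1)
    have hpow : 2 ^ (i+1) = 2 ^ i + 2 ^ i := by rw [pow_succ]; ring
    have hE1sub : ∀ j, E1 j ⊆ F1 := by
      intro j f hf
      rw [← hun1]
      exact mem_biUnion.mpr ⟨j, mem_univ j, hf⟩
    have hE2sub : ∀ j, E2 j ⊆ F \ F1 := by
      intro j f hf
      rw [← hun2]
      exact mem_biUnion.mpr ⟨j, mem_univ j, hf⟩
    have hdisF : Disjoint F1 (F \ F1) := sdiff_disjoint.symm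
    refine ⟨fun j => if h : (j : ℕ) < 2 ^ i then E1 ⟨j, h⟩ else
      E2 ⟨(j : ℕ) - 2 ^ i, by have := j.isLt; omega⟩, ?_, ?_, ?_⟩
    · intro j k hjk
      dsimp only
      by_cases hj : (j : ℕ) < 2 ^ i <;> by_cases hk : (k : ℕ) < 2 ^ i
      · rw [dif_pos hj, dif_pos hk]
        refine hdis1 _ _ (fun hc => hjk ?_)
        have : (j : ℕ) = (k : ℕ) := congrArg (Fin.val : Fin (2 ^ i) → ℕ) hc
        exact Fin.ext this
      · rw [dif_pos hj, dif_neg hk]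
        exact hdisF.mono (hE1sub _) (hE2sub _)
      · rw [dif_neg hj, dif_pos hk]
        exact (hdisF.mono (hE1sub _) (hE2sub _)).symm
      · rw [dif_neg hj, dif_neg hk]
        refine hdis2 _ _ (fun hc => hjk ?_)
        have : (j : ℕ) - 2 ^ i = (k : ℕ) - 2 ^ i := congrArg (Fin.val : Fin (2 ^ i) → ℕ) hc
        exact Fin.ext (by omega)
    · ext f
      simp only [mem_biUnion, mem_univ, true_and]
      constructor
      · rintro ⟨j, hj⟩
        by_cases h : (j : ℕ) < 2 ^ i
        · rw [dif_pos h] at hj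
          exact hF1sub (hE1sub _ hj)
        · rw [dif_neg h] at hj
          exact sdiff_subset (hE2sub _ hj)
      · intro hf
        by_cases hf1 : f ∈ F1
        · rw [← hun1] at hf1
          obtain ⟨j1, -, hj1⟩ := mem_biUnion.mp hf1
          refine ⟨⟨(j1 : ℕ), by have := j1.isLt; omega⟩, ?_⟩
          dsimp only
          rw [dif_pos j1.isLt]
          rwa [Fin.eta]
        · have hf2 : f ∈ F \ F1 := mem_sdiff.mpr ⟨hf, hf1⟩
          rw [← hun2] at hf2
          obtain ⟨j2, -, hj2⟩ := mem_biUnion.mp hf2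
          refine ⟨⟨(j2 : ℕ) + 2 ^ i, by have := j2.isLt; omega⟩, ?_⟩
          dsimp only
          rw [dif_neg (by omega)]
          convert hj2 using 2
          exact Fin.ext (by simp)
    · intro j u
      dsimp only
      have hdd : (degOn F u : ℝ) = degOn F1 u + degOn (F \ F1) u := by
        exact_mod_cast congrArg (Nat.cast : ℕ → ℝ) (degOn_add_sdiff hF1sub u).symm
      have hdev' : |(degOn F1 u : ℝ) - degOn (F \ F1) u| ≤ 2 := by
        exact_mod_cast hdev u
      have h2pos : (0:ℝ) < 2 ^ i := by positivity
      have h2pos' : (0:ℝ) < 2 ^ (i+1) := by positivity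
      have hne : ((2:ℝ) ^ i) ≠ 0 := ne_of_gt h2pos
      have heq : (2:ℝ) - 2/2^i + 2/2^(i+1) = 2 - 2/2^(i+1) := by
        rw [pow_succ]
        field_simp
        ring
      by_cases hj : (j : ℕ) < 2 ^ i
      · rw [dif_pos hj]
        have hb := hb1 ⟨j, hj⟩ u
        have hkey : (degOn F1 u : ℝ)/2^i - (degOn F u : ℝ)/2^(i+1)
            = ((degOn F1 u : ℝ) - degOn (F \ F1) u)/2^(i+1) := by
          rw [hdd, pow_succ]
          field_simp
          ring
        have tri := abs_sub_le ((degOn (E1 ⟨j, hj⟩) u : ℝ))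
          ((degOn F1 u : ℝ)/2^i) ((degOn F u : ℝ)/2^(i+1))
        have h2nd : |(degOn F1 u:ℝ)/2^i - (degOn F u:ℝ)/2^(i+1)| ≤ 2/2^(i+1) := by
          rw [hkey, abs_div, abs_of_pos h2pos']
          gcongr
        linarith [hb, tri, h2nd]
      · rw [dif_neg hj]
        have hb := hb2 ⟨(j:ℕ) - 2^i, by have := j.isLt; omega⟩ u
        have hkey : (degOn (F \ F1) u : ℝ)/2^i - (degOn F u : ℝ)/2^(i+1)
            = ((degOn (F \ F1) u : ℝ) - degOn F1 u)/2^(i+1) := by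
          rw [hdd, pow_succ]
          field_simp
          ring
        have tri := abs_sub_le ((degOn (E2 ⟨(j:ℕ) - 2^i, by have := j.isLt; omega⟩) u : ℝ))
          ((degOn (F \ F1) u : ℝ)/2^i) ((degOn F u : ℝ)/2^(i+1))
        have h2nd : |(degOn (F \ F1) u:ℝ)/2^i - (degOn F u:ℝ)/2^(i+1)| ≤ 2/2^(i+1) := by
          rw [hkey, abs_div, abs_of_pos h2pos']
          gcongr
          rw [abs_sub_comm]
          exact hdev'
        linarith [hb, tri, h2nd]

end Aux

/-- E can be partitioned into 2^i parts whose maximum degrees are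
Δ/2^i ± 2. -/
theorem partition_maxDegree_bounds {V : Type*} [Fintype V] [DecidableEq V]
    (G : SimpleGraph V) [DecidableRel G.Adj] (i : ℕ) (hi : 2 ^ i ≤ G.maxDegree) :
    ∃ E : Fin (2 ^ i) → Finset (Sym2 V),
      (∀ j k, j ≠ k → Disjoint (E j) (E k)) ∧
      Finset.univ.biUnion E = G.edgeFinset ∧
      ∀ j, (G.maxDegree : ℝ) / 2 ^ i - 2 ≤ (maxDegreeOn (E j) : ℝ) ∧
        (maxDegreeOn (E j) : ℝ) ≤ (G.maxDegree : ℝ) / 2 ^ i + 2 := by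
  have hV : Nonempty V := by
    by_contra h
    rw [not_nonempty_iff] at h
    have h0 : G.maxDegree = 0 := by
      simp only [SimpleGraph.maxDegree, Finset.univ_eq_empty, Finset.image_empty,
        Finset.max_empty]
      rfl
    have h1 : 1 ≤ 2 ^ i := Nat.one_le_two_pow
    omega
  haveI := hV
  obtain ⟨v, hv⟩ := G.exists_maximal_degree_vertex
  have hdiag : ∀ e ∈ G.edgeFinset, ¬ e.IsDiag := fun e he =>
    G.not_isDiag_of_mem_edgeSet (SimpleGraph.mem_edgeFinset.mp he)
  obtain ⟨E, hdisj, hun, hb⟩ := rec_partition i G.edgeFinset hdiag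
  have hdeg : ∀ u, degOn G.edgeFinset u = G.degree u := by
    intro u
    have hinc : G.edgeFinset.filter (fun e => u ∈ e) = G.incidenceFinset u := by
      ext f
      simp [SimpleGraph.mem_incidenceFinset, SimpleGraph.incidenceSet,
        SimpleGraph.mem_edgeFinset]
    simp only [degOn, hinc, SimpleGraph.card_incidenceFinset_eq_degree]
  refine ⟨E, hdisj, hun, fun j => ?_⟩
  have h2pos : (0:ℝ) < 2 ^ i := by positivity
  have h2div : (0:ℝ) < 2 / 2 ^ i := by positivity
  constructor
  · have hmax : degOn (E j) v ≤ maxDegreeOn (E j) := by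
      rw [maxDegreeOn_eq]
      exact Finset.le_sup (Finset.mem_univ v)
    have hb' := hb j v
    rw [abs_le] at hb'
    have hvd : (degOn G.edgeFinset v : ℝ) = (G.maxDegree : ℝ) := by
      rw [hdeg v, hv]
    rw [hvd] at hb'
    have hc : (degOn (E j) v : ℝ) ≤ (maxDegreeOn (E j) : ℝ) := by exact_mod_cast hmax
    linarith [hb'.1, hc, h2div]
  · obtain ⟨u0, -, hu0⟩ :=
      Finset.exists_mem_eq_sup Finset.univ Finset.univ_nonempty (degOn (E j))
    have hmeq : (maxDegreeOn (E j) : ℝ) = (degOn (E j) u0 : ℝ) := by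
      rw [maxDegreeOn_eq]
      exact_mod_cast hu0
    have hb' := hb j u0
    rw [abs_le] at hb'
    have hdle : (degOn G.edgeFinset u0 : ℝ) ≤ (G.maxDegree : ℝ) := by
      rw [hdeg u0]
      exact_mod_cast G.degree_le_maxDegree u0
    have hdiv : (degOn G.edgeFinset u0 : ℝ) / 2 ^ i ≤ (G.maxDegree : ℝ) / 2 ^ i := by gcongr
    rw [hmeq]
    linarith [hb'.2, hdiv, h2div]
end

section
/- Let G = (V, E) be a finite simple graph and let μ be an orientation of its edges. Then E can be partitioned into a collection D of edge-disjoint alternating-directions paths such that every vertex v ∈ V is an incoming endpoint of at most one path of D and an outgoing endpoint of at most one path of D. -/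
/-- An alternating-directions (AD) path in the graph `G` with respect to the
orientation `μ`: a walk `(v_0, e_1, v_1, …, e_k, v_k)` with pairwise distinct edges such
that every two consecutive edges are both oriented toward their common vertex or both
oriented away from it. -/
structure ADPath {V : Type*} (G : SimpleGraph V) (μ : Sym2 V → V × V) where
  /-- the number of edges of the path -/
  len : ℕ
  len_pos : 0 < len
  /-- the vertices `v_0, …, v_len` of the path -/
  vert : Fin (len + 1) → V
  /-- the edges `e_1, …, e_len` of the path (indexed from `0`) -/
  edge : Fin len → Sym2 V
  edge_eq : ∀ i : Fin len, edge i = s(vert i.castSucc, vert i.succ)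
  edge_mem : ∀ i : Fin len, edge i ∈ G.edgeSet
  edge_inj : Function.Injective edge
  alternating : ∀ (i : ℕ) (h1 : i + 1 < len),
    ((μ (edge ⟨i, Nat.lt_of_succ_lt h1⟩)).2 = vert ⟨i + 1, by omega⟩ ∧
     (μ (edge ⟨i + 1, h1⟩)).2 = vert ⟨i + 1, by omega⟩) ∨
    ((μ (edge ⟨i, Nat.lt_of_succ_lt h1⟩)).1 = vert ⟨i + 1, by omega⟩ ∧
     (μ (edge ⟨i + 1, h1⟩)).1 = vert ⟨i + 1, by omega⟩)

namespace ADPath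

variable {V : Type*} {G : SimpleGraph V} {μ : Sym2 V → V × V}

/-- The first edge `e_1` of an AD path. -/
def firstEdge (P : ADPath G μ) : Sym2 V := P.edge ⟨0, P.len_pos⟩

/-- The last edge `e_k` of an AD path. -/
def lastEdge (P : ADPath G μ) : Sym2 V := P.edge ⟨P.len - 1, Nat.sub_lt P.len_pos one_pos⟩

/-- `v` is an outgoing endpoint of `P`: it is `v_0` and `e_1` is oriented from `v_0`,
or it is `v_k` and `e_k` is oriented from `v_k`. -/
def IsOutgoingEndpoint (P : ADPath G μ) (v : V) : Prop :=
  (v = P.vert 0 ∧ (μ P.firstEdge).1 = v) ∨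
  (v = P.vert (Fin.last P.len) ∧ (μ P.lastEdge).1 = v)

/-- `v` is an incoming endpoint of `P`: it is `v_0` and `e_1` is oriented toward `v_0`,
or it is `v_k` and `e_k` is oriented toward `v_k`. -/
def IsIncomingEndpoint (P : ADPath G μ) (v : V) : Prop :=
  (v = P.vert 0 ∧ (μ P.firstEdge).2 = v) ∨
  (v = P.vert (Fin.last P.len) ∧ (μ P.lastEdge).2 = v)

/-- The set of edges of an AD path. -/
def edges (P : ADPath G μ) : Set (Sym2 V) := Set.range P.edge

end ADPath

namespace ADPath

variable {V : Type*} {G G' : SimpleGraph V} {μ : Sym2 V → V × V}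

/-! ### lift -/

def lift (h : G ≤ G') (P : ADPath G μ) : ADPath G' μ :=
  { P with edge_mem := fun i => SimpleGraph.edgeSet_mono h (P.edge_mem i) }

@[simp] lemma lift_edges (h : G ≤ G') (P : ADPath G μ) : (P.lift h).edges = P.edges := rfl
@[simp] lemma lift_isOut (h : G ≤ G') (P : ADPath G μ) (v : V) :
    (P.lift h).IsOutgoingEndpoint v ↔ P.IsOutgoingEndpoint v := Iff.rfl
@[simp] lemma lift_isInc (h : G ≤ G') (P : ADPath G μ) (v : V) :
    (P.lift h).IsIncomingEndpoint v ↔ P.IsIncomingEndpoint v := Iff.rfl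

/-! ### ofEdge -/

def ofEdge (e : Sym2 V) (a b : V) (he : e = s(a, b)) (hmem : e ∈ G.edgeSet) :
    ADPath G μ where
  len := 1
  len_pos := one_pos
  vert := ![a, b]
  edge := fun _ => e
  edge_eq := by intro i; fin_cases i; simpa using he
  edge_mem := fun _ => hmem
  edge_inj := fun i j _ => Subsingleton.elim i j
  alternating := fun i h1 => absurd h1 (by omega)

variable (e : Sym2 V) (a b : V) (he : e = s(a, b)) (hmem : e ∈ G.edgeSet)

@[simp] lemma ofEdge_vert_zero : (ofEdge (G := G) (μ := μ) e a b he hmem).vert 0 = a := rfl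
@[simp] lemma ofEdge_vert_last :
    (ofEdge (G := G) (μ := μ) e a b he hmem).vert
      (Fin.last (ofEdge (G := G) (μ := μ) e a b he hmem).len) = b := rfl
@[simp] lemma ofEdge_firstEdge : (ofEdge (G := G) (μ := μ) e a b he hmem).firstEdge = e := rfl
@[simp] lemma ofEdge_lastEdge : (ofEdge (G := G) (μ := μ) e a b he hmem).lastEdge = e := rfl
@[simp] lemma ofEdge_edges : (ofEdge (G := G) (μ := μ) e a b he hmem).edges = {e} := by
  simp [edges, ofEdge, Set.range_const]

/-! ### reverse -/

def reverse (P : ADPath G μ) : ADPath G μ where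
  len := P.len
  len_pos := P.len_pos
  vert := fun i => P.vert i.rev
  edge := fun i => P.edge i.rev
  edge_eq := by
    intro i
    show P.edge i.rev = s(P.vert (i.castSucc).rev, P.vert (i.succ).rev)
    rw [P.edge_eq i.rev, Sym2.eq_swap, Fin.rev_castSucc, Fin.rev_succ]
  edge_mem := fun i => P.edge_mem i.rev
  edge_inj := fun i j h => Fin.rev_injective (P.edge_inj h)
  alternating := by
    intro i h1
    have hlen := P.len_pos
    have h2 : (P.len - i - 2) + 1 < P.len := by omega
    have e1 : (⟨i, Nat.lt_of_succ_lt h1⟩ : Fin P.len).rev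
        = ⟨(P.len - i - 2) + 1, h2⟩ := by ext; simp [Fin.val_rev]; omega
    have e2 : (⟨i + 1, h1⟩ : Fin P.len).rev
        = ⟨P.len - i - 2, Nat.lt_of_succ_lt h2⟩ := by ext; simp [Fin.val_rev]; omega
    have e3 : ((⟨i + 1, by omega⟩ : Fin (P.len + 1))).rev
        = ⟨(P.len - i - 2) + 1, by omega⟩ := by ext; simp [Fin.val_rev]; omega
    show ((μ (P.edge ((⟨i, Nat.lt_of_succ_lt h1⟩ : Fin P.len)).rev)).2
        = P.vert ((⟨i + 1, by omega⟩ : Fin (P.len + 1))).rev ∧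
        (μ (P.edge ((⟨i + 1, h1⟩ : Fin P.len)).rev)).2
        = P.vert ((⟨i + 1, by omega⟩ : Fin (P.len + 1))).rev) ∨
        ((μ (P.edge ((⟨i, Nat.lt_of_succ_lt h1⟩ : Fin P.len)).rev)).1
        = P.vert ((⟨i + 1, by omega⟩ : Fin (P.len + 1))).rev ∧
        (μ (P.edge ((⟨i + 1, h1⟩ : Fin P.len)).rev)).1
        = P.vert ((⟨i + 1, by omega⟩ : Fin (P.len + 1))).rev)
    rw [e1, e2, e3]
    rcases P.alternating (P.len - i - 2) h2 with ⟨ha, hb⟩ | ⟨ha, hb⟩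
    · exact Or.inl ⟨hb, ha⟩
    · exact Or.inr ⟨hb, ha⟩

@[simp] lemma reverse_vert_zero (P : ADPath G μ) :
    P.reverse.vert 0 = P.vert (Fin.last P.len) := by
  show P.vert (Fin.rev 0) = _; simp
@[simp] lemma reverse_vert_last (P : ADPath G μ) :
    P.reverse.vert (Fin.last P.reverse.len) = P.vert 0 := by
  show P.vert (Fin.rev (Fin.last P.len)) = _; simp
@[simp] lemma reverse_firstEdge (P : ADPath G μ) : P.reverse.firstEdge = P.lastEdge := by
  show P.edge (Fin.rev ⟨0, P.len_pos⟩) = P.edge ⟨P.len - 1, Nat.sub_lt P.len_pos one_pos⟩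
  have h : Fin.rev (⟨0, P.len_pos⟩ : Fin P.len) = ⟨P.len - 1, Nat.sub_lt P.len_pos one_pos⟩ := by
    ext; simp [Fin.val_rev]
  rw [h]
@[simp] lemma reverse_lastEdge (P : ADPath G μ) : P.reverse.lastEdge = P.firstEdge := by
  show P.edge (Fin.rev ⟨P.len - 1, Nat.sub_lt P.len_pos one_pos⟩) = P.edge ⟨0, P.len_pos⟩
  have hp := P.len_pos
  have h : Fin.rev (⟨P.len - 1, Nat.sub_lt P.len_pos one_pos⟩ : Fin P.len) = ⟨0, P.len_pos⟩ := by
    ext; simp only [Fin.val_rev]; omega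
  rw [h]
@[simp] lemma reverse_edges (P : ADPath G μ) : P.reverse.edges = P.edges := by
  have : P.reverse.edge = P.edge ∘ Fin.rev := rfl
  simp [edges, this, Set.range_comp, Fin.rev_surjective.range_eq]
  exact Fin.rev_surjective.range_comp _
@[simp] lemma reverse_isOut (P : ADPath G μ) (v : V) :
    P.reverse.IsOutgoingEndpoint v ↔ P.IsOutgoingEndpoint v := by
  unfold IsOutgoingEndpoint
  rw [reverse_firstEdge, reverse_lastEdge, reverse_vert_zero, reverse_vert_last]
  exact or_comm
@[simp] lemma reverse_isInc (P : ADPath G μ) (v : V) :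
    P.reverse.IsIncomingEndpoint v ↔ P.IsIncomingEndpoint v := by
  unfold IsIncomingEndpoint
  rw [reverse_firstEdge, reverse_lastEdge, reverse_vert_zero, reverse_vert_last]
  exact or_comm

/-! ### concat -/

def cVert (P Q : ADPath G μ) : Fin (P.len + Q.len + 1) → V := fun i =>
  if h : i.val < P.len then P.vert ⟨i.val, by omega⟩
  else Q.vert ⟨i.val - P.len, by have := i.is_lt; omega⟩

def cEdge (P Q : ADPath G μ) : Fin (P.len + Q.len) → Sym2 V := fun i =>
  if h : i.val < P.len then P.edge ⟨i.val, h⟩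
  else Q.edge ⟨i.val - P.len, by have := i.is_lt; omega⟩

lemma cVert_lo (P Q : ADPath G μ) (hv : P.vert (Fin.last P.len) = Q.vert 0)
    (i : ℕ) (hi : i ≤ P.len) (h2 : i < P.len + Q.len + 1) :
    cVert P Q ⟨i, h2⟩ = P.vert ⟨i, by omega⟩ := by
  unfold cVert
  by_cases h : i < P.len
  · rw [dif_pos h]
  · rw [dif_neg h]
    have hi' : i = P.len := by omega
    have e0 : (⟨i - P.len, by omega⟩ : Fin (Q.len + 1)) = 0 := by ext; simp; omega
    have e1 : (⟨i, by omega⟩ : Fin (P.len + 1)) = Fin.last P.len := by ext; simp [hi']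
    rw [e0, e1, hv]

lemma cVert_hi (P Q : ADPath G μ) (i : ℕ) (hi : P.len ≤ i) (h2 : i < P.len + Q.len + 1) :
    cVert P Q ⟨i, h2⟩ = Q.vert ⟨i - P.len, by omega⟩ := by
  show (if h : i < P.len then P.vert ⟨i, by omega⟩
    else Q.vert ⟨i - P.len, by omega⟩) = Q.vert ⟨i - P.len, by omega⟩
  rw [dif_neg (by omega)]

lemma cEdge_lo (P Q : ADPath G μ) (i : ℕ) (hi : i < P.len) (h2 : i < P.len + Q.len) :
    cEdge P Q ⟨i, h2⟩ = P.edge ⟨i, hi⟩ := by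
  unfold cEdge; rw [dif_pos hi]

lemma cEdge_hi (P Q : ADPath G μ) (i : ℕ) (hi : P.len ≤ i) (h2 : i < P.len + Q.len) :
    cEdge P Q ⟨i, h2⟩ = Q.edge ⟨i - P.len, by omega⟩ := by
  show (if h : i < P.len then P.edge ⟨i, h⟩
    else Q.edge ⟨i - P.len, by omega⟩) = Q.edge ⟨i - P.len, by omega⟩
  rw [dif_neg (by omega)]

def concat (P Q : ADPath G μ) (hv : P.vert (Fin.last P.len) = Q.vert 0)
    (hd : Disjoint P.edges Q.edges)
    (hseam : ((μ P.lastEdge).2 = Q.vert 0 ∧ (μ Q.firstEdge).2 = Q.vert 0) ∨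
             ((μ P.lastEdge).1 = Q.vert 0 ∧ (μ Q.firstEdge).1 = Q.vert 0)) :
    ADPath G μ where
  len := P.len + Q.len
  len_pos := by have := P.len_pos; omega
  vert := cVert P Q
  edge := cEdge P Q
  edge_eq := by
    intro ⟨iv, hiv⟩
    have hP := P.len_pos; have hQ := Q.len_pos
    rw [Fin.castSucc_mk, Fin.succ_mk]
    by_cases h : iv < P.len
    · rw [cEdge_lo P Q iv h hiv, cVert_lo P Q hv iv (by omega) _,
        cVert_lo P Q hv (iv + 1) (by omega) _, P.edge_eq ⟨iv, h⟩]
      rfl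
    · rw [cEdge_hi P Q iv (by omega) hiv, cVert_hi P Q iv (by omega) _,
        cVert_hi P Q (iv + 1) (by omega) _, Q.edge_eq ⟨iv - P.len, by omega⟩]
      have e1 : (⟨iv - P.len, by omega⟩ : Fin Q.len).castSucc
          = (⟨iv - P.len, by omega⟩ : Fin (Q.len + 1)) := rfl
      have e2 : (⟨iv - P.len, by omega⟩ : Fin Q.len).succ
          = (⟨iv + 1 - P.len, by omega⟩ : Fin (Q.len + 1)) := by
        rw [Fin.succ_mk]; ext; simp; omega
      rw [e1, e2]
  edge_mem := by
    intro ⟨iv, hiv⟩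
    by_cases h : iv < P.len
    · rw [cEdge_lo P Q iv h hiv]; exact P.edge_mem _
    · rw [cEdge_hi P Q iv (by omega) hiv]; exact Q.edge_mem _
  edge_inj := by
    intro ⟨iv, hi⟩ ⟨jv, hj⟩ hij
    by_cases h1 : iv < P.len <;> by_cases h2 : jv < P.len
    · rw [cEdge_lo P Q iv h1 hi, cEdge_lo P Q jv h2 hj] at hij
      have := congrArg Fin.val (P.edge_inj hij)
      ext; exact this
    · rw [cEdge_lo P Q iv h1 hi, cEdge_hi P Q jv (by omega) hj] at hij
      have m1 : P.edge ⟨iv, h1⟩ ∈ P.edges := Set.mem_range_self _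
      have m2 : P.edge ⟨iv, h1⟩ ∈ Q.edges := by rw [hij]; exact Set.mem_range_self _
      exact absurd m2 (Set.disjoint_left.mp hd m1)
    · rw [cEdge_hi P Q iv (by omega) hi, cEdge_lo P Q jv h2 hj] at hij
      have m1 : P.edge ⟨jv, h2⟩ ∈ P.edges := Set.mem_range_self _
      have m2 : P.edge ⟨jv, h2⟩ ∈ Q.edges := by rw [← hij]; exact Set.mem_range_self _
      exact absurd m2 (Set.disjoint_left.mp hd m1)
    · rw [cEdge_hi P Q iv (by omega) hi, cEdge_hi P Q jv (by omega) hj] at hij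
      have := congrArg Fin.val (Q.edge_inj hij)
      simp only [Fin.val_mk] at this
      ext; simp; omega
  alternating := by
    intro i h1
    have hP := P.len_pos; have hQ := Q.len_pos
    show ((μ (cEdge P Q ⟨i, _⟩)).2 = cVert P Q ⟨i + 1, _⟩ ∧
          (μ (cEdge P Q ⟨i + 1, h1⟩)).2 = cVert P Q ⟨i + 1, _⟩) ∨
         ((μ (cEdge P Q ⟨i, _⟩)).1 = cVert P Q ⟨i + 1, _⟩ ∧
          (μ (cEdge P Q ⟨i + 1, h1⟩)).1 = cVert P Q ⟨i + 1, _⟩)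
    rcases lt_trichotomy (i + 1) P.len with hc | hc | hc
    · rw [cEdge_lo P Q i (by omega) _, cEdge_lo P Q (i + 1) hc _,
        cVert_lo P Q hv (i + 1) (by omega) _]
      exact P.alternating i hc
    · rw [cEdge_lo P Q i (by omega) _, cEdge_hi P Q (i + 1) (by omega) _,
        cVert_lo P Q hv (i + 1) (by omega) _]
      have e1 : (⟨i, by omega⟩ : Fin P.len) = ⟨P.len - 1, Nat.sub_lt P.len_pos one_pos⟩ := by
        ext; simp; omega
      have e2 : (⟨i + 1 - P.len, by omega⟩ : Fin Q.len) = ⟨0, Q.len_pos⟩ := by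
        ext; simp; omega
      have e3 : (⟨i + 1, by omega⟩ : Fin (P.len + 1)) = Fin.last P.len := by
        ext; simp; omega
      rw [e1, e2, e3, hv]
      exact hseam
    · rw [cEdge_hi P Q i (by omega) _, cEdge_hi P Q (i + 1) (by omega) _,
        cVert_hi P Q (i + 1) (by omega) _]
      have h2 : (i - P.len) + 1 < Q.len := by omega
      have e1 : (⟨i - P.len, by omega⟩ : Fin Q.len) = ⟨i - P.len, Nat.lt_of_succ_lt h2⟩ := rfl
      have e2 : (⟨i + 1 - P.len, by omega⟩ : Fin Q.len) = ⟨(i - P.len) + 1, h2⟩ := by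
        ext; simp; omega
      have e3 : (⟨i + 1 - P.len, by omega⟩ : Fin (Q.len + 1))
          = ⟨(i - P.len) + 1, by omega⟩ := by ext; simp; omega
      rw [e1, e2, e3]
      exact Q.alternating (i - P.len) h2

variable (P Q : ADPath G μ) (hv : P.vert (Fin.last P.len) = Q.vert 0)
    (hd : Disjoint P.edges Q.edges)
    (hseam : ((μ P.lastEdge).2 = Q.vert 0 ∧ (μ Q.firstEdge).2 = Q.vert 0) ∨
             ((μ P.lastEdge).1 = Q.vert 0 ∧ (μ Q.firstEdge).1 = Q.vert 0))

@[simp] lemma concat_vert_zero : (concat P Q hv hd hseam).vert 0 = P.vert 0 := by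
  have hP := P.len_pos; have hQ := Q.len_pos
  show cVert P Q 0 = P.vert 0
  have e0 : (0 : Fin (P.len + Q.len + 1)) = ⟨0, by omega⟩ := rfl
  rw [e0, cVert_lo P Q hv 0 (by omega)]
  rfl

@[simp] lemma concat_vert_last :
    (concat P Q hv hd hseam).vert (Fin.last (concat P Q hv hd hseam).len)
      = Q.vert (Fin.last Q.len) := by
  have hP := P.len_pos; have hQ := Q.len_pos
  show cVert P Q (Fin.last (P.len + Q.len)) = Q.vert (Fin.last Q.len)
  have e0 : (Fin.last (P.len + Q.len)) = (⟨P.len + Q.len, by omega⟩ : Fin (P.len + Q.len + 1)) :=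
    rfl
  rw [e0, cVert_hi P Q (P.len + Q.len) (by omega) (by omega)]
  congr 1; ext; simp

@[simp] lemma concat_firstEdge : (concat P Q hv hd hseam).firstEdge = P.firstEdge := by
  have hP := P.len_pos; have hQ := Q.len_pos
  show cEdge P Q ⟨0, _⟩ = P.firstEdge
  refine (cEdge_lo P Q 0 hP _).trans ?_
  rfl

@[simp] lemma concat_lastEdge : (concat P Q hv hd hseam).lastEdge = Q.lastEdge := by
  have hP := P.len_pos; have hQ := Q.len_pos
  show cEdge P Q ⟨P.len + Q.len - 1, _⟩ = Q.lastEdge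
  rw [cEdge_hi P Q (P.len + Q.len - 1) (by omega) (by omega)]
  unfold lastEdge
  congr 1; ext; simp; try omega

@[simp] lemma concat_edges : (concat P Q hv hd hseam).edges = P.edges ∪ Q.edges := by
  have hP := P.len_pos; have hQ := Q.len_pos
  ext x
  change x ∈ Set.range (cEdge P Q) ↔ _
  constructor
  · rintro ⟨⟨iv, hiv⟩, rfl⟩
    by_cases h : iv < P.len
    · rw [cEdge_lo P Q iv h hiv]; exact Or.inl (Set.mem_range_self _)
    · rw [cEdge_hi P Q iv (by omega) hiv]; exact Or.inr (Set.mem_range_self _)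
  · rintro (⟨⟨iv, hiv⟩, rfl⟩ | ⟨⟨iv, hiv⟩, rfl⟩)
    · exact ⟨⟨iv, by omega⟩, cEdge_lo P Q iv hiv (by omega)⟩
    · refine ⟨⟨P.len + iv, by omega⟩, ?_⟩
      rw [cEdge_hi P Q (P.len + iv) (by omega) (by omega)]
      congr 1; ext; simp

lemma concat_isOut (v : V) :
    (concat P Q hv hd hseam).IsOutgoingEndpoint v ↔
      ((v = P.vert 0 ∧ (μ P.firstEdge).1 = v) ∨
       (v = Q.vert (Fin.last Q.len) ∧ (μ Q.lastEdge).1 = v)) := by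
  unfold IsOutgoingEndpoint
  rw [concat_firstEdge, concat_lastEdge, concat_vert_zero, concat_vert_last]

lemma concat_isInc (v : V) :
    (concat P Q hv hd hseam).IsIncomingEndpoint v ↔
      ((v = P.vert 0 ∧ (μ P.firstEdge).2 = v) ∨
       (v = Q.vert (Fin.last Q.len) ∧ (μ Q.lastEdge).2 = v)) := by
  unfold IsIncomingEndpoint
  rw [concat_firstEdge, concat_lastEdge, concat_vert_zero, concat_vert_last]

/-! ### definitional iffs -/

lemma isOut_def (P : ADPath G μ) (v : V) : P.IsOutgoingEndpoint v ↔
    (v = P.vert 0 ∧ (μ P.firstEdge).1 = v) ∨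
    (v = P.vert (Fin.last P.len) ∧ (μ P.lastEdge).1 = v) := Iff.rfl

lemma isInc_def (P : ADPath G μ) (v : V) : P.IsIncomingEndpoint v ↔
    (v = P.vert 0 ∧ (μ P.firstEdge).2 = v) ∨
    (v = P.vert (Fin.last P.len) ∧ (μ P.lastEdge).2 = v) := Iff.rfl

/-! ### normalization -/

lemma exists_norm_out (P : ADPath G μ) (a : V) (h : P.IsOutgoingEndpoint a) :
    ∃ P' : ADPath G μ, P'.edges = P.edges ∧ P'.vert 0 = a ∧ (μ P'.firstEdge).1 = a ∧
      (∀ v, P'.IsOutgoingEndpoint v ↔ P.IsOutgoingEndpoint v) ∧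
      (∀ v, P'.IsIncomingEndpoint v ↔ P.IsIncomingEndpoint v) := by
  rcases h with ⟨h1, h2⟩ | ⟨h1, h2⟩
  · exact ⟨P, rfl, h1.symm, h2, fun v => Iff.rfl, fun v => Iff.rfl⟩
  · exact ⟨P.reverse, reverse_edges P, by rw [reverse_vert_zero]; exact h1.symm,
      by rw [reverse_firstEdge]; exact h2, reverse_isOut P, reverse_isInc P⟩

lemma exists_norm_inc (P : ADPath G μ) (b : V) (h : P.IsIncomingEndpoint b) :
    ∃ P' : ADPath G μ, P'.edges = P.edges ∧ P'.vert 0 = b ∧ (μ P'.firstEdge).2 = b ∧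
      (∀ v, P'.IsOutgoingEndpoint v ↔ P.IsOutgoingEndpoint v) ∧
      (∀ v, P'.IsIncomingEndpoint v ↔ P.IsIncomingEndpoint v) := by
  rcases h with ⟨h1, h2⟩ | ⟨h1, h2⟩
  · exact ⟨P, rfl, h1.symm, h2, fun v => Iff.rfl, fun v => Iff.rfl⟩
  · exact ⟨P.reverse, reverse_edges P, by rw [reverse_vert_zero]; exact h1.symm,
      by rw [reverse_firstEdge]; exact h2, reverse_isOut P, reverse_isInc P⟩

/-! ### path constructions for the induction -/

section constructions

variable {e : Sym2 V} {a b : V}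

/-- Lemma A: the single-edge path. -/
lemma exists_single (he_ab : e = s(a, b)) (hmem : e ∈ G.edgeSet) (hab : a ≠ b)
    (h1 : (μ e).1 = a) (h2 : (μ e).2 = b) :
    ∃ N : ADPath G μ, N.edges = {e} ∧ (∀ v, N.IsIncomingEndpoint v → v = b) ∧
      (∀ v, N.IsOutgoingEndpoint v → v = a) := by
  refine ⟨ofEdge e a b he_ab hmem, ofEdge_edges e a b he_ab hmem, ?_, ?_⟩
  · intro v hv
    rcases (isInc_def _ v).mp hv with ⟨hv1, hv2⟩ | ⟨hv1, hv2⟩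
    · rw [ofEdge_vert_zero] at hv1
      rw [ofEdge_firstEdge, h2] at hv2
      exact hv2.symm
    · rw [ofEdge_vert_last] at hv1
      exact hv1
  · intro v hv
    rcases (isOut_def _ v).mp hv with ⟨hv1, hv2⟩ | ⟨hv1, hv2⟩
    · rw [ofEdge_vert_zero] at hv1
      exact hv1
    · rw [ofEdge_lastEdge, h1] at hv2
      exact hv2.symm

/-- Lemma B: extend a path at an outgoing endpoint `a` by the edge `e = s(a,b)`
oriented from `a` to `b`.  The new front endpoint is `b`, incoming. -/
lemma exists_extend_out (P : ADPath G μ) (he_ab : e = s(a, b)) (hmem : e ∈ G.edgeSet)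
    (hab : a ≠ b) (h1 : (μ e).1 = a) (h2 : (μ e).2 = b)
    (hP : P.IsOutgoingEndpoint a) (hne : e ∉ P.edges) :
    ∃ P' : ADPath G μ, P'.edges = insert e P.edges ∧
      (∀ v, P'.IsOutgoingEndpoint v → P.IsOutgoingEndpoint v) ∧
      (∀ v, P'.IsIncomingEndpoint v → v = b ∨ P.IsIncomingEndpoint v) ∧
      P'.vert 0 = b ∧ P'.firstEdge = e ∧ P'.IsIncomingEndpoint b := by
  obtain ⟨Pn, hPe, hP0, hPf, hPout, hPinc⟩ := exists_norm_out P a hP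
  have he_ba : e = s(b, a) := by rw [he_ab]; exact Sym2.eq_swap
  have hv : (ofEdge (G := G) (μ := μ) e b a he_ba hmem).vert
      (Fin.last (ofEdge (G := G) (μ := μ) e b a he_ba hmem).len) = Pn.vert 0 := by
    rw [ofEdge_vert_last, hP0]
  have hd : Disjoint (ofEdge (G := G) (μ := μ) e b a he_ba hmem).edges Pn.edges := by
    rw [ofEdge_edges, hPe]
    exact Set.disjoint_singleton_left.mpr hne
  have hseam : ((μ (ofEdge (G := G) (μ := μ) e b a he_ba hmem).lastEdge).2 = Pn.vert 0 ∧
        (μ Pn.firstEdge).2 = Pn.vert 0) ∨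
      ((μ (ofEdge (G := G) (μ := μ) e b a he_ba hmem).lastEdge).1 = Pn.vert 0 ∧
        (μ Pn.firstEdge).1 = Pn.vert 0) := by
    right
    rw [ofEdge_lastEdge, hP0]
    exact ⟨h1, hPf⟩
  refine ⟨concat _ Pn hv hd hseam, ?_, ?_, ?_, ?_, ?_, ?_⟩
  · rw [concat_edges, ofEdge_edges, hPe, Set.singleton_union]
  · intro v hv'
    rcases (concat_isOut _ _ _ _ _ v).mp hv' with ⟨hv1, hv2⟩ | ⟨hv1, hv2⟩
    · rw [ofEdge_vert_zero] at hv1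
      rw [ofEdge_firstEdge, h1] at hv2
      exact absurd (hv2.trans hv1) hab
    · exact (hPout v).mp (Or.inr ⟨hv1, hv2⟩)
  · intro v hv'
    rcases (concat_isInc _ _ _ _ _ v).mp hv' with ⟨hv1, hv2⟩ | ⟨hv1, hv2⟩
    · rw [ofEdge_vert_zero] at hv1
      exact Or.inl hv1
    · exact Or.inr ((hPinc v).mp (Or.inr ⟨hv1, hv2⟩))
  · rw [concat_vert_zero, ofEdge_vert_zero]
  · rw [concat_firstEdge, ofEdge_firstEdge]
  · rw [isInc_def]
    left
    rw [concat_vert_zero, ofEdge_vert_zero, concat_firstEdge, ofEdge_firstEdge]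
    exact ⟨rfl, h2⟩

/-- Lemma B': extend a path at an incoming endpoint `b` by `e = s(a,b)` oriented
from `a` to `b`.  The new front endpoint is `a`, outgoing. -/
lemma exists_extend_inc (Q : ADPath G μ) (he_ab : e = s(a, b)) (hmem : e ∈ G.edgeSet)
    (hab : a ≠ b) (h1 : (μ e).1 = a) (h2 : (μ e).2 = b)
    (hQ : Q.IsIncomingEndpoint b) (hne : e ∉ Q.edges) :
    ∃ Q' : ADPath G μ, Q'.edges = insert e Q.edges ∧
      (∀ v, Q'.IsOutgoingEndpoint v → v = a ∨ Q.IsOutgoingEndpoint v) ∧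
      (∀ v, Q'.IsIncomingEndpoint v → Q.IsIncomingEndpoint v) := by
  obtain ⟨Qn, hQe, hQ0, hQf, hQout, hQinc⟩ := exists_norm_inc Q b hQ
  have hv : (ofEdge (G := G) (μ := μ) e a b he_ab hmem).vert
      (Fin.last (ofEdge (G := G) (μ := μ) e a b he_ab hmem).len) = Qn.vert 0 := by
    rw [ofEdge_vert_last, hQ0]
  have hd : Disjoint (ofEdge (G := G) (μ := μ) e a b he_ab hmem).edges Qn.edges := by
    rw [ofEdge_edges, hQe]
    exact Set.disjoint_singleton_left.mpr hne
  have hseam : ((μ (ofEdge (G := G) (μ := μ) e a b he_ab hmem).lastEdge).2 = Qn.vert 0 ∧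
        (μ Qn.firstEdge).2 = Qn.vert 0) ∨
      ((μ (ofEdge (G := G) (μ := μ) e a b he_ab hmem).lastEdge).1 = Qn.vert 0 ∧
        (μ Qn.firstEdge).1 = Qn.vert 0) := by
    left
    rw [ofEdge_lastEdge, hQ0]
    exact ⟨h2, hQf⟩
  refine ⟨concat _ Qn hv hd hseam, ?_, ?_, ?_⟩
  · rw [concat_edges, ofEdge_edges, hQe, Set.singleton_union]
  · intro v hv'
    rcases (concat_isOut _ _ _ _ _ v).mp hv' with ⟨hv1, hv2⟩ | ⟨hv1, hv2⟩
    · rw [ofEdge_vert_zero] at hv1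
      exact Or.inl hv1
    · exact Or.inr ((hQout v).mp (Or.inr ⟨hv1, hv2⟩))
  · intro v hv'
    rcases (concat_isInc _ _ _ _ _ v).mp hv' with ⟨hv1, hv2⟩ | ⟨hv1, hv2⟩
    · rw [ofEdge_vert_zero] at hv1
      rw [ofEdge_firstEdge, h2] at hv2
      exact absurd (hv2.trans hv1) (Ne.symm hab)
    · exact (hQinc v).mp (Or.inr ⟨hv1, hv2⟩)

/-- Lemma C: join a path whose front is an incoming endpoint `b`
with another path having `b` as incoming endpoint. -/
lemma exists_join (P Q : ADPath G μ) (hb0 : P.vert 0 = b) (hbf : (μ P.firstEdge).2 = b)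
    (hQb : Q.IsIncomingEndpoint b) (hd : Disjoint P.edges Q.edges) :
    ∃ M : ADPath G μ, M.edges = P.edges ∪ Q.edges ∧
      (∀ v, M.IsIncomingEndpoint v → P.IsIncomingEndpoint v ∨ Q.IsIncomingEndpoint v) ∧
      (∀ v, M.IsOutgoingEndpoint v → P.IsOutgoingEndpoint v ∨ Q.IsOutgoingEndpoint v) := by
  obtain ⟨Qn, hQe, hQ0, hQf, hQout, hQinc⟩ := exists_norm_inc Q b hQb
  have hv : P.reverse.vert (Fin.last P.reverse.len) = Qn.vert 0 := by
    rw [reverse_vert_last, hb0, hQ0]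
  have hd' : Disjoint P.reverse.edges Qn.edges := by
    rw [reverse_edges, hQe]; exact hd
  have hseam : ((μ P.reverse.lastEdge).2 = Qn.vert 0 ∧ (μ Qn.firstEdge).2 = Qn.vert 0) ∨
      ((μ P.reverse.lastEdge).1 = Qn.vert 0 ∧ (μ Qn.firstEdge).1 = Qn.vert 0) := by
    left
    rw [reverse_lastEdge, hQ0]
    exact ⟨hbf, hQf⟩
  refine ⟨concat _ Qn hv hd' hseam, ?_, ?_, ?_⟩
  · rw [concat_edges, reverse_edges, hQe]
  · intro v hv'
    rcases (concat_isInc _ _ _ _ _ v).mp hv' with ⟨hv1, hv2⟩ | ⟨hv1, hv2⟩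
    · rw [reverse_vert_zero] at hv1
      rw [reverse_firstEdge] at hv2
      exact Or.inl (Or.inr ⟨hv1, hv2⟩)
    · exact Or.inr ((hQinc v).mp (Or.inr ⟨hv1, hv2⟩))
  · intro v hv'
    rcases (concat_isOut _ _ _ _ _ v).mp hv' with ⟨hv1, hv2⟩ | ⟨hv1, hv2⟩
    · rw [reverse_vert_zero] at hv1
      rw [reverse_firstEdge] at hv2
      exact Or.inl (Or.inr ⟨hv1, hv2⟩)
    · exact Or.inr ((hQout v).mp (Or.inr ⟨hv1, hv2⟩))

end constructions

/-! ### surgery on decompositions -/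

section surgery

variable {e : Sym2 V} {E : Set (Sym2 V)}

/-- Replace one path of a decomposition by a path carrying one extra edge. -/
lemma replace_case {m : ℕ} (D : Fin m → ADPath G μ)
    (hdisj : ∀ j k, j ≠ k → Disjoint (D j).edges (D k).edges)
    (hcover : (⋃ j, (D j).edges) = E)
    (hinc : ∀ v : V, ∀ j k, (D j).IsIncomingEndpoint v → (D k).IsIncomingEndpoint v → j = k)
    (hout : ∀ v : V, ∀ j k, (D j).IsOutgoingEndpoint v → (D k).IsOutgoingEndpoint v → j = k)
    (he : e ∉ E) (j : Fin m) (N : ADPath G μ)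
    (hNE : N.edges = insert e (D j).edges)
    (hNI : ∀ v (k : Fin m), N.IsIncomingEndpoint v → (D k).IsIncomingEndpoint v → k = j)
    (hNO : ∀ v (k : Fin m), N.IsOutgoingEndpoint v → (D k).IsOutgoingEndpoint v → k = j) :
    ∃ (n : ℕ) (D' : Fin n → ADPath G μ),
      (∀ j k, j ≠ k → Disjoint (D' j).edges (D' k).edges) ∧
      (⋃ j, (D' j).edges) = insert e E ∧
      (∀ v : V, ∀ j k, (D' j).IsIncomingEndpoint v → (D' k).IsIncomingEndpoint v → j = k) ∧
      (∀ v : V, ∀ j k, (D' j).IsOutgoingEndpoint v → (D' k).IsOutgoingEndpoint v → j = k) := by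
  classical
  have hsub : ∀ k, (D k).edges ⊆ E := fun k =>
    hcover ▸ Set.subset_iUnion (fun i => (D i).edges) k
  refine ⟨m, Function.update D j N, ?_, ?_, ?_, ?_⟩
  · intro k1 k2 hne
    by_cases c1 : k1 = j <;> by_cases c2 : k2 = j
    · exact absurd (c1.trans c2.symm) hne
    · rw [c1, Function.update_self, Function.update_of_ne c2, hNE, Set.disjoint_left]
      rintro x (rfl | hx)
      · exact fun hx' => he (hsub k2 hx')
      · exact fun hx' => Set.disjoint_left.mp (hdisj j k2 (Ne.symm c2)) hx hx'
    · rw [c2, Function.update_self, Function.update_of_ne c1, hNE, Set.disjoint_right]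
      rintro x (rfl | hx)
      · exact fun hx' => he (hsub k1 hx')
      · exact fun hx' => Set.disjoint_left.mp (hdisj k1 j c1) hx' hx
    · rw [Function.update_of_ne c1, Function.update_of_ne c2]
      exact hdisj k1 k2 hne
  · ext x
    simp only [Set.mem_iUnion]
    constructor
    · rintro ⟨k, hk⟩
      by_cases c1 : k = j
      · rw [c1, Function.update_self, hNE] at hk
        rcases hk with rfl | hk
        · exact Set.mem_insert _ _
        · exact Set.mem_insert_of_mem _ (hsub j hk)
      · rw [Function.update_of_ne c1] at hk
        exact Set.mem_insert_of_mem _ (hsub k hk)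
    · intro hx
      rcases hx with rfl | hx
      · exact ⟨j, by rw [Function.update_self, hNE]; exact Set.mem_insert _ _⟩
      · rw [← hcover] at hx
        obtain ⟨k, hk⟩ := Set.mem_iUnion.mp hx
        by_cases c1 : k = j
        · refine ⟨j, ?_⟩
          rw [Function.update_self, hNE]
          exact Set.mem_insert_of_mem _ (c1 ▸ hk)
        · exact ⟨k, by rw [Function.update_of_ne c1]; exact hk⟩
  · intro v k1 k2 h1 h2
    by_cases c1 : k1 = j <;> by_cases c2 : k2 = j
    · exact c1.trans c2.symm
    · rw [c1, Function.update_self] at h1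
      rw [Function.update_of_ne c2] at h2
      exact c1.trans (hNI v k2 h1 h2).symm
    · rw [c2, Function.update_self] at h2
      rw [Function.update_of_ne c1] at h1
      exact (hNI v k1 h2 h1).trans c2.symm
    · rw [Function.update_of_ne c1] at h1
      rw [Function.update_of_ne c2] at h2
      exact hinc v k1 k2 h1 h2
  · intro v k1 k2 h1 h2
    by_cases c1 : k1 = j <;> by_cases c2 : k2 = j
    · exact c1.trans c2.symm
    · rw [c1, Function.update_self] at h1
      rw [Function.update_of_ne c2] at h2
      exact c1.trans (hNO v k2 h1 h2).symm
    · rw [c2, Function.update_self] at h2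
      rw [Function.update_of_ne c1] at h1
      exact (hNO v k1 h2 h1).trans c2.symm
    · rw [Function.update_of_ne c1] at h1
      rw [Function.update_of_ne c2] at h2
      exact hout v k1 k2 h1 h2

/-- Add a brand new path to a decomposition. -/
lemma add_case {m : ℕ} (D : Fin m → ADPath G μ)
    (hdisj : ∀ j k, j ≠ k → Disjoint (D j).edges (D k).edges)
    (hcover : (⋃ j, (D j).edges) = E)
    (hinc : ∀ v : V, ∀ j k, (D j).IsIncomingEndpoint v → (D k).IsIncomingEndpoint v → j = k)
    (hout : ∀ v : V, ∀ j k, (D j).IsOutgoingEndpoint v → (D k).IsOutgoingEndpoint v → j = k)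
    (he : e ∉ E) (N : ADPath G μ)
    (hNE : N.edges = {e})
    (hNI : ∀ v (k : Fin m), N.IsIncomingEndpoint v → ¬ (D k).IsIncomingEndpoint v)
    (hNO : ∀ v (k : Fin m), N.IsOutgoingEndpoint v → ¬ (D k).IsOutgoingEndpoint v) :
    ∃ (n : ℕ) (D' : Fin n → ADPath G μ),
      (∀ j k, j ≠ k → Disjoint (D' j).edges (D' k).edges) ∧
      (⋃ j, (D' j).edges) = insert e E ∧
      (∀ v : V, ∀ j k, (D' j).IsIncomingEndpoint v → (D' k).IsIncomingEndpoint v → j = k) ∧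
      (∀ v : V, ∀ j k, (D' j).IsOutgoingEndpoint v → (D' k).IsOutgoingEndpoint v → j = k) := by
  classical
  have hsub : ∀ k, (D k).edges ⊆ E := fun k =>
    hcover ▸ Set.subset_iUnion (fun i => (D i).edges) k
  refine ⟨m + 1, fun i => if h : i.val < m then D ⟨i.val, h⟩ else N, ?_, ?_, ?_, ?_⟩
  · intro k1 k2 hne
    beta_reduce
    by_cases h1 : k1.val < m <;> by_cases h2 : k2.val < m
    · rw [dif_pos h1, dif_pos h2]
      refine hdisj _ _ ?_
      intro hc
      have hval := congrArg Fin.val hc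
      exact hne (Fin.ext hval)
    · rw [dif_pos h1, dif_neg h2, hNE, Set.disjoint_singleton_right]
      exact fun hx => he (hsub _ hx)
    · rw [dif_neg h1, dif_pos h2, hNE, Set.disjoint_singleton_left]
      exact fun hx => he (hsub _ hx)
    · exact absurd (by ext; have := k1.is_lt; have := k2.is_lt; omega) hne
  · ext x
    simp only [Set.mem_iUnion]
    constructor
    · rintro ⟨k, hk⟩
      beta_reduce at hk
      by_cases h1 : k.val < m
      · rw [dif_pos h1] at hk
        exact Set.mem_insert_of_mem _ (hsub _ hk)
      · rw [dif_neg h1, hNE] at hk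
        rw [hk]
        exact Set.mem_insert _ _
    · intro hx
      rcases hx with rfl | hx
      · refine ⟨⟨m, by omega⟩, ?_⟩
        beta_reduce
        rw [dif_neg (by simp), hNE]
        rfl
      · rw [← hcover] at hx
        obtain ⟨k, hk⟩ := Set.mem_iUnion.mp hx
        refine ⟨⟨k.val, by omega⟩, ?_⟩
        beta_reduce
        rw [dif_pos k.is_lt]
        exact hk
  · intro v k1 k2 h1 h2
    beta_reduce at h1 h2
    by_cases hn1 : k1.val < m <;> by_cases hn2 : k2.val < m
    · rw [dif_pos hn1] at h1
      rw [dif_pos hn2] at h2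
      have hval := congrArg Fin.val (hinc v _ _ h1 h2)
      exact Fin.ext hval
    · rw [dif_pos hn1] at h1
      rw [dif_neg hn2] at h2
      exact absurd h1 (hNI v _ h2)
    · rw [dif_neg hn1] at h1
      rw [dif_pos hn2] at h2
      exact absurd h2 (hNI v _ h1)
    · ext; have := k1.is_lt; have := k2.is_lt; omega
  · intro v k1 k2 h1 h2
    beta_reduce at h1 h2
    by_cases hn1 : k1.val < m <;> by_cases hn2 : k2.val < m
    · rw [dif_pos hn1] at h1
      rw [dif_pos hn2] at h2
      have hval := congrArg Fin.val (hout v _ _ h1 h2)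
      exact Fin.ext hval
    · rw [dif_pos hn1] at h1
      rw [dif_neg hn2] at h2
      exact absurd h1 (hNO v _ h2)
    · rw [dif_neg hn1] at h1
      rw [dif_pos hn2] at h2
      exact absurd h2 (hNO v _ h1)
    · ext; have := k1.is_lt; have := k2.is_lt; omega

/-- Merge two paths of a decomposition into a single new path. -/
lemma merge_case {m : ℕ} (D : Fin (m + 1) → ADPath G μ)
    (hdisj : ∀ j k, j ≠ k → Disjoint (D j).edges (D k).edges)
    (hcover : (⋃ j, (D j).edges) = E)
    (hinc : ∀ v : V, ∀ j k, (D j).IsIncomingEndpoint v → (D k).IsIncomingEndpoint v → j = k)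
    (hout : ∀ v : V, ∀ j k, (D j).IsOutgoingEndpoint v → (D k).IsOutgoingEndpoint v → j = k)
    (he : e ∉ E) (j k : Fin (m + 1)) (hjk : j ≠ k) (N : ADPath G μ)
    (hNE : N.edges = insert e ((D j).edges ∪ (D k).edges))
    (hNI : ∀ v, N.IsIncomingEndpoint v →
      (D j).IsIncomingEndpoint v ∨ (D k).IsIncomingEndpoint v)
    (hNO : ∀ v, N.IsOutgoingEndpoint v →
      (D j).IsOutgoingEndpoint v ∨ (D k).IsOutgoingEndpoint v) :
    ∃ (n : ℕ) (D' : Fin n → ADPath G μ),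
      (∀ j k, j ≠ k → Disjoint (D' j).edges (D' k).edges) ∧
      (⋃ j, (D' j).edges) = insert e E ∧
      (∀ v : V, ∀ j k, (D' j).IsIncomingEndpoint v → (D' k).IsIncomingEndpoint v → j = k) ∧
      (∀ v : V, ∀ j k, (D' j).IsOutgoingEndpoint v → (D' k).IsOutgoingEndpoint v → j = k) := by
  classical
  have hsub : ∀ k, (D k).edges ⊆ E := fun k =>
    hcover ▸ Set.subset_iUnion (fun i => (D i).edges) k
  have hinj : Function.Injective j.succAbove := Fin.succAbove_right_injective
  have hne_j : ∀ i : Fin m, j.succAbove i ≠ j := fun i => Fin.succAbove_ne j i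
  obtain ⟨ik, hik⟩ := Fin.exists_succAbove_eq (Ne.symm hjk)
  refine ⟨m, fun i => if h : j.succAbove i = k then N else D (j.succAbove i), ?_, ?_, ?_, ?_⟩
  · intro k1 k2 hne
    beta_reduce
    by_cases h1 : j.succAbove k1 = k <;> by_cases h2 : j.succAbove k2 = k
    · exact absurd (hinj (h1.trans h2.symm)) hne
    · rw [dif_pos h1, dif_neg h2, hNE, Set.disjoint_left]
      rintro x (rfl | (hx | hx))
      · exact fun hx' => he (hsub _ hx')
      · exact fun hx' => Set.disjoint_left.mp
          (hdisj j (j.succAbove k2) (Ne.symm (hne_j k2))) hx hx'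
      · exact fun hx' => Set.disjoint_left.mp
          (hdisj k (j.succAbove k2) (fun hc => h2 hc.symm)) hx hx'
    · rw [dif_neg h1, dif_pos h2, hNE, Set.disjoint_right]
      rintro x (rfl | (hx | hx))
      · exact fun hx' => he (hsub _ hx')
      · exact fun hx' => Set.disjoint_left.mp
          (hdisj j (j.succAbove k1) (Ne.symm (hne_j k1))) hx hx'
      · exact fun hx' => Set.disjoint_left.mp
          (hdisj k (j.succAbove k1) (fun hc => h1 hc.symm)) hx hx'
    · rw [dif_neg h1, dif_neg h2]
      exact hdisj _ _ (fun hc => hne (hinj hc))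
  · ext x
    simp only [Set.mem_iUnion]
    constructor
    · rintro ⟨i, hi⟩
      beta_reduce at hi
      by_cases h1 : j.succAbove i = k
      · rw [dif_pos h1, hNE] at hi
        rcases hi with rfl | (hx | hx)
        · exact Set.mem_insert _ _
        · exact Set.mem_insert_of_mem _ (hsub _ hx)
        · exact Set.mem_insert_of_mem _ (hsub _ hx)
      · rw [dif_neg h1] at hi
        exact Set.mem_insert_of_mem _ (hsub _ hi)
    · intro hx
      rcases hx with rfl | hx
      · refine ⟨ik, ?_⟩
        beta_reduce
        rw [dif_pos hik, hNE]
        exact Set.mem_insert _ _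
      · rw [← hcover] at hx
        obtain ⟨o, ho⟩ := Set.mem_iUnion.mp hx
        by_cases hoj : o = j
        · refine ⟨ik, ?_⟩
          beta_reduce
          rw [dif_pos hik, hNE]
          exact Set.mem_insert_of_mem _ (Or.inl (hoj ▸ ho))
        · by_cases hok : o = k
          · refine ⟨ik, ?_⟩
            beta_reduce
            rw [dif_pos hik, hNE]
            exact Set.mem_insert_of_mem _ (Or.inr (hok ▸ ho))
          · obtain ⟨i, hi⟩ := Fin.exists_succAbove_eq hoj
            refine ⟨i, ?_⟩
            beta_reduce
            rw [dif_neg (by rw [hi]; exact hok), hi]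
            exact ho
  · intro v k1 k2 h1 h2
    beta_reduce at h1 h2
    by_cases hn1 : j.succAbove k1 = k <;> by_cases hn2 : j.succAbove k2 = k
    · exact hinj (hn1.trans hn2.symm)
    · rw [dif_pos hn1] at h1
      rw [dif_neg hn2] at h2
      rcases hNI v h1 with hD | hD
      · exact absurd (hinc v _ _ h2 hD) (hne_j k2)
      · exact absurd (hinc v _ _ h2 hD) hn2
    · rw [dif_neg hn1] at h1
      rw [dif_pos hn2] at h2
      rcases hNI v h2 with hD | hD
      · exact absurd (hinc v _ _ h1 hD) (hne_j k1)
      · exact absurd (hinc v _ _ h1 hD) hn1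
    · rw [dif_neg hn1] at h1
      rw [dif_neg hn2] at h2
      exact hinj (hinc v _ _ h1 h2)
  · intro v k1 k2 h1 h2
    beta_reduce at h1 h2
    by_cases hn1 : j.succAbove k1 = k <;> by_cases hn2 : j.succAbove k2 = k
    · exact hinj (hn1.trans hn2.symm)
    · rw [dif_pos hn1] at h1
      rw [dif_neg hn2] at h2
      rcases hNO v h1 with hD | hD
      · exact absurd (hout v _ _ h2 hD) (hne_j k2)
      · exact absurd (hout v _ _ h2 hD) hn2
    · rw [dif_neg hn1] at h1
      rw [dif_pos hn2] at h2
      rcases hNO v h2 with hD | hD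
      · exact absurd (hout v _ _ h1 hD) (hne_j k1)
      · exact absurd (hout v _ _ h1 hD) hn1
    · rw [dif_neg hn1] at h1
      rw [dif_neg hn2] at h2
      exact hinj (hout v _ _ h1 h2)

end surgery



end ADPath

/-- the edge set of `G` can be partitioned into edge-disjoint
alternating-directions paths so that every vertex is an incoming endpoint of at most one
path and an outgoing endpoint of at most one path. -/
theorem ad_paths_decomposition {V : Type*} [Fintype V] [DecidableEq V]
    (G : SimpleGraph V) (μ : Sym2 V → V × V)
    (hμ : ∀ e ∈ G.edgeSet, s((μ e).1, (μ e).2) = e) :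
    ∃ (n : ℕ) (D : Fin n → ADPath G μ),
      (∀ j k, j ≠ k → Disjoint (D j).edges (D k).edges) ∧
      (⋃ j, (D j).edges) = G.edgeSet ∧
      (∀ v : V, ∀ j k, (D j).IsIncomingEndpoint v → (D k).IsIncomingEndpoint v → j = k) ∧
      (∀ v : V, ∀ j k, (D j).IsOutgoingEndpoint v → (D k).IsOutgoingEndpoint v → j = k) := by
  classical
  suffices H : ∀ (N : ℕ) (G : SimpleGraph V),
      (∀ e ∈ G.edgeSet, s((μ e).1, (μ e).2) = e) → G.edgeSet.ncard ≤ N →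
      ∃ (n : ℕ) (D : Fin n → ADPath G μ),
        (∀ j k, j ≠ k → Disjoint (D j).edges (D k).edges) ∧
        (⋃ j, (D j).edges) = G.edgeSet ∧
        (∀ v : V, ∀ j k, (D j).IsIncomingEndpoint v → (D k).IsIncomingEndpoint v → j = k) ∧
        (∀ v : V, ∀ j k, (D j).IsOutgoingEndpoint v → (D k).IsOutgoingEndpoint v → j = k) by
    exact H G.edgeSet.ncard G hμ le_rfl
  intro N
  induction N with
  | zero =>
    intro G hμG hcard
    have hempty : G.edgeSet = ∅ :=
      (Set.ncard_eq_zero (Set.toFinite _)).mp (Nat.le_zero.mp hcard)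
    exact ⟨0, Fin.elim0, fun j => j.elim0,
      by rw [Set.iUnion_of_empty]; exact hempty.symm,
      fun v j => j.elim0, fun v j => j.elim0⟩
  | succ N IH =>
    intro G hμG hcard
    rcases Set.eq_empty_or_nonempty G.edgeSet with hempty | ⟨e, he⟩
    · exact ⟨0, Fin.elim0, fun j => j.elim0,
        by rw [Set.iUnion_of_empty]; exact hempty.symm,
        fun v j => j.elim0, fun v j => j.elim0⟩
    · have hle : G.deleteEdges {e} ≤ G := SimpleGraph.deleteEdges_le _
      have hE' : (G.deleteEdges {e}).edgeSet = G.edgeSet \ {e} := G.edgeSet_deleteEdges _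
      have hμ' : ∀ f ∈ (G.deleteEdges {e}).edgeSet, s((μ f).1, (μ f).2) = f := by
        intro f hf
        rw [hE'] at hf
        exact hμG f hf.1
      have hcard' : (G.deleteEdges {e}).edgeSet.ncard ≤ N := by
        rw [hE']
        have := Set.ncard_diff_singleton_lt_of_mem he (Set.toFinite _)
        omega
      obtain ⟨m, D0, hdisj0, hcover0, hinc0, hout0⟩ := IH _ hμ' hcard'
      have hD : ∀ i, ((D0 i).lift hle : ADPath G μ) = (D0 i).lift hle := fun i => rfl
      -- the lifted decomposition
      refine
        (fun (D : Fin m → ADPath G μ)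
            (hdisj : ∀ j k, j ≠ k → Disjoint (D j).edges (D k).edges)
            (hcover : (⋃ j, (D j).edges) = G.edgeSet \ {e})
            (hinc : ∀ v : V, ∀ j k,
              (D j).IsIncomingEndpoint v → (D k).IsIncomingEndpoint v → j = k)
            (hout : ∀ v : V, ∀ j k,
              (D j).IsOutgoingEndpoint v → (D k).IsOutgoingEndpoint v → j = k) => ?_)
          (fun i => (D0 i).lift hle) hdisj0 (by rw [← hE']; exact hcover0) hinc0 hout0
      have he_ab : e = s((μ e).1, (μ e).2) := (hμG e he).symm
      have hab : (μ e).1 ≠ (μ e).2 := by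
        intro hc
        exact (G.not_isDiag_of_mem_edgeSet he) (by rw [he_ab]; exact hc)
      have heE : e ∉ G.edgeSet \ {e} := fun hc => hc.2 rfl
      have hne : ∀ k, e ∉ (D k).edges := by
        intro k hk
        have hsub : (D k).edges ⊆ G.edgeSet \ {e} :=
          hcover ▸ Set.subset_iUnion (fun i => (D i).edges) k
        exact (hsub hk).2 rfl
      have hgoal : insert e (G.edgeSet \ {e}) = G.edgeSet := by
        rw [Set.insert_diff_singleton, Set.insert_eq_self.mpr he]
      suffices h : ∃ (n : ℕ) (D' : Fin n → ADPath G μ),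
          (∀ j k, j ≠ k → Disjoint (D' j).edges (D' k).edges) ∧
          (⋃ j, (D' j).edges) = insert e (G.edgeSet \ {e}) ∧
          (∀ v : V, ∀ j k,
            (D' j).IsIncomingEndpoint v → (D' k).IsIncomingEndpoint v → j = k) ∧
          (∀ v : V, ∀ j k,
            (D' j).IsOutgoingEndpoint v → (D' k).IsOutgoingEndpoint v → j = k) by
        obtain ⟨n, D', c1, c2, c3, c4⟩ := h
        exact ⟨n, D', c1, hgoal ▸ c2, c3, c4⟩
      by_cases hA : ∃ j, (D j).IsOutgoingEndpoint (μ e).1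
      · obtain ⟨j, hja⟩ := hA
        obtain ⟨P', hP'E, hP'O, hP'I, hP'0, hP'f, hP'b⟩ :=
          ADPath.exists_extend_out (D j) he_ab he hab rfl rfl hja (hne j)
        by_cases hB : ∃ k, (D k).IsIncomingEndpoint (μ e).2
        · obtain ⟨k, hkb⟩ := hB
          by_cases hkj : k = j
          · refine ADPath.replace_case D hdisj hcover hinc hout heE j P' hP'E ?_ ?_
            · intro v k' h1 h2
              rcases hP'I v h1 with rfl | h1'
              · exact hinc _ k' j h2 (hkj ▸ hkb)
              · exact hinc v k' j h2 h1'
            · intro v k' h1 h2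
              exact hout v k' j h2 (hP'O v h1)
          · cases m with
            | zero => exact j.elim0
            | succ m' =>
              have hdPQ : Disjoint P'.edges (D k).edges := by
                rw [hP'E, Set.disjoint_left]
                rintro x (rfl | hx)
                · exact hne k
                · exact Set.disjoint_left.mp (hdisj j k (fun hc => hkj hc.symm)) hx
              obtain ⟨M, hME, hMI, hMO⟩ :=
                ADPath.exists_join P' (D k) hP'0 (by rw [hP'f]) hkb hdPQ
              refine ADPath.merge_case D hdisj hcover hinc hout heE j k
                (fun hc => hkj hc.symm) M ?_ ?_ ?_
              · rw [hME, hP'E, Set.insert_union]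
              · intro v h
                rcases hMI v h with h' | h'
                · rcases hP'I v h' with rfl | h''
                  · exact Or.inr hkb
                  · exact Or.inl h''
                · exact Or.inr h'
              · intro v h
                rcases hMO v h with h' | h'
                · exact Or.inl (hP'O v h')
                · exact Or.inr h'
        · refine ADPath.replace_case D hdisj hcover hinc hout heE j P' hP'E ?_ ?_
          · intro v k' h1 h2
            rcases hP'I v h1 with rfl | h1'
            · exact absurd ⟨k', h2⟩ hB
            · exact hinc v k' j h2 h1'
          · intro v k' h1 h2
            exact hout v k' j h2 (hP'O v h1)
      · by_cases hB : ∃ k, (D k).IsIncomingEndpoint (μ e).2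
        · obtain ⟨k, hkb⟩ := hB
          obtain ⟨Q', hQ'E, hQ'O, hQ'I⟩ :=
            ADPath.exists_extend_inc (D k) he_ab he hab rfl rfl hkb (hne k)
          refine ADPath.replace_case D hdisj hcover hinc hout heE k Q' hQ'E ?_ ?_
          · intro v k' h1 h2
            exact hinc v k' k h2 (hQ'I v h1)
          · intro v k' h1 h2
            rcases hQ'O v h1 with rfl | h1'
            · exact absurd ⟨k', h2⟩ hA
            · exact hout v k' k h2 h1'
        · obtain ⟨Nw, hNE, hNI', hNO'⟩ := ADPath.exists_single he_ab he hab rfl rfl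
          refine ADPath.add_case D hdisj hcover hinc hout heE Nw hNE ?_ ?_
          · intro v k h1 h2
            exact hB ⟨k, (hNI' v h1) ▸ h2⟩
          · intro v k h1 h2
            exact hA ⟨k, (hNO' v h1) ▸ h2⟩
end

section
/- Let G = (V, E) be a finite simple graph with an orientation μ, and let D be a partition of E into edge-disjoint alternating-directions paths such that every vertex is an incoming endpoint of at most one path of D and an outgoing endpoint of at most one path of D. Let q : E → {−1, 1} be any assignment that colors each path of D alternately, i.e., for every path (v_0, e_1, v_1, …, e_k, v_k) in D and every 1 ≤ t ≤ k−1, q(e_{t+1}) = −q(e_t). Then for every vertex v ∈ V, both the incoming discrepancy |Σ_{e incoming to v} q(e)| and the outgoing discrepancy |Σ_{e outgoing from v} q(e)| are at most 1. -/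
section Abstract
variable {V : Type*} [DecidableEq V]
lemma abstract_path_sum (μ : Sym2 V → V × V) (q : Sym2 V → ℤ) (v : V)
    (k : ℕ) (hk : 0 < k) (E : ℕ → Sym2 V) (W : ℕ → V)
    (hW : ∀ i, i < k → W i ≠ W (i+1))
    (hE : ∀ i, i < k → Sym2.mk.uncurry (μ (E i)) = s(W i, W (i+1)))
    (hq1 : ∀ i, i < k → q (E i) = 1 ∨ q (E i) = -1)
    (halt : ∀ i, i + 1 < k → q (E (i+1)) = - q (E i))
    (hdir : ∀ i, i + 1 < k →
      ((μ (E i)).2 = W (i+1) ∧ (μ (E (i+1))).2 = W (i+1)) ∨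
      ((μ (E i)).1 = W (i+1) ∧ (μ (E (i+1))).1 = W (i+1))) :
    |∑ i ∈ Finset.range k, (if (μ (E i)).2 = v then q (E i) else 0)| ≤ 1 ∧
    ((∑ i ∈ Finset.range k, (if (μ (E i)).2 = v then q (E i) else 0)) ≠ 0 →
      ((μ (E 0)).2 = v ∧ W 0 = v) ∨ ((μ (E (k-1))).2 = v ∧ W k = v)) := by
  have hk1 : k - 1 + 1 = k := Nat.succ_pred_eq_of_pos hk
  have hsplit : ∀ i, i < k →
      ((μ (E i)).1 = W i ∧ (μ (E i)).2 = W (i+1)) ∨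
      ((μ (E i)).1 = W (i+1) ∧ (μ (E i)).2 = W i) := by
    intro i hi
    have h : s((μ (E i)).1, (μ (E i)).2) = s(W i, W (i+1)) := hE i hi
    rw [Sym2.eq_iff] at h
    exact h
  -- direction flip
  have hflip : ∀ i, i + 1 < k →
      ((μ (E (i+1))).2 = W (i+2) ↔ ¬ ((μ (E i)).2 = W (i+1))) := by
    intro i h1
    rcases hdir i h1 with ⟨ha, hb⟩ | ⟨ha, hb⟩
    · constructor
      · intro hc; exact absurd (hb.symm.trans hc) (hW (i+1) h1)
      · intro hc; exact absurd ha hc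
    · have hfi : ¬ ((μ (E i)).2 = W (i+1)) := by
        rcases hsplit i (Nat.lt_of_succ_lt h1) with ⟨c1, c2⟩ | ⟨c1, c2⟩
        · exact absurd (c1.symm.trans ha) (hW i (Nat.lt_of_succ_lt h1))
        · rw [c2]; exact hW i (Nat.lt_of_succ_lt h1)
      have hfi1 : (μ (E (i+1))).2 = W (i+2) := by
        rcases hsplit (i+1) h1 with ⟨c1, c2⟩ | ⟨c1, c2⟩
        · exact c2
        · exact absurd (hb.symm.trans c1) (hW (i+1) h1)
      exact iff_of_true hfi1 hfi
  set d : ℤ := if (μ (E 0)).2 = W 1 then q (E 0) else - q (E 0) with hd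
  have hsign : ∀ i, i < k →
      (((μ (E i)).2 = W (i+1)) → q (E i) = d) ∧
      ((¬ ((μ (E i)).2 = W (i+1))) → q (E i) = -d) := by
    intro i
    induction i with
    | zero =>
      intro _
      constructor
      · intro hF; rw [hd, if_pos hF]
      · intro hF; rw [hd, if_neg hF, neg_neg]
    | succ i ih =>
      intro h1
      have hprev := ih (Nat.lt_of_succ_lt h1)
      have hf := hflip i h1
      have hq' := halt i h1
      constructor
      · intro hF
        rw [hq', hprev.2 (hf.mp hF), neg_neg]
      · intro hF
        have hFi : (μ (E i)).2 = W (i+1) := by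
          by_contra hc; exact hF (hf.mpr hc)
        rw [hq', hprev.1 hFi]
  set L : ℕ → ℤ := fun i => if ((μ (E i)).2 = v ∧ W i = v) then q (E i) else 0 with hL
  set R : ℕ → ℤ := fun i => if ((μ (E i)).2 = v ∧ W (i+1) = v) then q (E i) else 0 with hR
  have hterm : ∀ i ∈ Finset.range k,
      (if (μ (E i)).2 = v then q (E i) else 0) = L i + R i := by
    intro i hi
    rw [Finset.mem_range] at hi
    by_cases hvin : (μ (E i)).2 = v
    · rcases hsplit i hi with ⟨c1, c2⟩ | ⟨c1, c2⟩
      · have h1 : W (i+1) = v := c2.symm.trans hvin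
        have h0 : ¬ (W i = v) := fun h => hW i hi (h.trans h1.symm)
        simp [hL, hR, hvin, h0, h1]
      · have h0 : W i = v := c2.symm.trans hvin
        have h1 : ¬ (W (i+1) = v) := fun h => hW i hi (h0.trans h.symm)
        simp [hL, hR, hvin, h0, h1]
    · simp [hL, hR, hvin]
  have hcancel : ∀ i ∈ Finset.range (k-1), R i + L (i+1) = 0 := by
    intro i hi
    rw [Finset.mem_range] at hi
    have h1 : i + 1 < k := by omega
    by_cases hmid : W (i+1) = v
    · rcases hdir i h1 with ⟨ha, hb⟩ | ⟨ha, hb⟩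
      · simp only [hL, hR]
        rw [if_pos ⟨ha.trans hmid, hmid⟩, if_pos ⟨hb.trans hmid, hmid⟩, halt i h1]
        ring
      · have h2i : ¬ ((μ (E i)).2 = v) := by
          rcases hsplit i (Nat.lt_of_succ_lt h1) with ⟨c1, c2⟩ | ⟨c1, c2⟩
          · exact absurd (c1.symm.trans ha) (hW i (Nat.lt_of_succ_lt h1))
          · rw [c2]; intro h; exact hW i (Nat.lt_of_succ_lt h1) (h.trans hmid.symm)
        have h2i1 : ¬ ((μ (E (i+1))).2 = v) := by
          rcases hsplit (i+1) h1 with ⟨c1, c2⟩ | ⟨c1, c2⟩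
          · rw [c2]; intro h; exact hW (i+1) h1 (hmid.trans h.symm)
          · exact absurd (hb.symm.trans c1) (hW (i+1) h1)
        simp [hL, hR, h2i, h2i1]
    · simp [hL, hR, hmid]
  have hS : (∑ i ∈ Finset.range k, (if (μ (E i)).2 = v then q (E i) else 0))
      = L 0 + R (k-1) := by
    rw [Finset.sum_congr rfl hterm, Finset.sum_add_distrib]
    obtain ⟨m, rfl⟩ : ∃ m, k = m + 1 := ⟨k - 1, by omega⟩
    rw [Finset.sum_range_succ' L, Finset.sum_range_succ R]
    have hzero : ∑ i ∈ Finset.range m, (R i + L (i+1)) = 0 :=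
      Finset.sum_eq_zero (fun i hi => hcancel i (by simpa using hi))
    have h2 : (∑ i ∈ Finset.range m, L (i+1)) + (∑ i ∈ Finset.range m, R i) = 0 := by
      rw [← Finset.sum_add_distrib, ← hzero]
      exact Finset.sum_congr rfl (fun i _ => add_comm _ _)
    simp only [Nat.add_sub_cancel]
    linarith
  rw [hS]
  have hL0 : L 0 = if ((μ (E 0)).2 = v ∧ W 0 = v) then q (E 0) else 0 := rfl
  have hRk : R (k-1) = if ((μ (E (k-1))).2 = v ∧ W k = v) then q (E (k-1)) else 0 := by
    rw [hR]; simp only [hk1]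
  rw [hL0, hRk]
  by_cases hc1 : ((μ (E 0)).2 = v ∧ W 0 = v) <;>
    by_cases hc2 : ((μ (E (k-1))).2 = v ∧ W k = v)
  · -- both endpoints incoming at v: cancellation
    rw [if_pos hc1, if_pos hc2]
    have hF0 : ¬ ((μ (E 0)).2 = W (0+1)) := by
      rw [hc1.1.trans hc1.2.symm]
      exact hW 0 hk
    have hFk : (μ (E (k-1))).2 = W (k-1+1) := by
      rw [hk1]; exact hc2.1.trans hc2.2.symm
    have e1 := (hsign 0 hk).2 hF0
    have e2 := (hsign (k-1) (by omega)).1 hFk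
    have : q (E 0) + q (E (k-1)) = 0 := by rw [e1, e2]; ring
    rw [this]
    exact ⟨by norm_num, fun h => absurd rfl h⟩
  · rw [if_pos hc1, if_neg hc2, add_zero]
    refine ⟨?_, fun _ => Or.inl hc1⟩
    rcases hq1 0 hk with h | h <;> rw [h] <;> norm_num
  · rw [if_neg hc1, if_pos hc2, zero_add]
    refine ⟨?_, fun _ => Or.inr hc2⟩
    rcases hq1 (k-1) (by omega) with h | h <;> rw [h] <;> norm_num
  · rw [if_neg hc1, if_neg hc2]
    norm_num

end Abstract

section PathLemma
variable {V : Type*} [DecidableEq V] {G : SimpleGraph V} {μ : Sym2 V → V × V}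

lemma ADPath.sum_incoming (P : ADPath G μ) (v : V)
    (hμ : ∀ e ∈ G.edgeSet, Sym2.mk.uncurry (μ e) = e)
    (q : Sym2 V → ℤ) (hq : ∀ e ∈ G.edgeSet, q e = 1 ∨ q e = -1)
    (halt : ∀ (i : ℕ) (h1 : i + 1 < P.len),
      q (P.edge ⟨i + 1, h1⟩) = - q (P.edge ⟨i, Nat.lt_of_succ_lt h1⟩)) :
    |∑ i : Fin P.len, (if (μ (P.edge i)).2 = v then q (P.edge i) else 0)| ≤ 1 ∧
    ((∑ i : Fin P.len, (if (μ (P.edge i)).2 = v then q (P.edge i) else 0)) ≠ 0 →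
      P.IsIncomingEndpoint v) := by
  set k := P.len with hkdef
  have hk : 0 < k := P.len_pos
  set E : ℕ → Sym2 V := fun i => if h : i < P.len then P.edge ⟨i, h⟩ else P.edge ⟨0, P.len_pos⟩
    with hEdef
  set W : ℕ → V := fun i => P.vert ⟨min i P.len, by omega⟩ with hWdef
  have hEi : ∀ (i : ℕ) (h : i < k), E i = P.edge ⟨i, h⟩ := by
    intro i h; simp only [hEdef]; rw [dif_pos h]
  have hWc : ∀ (i : ℕ) (h : i ≤ P.len), W i = P.vert ⟨i, by omega⟩ := by
    intro i h; simp only [hWdef]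
    congr 1; exact Fin.ext (by simp [Nat.min_eq_left h])
  have hadj : ∀ (i : ℕ) (h : i < k), G.Adj (W i) (W (i+1)) := by
    intro i h
    have hm := P.edge_mem ⟨i, h⟩
    rw [P.edge_eq ⟨i, h⟩] at hm
    rw [SimpleGraph.mem_edgeSet] at hm
    have e1 : P.vert (Fin.castSucc ⟨i, h⟩) = W i := by
      rw [hWc i (le_of_lt h)]; rfl
    have e2 : P.vert (Fin.succ ⟨i, h⟩) = W (i+1) := by
      rw [hWc (i+1) h]; rfl
    rwa [e1, e2] at hm
  have hedgeW : ∀ (i : ℕ) (h : i < k), E i = s(W i, W (i+1)) := by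
    intro i h
    rw [hEi i h, P.edge_eq ⟨i, h⟩, hWc i (le_of_lt h), hWc (i+1) h]
    rfl
  have habs := abstract_path_sum μ q v k hk E W
    (fun i h => (hadj i h).ne)
    (fun i h => by rw [hμ (E i) (by rw [hEi i h]; exact P.edge_mem _), hedgeW i h])
    (fun i h => hq (E i) (by rw [hEi i h]; exact P.edge_mem _))
    (fun i h => by rw [hEi (i+1) h, hEi i (Nat.lt_of_succ_lt h)]; exact halt i h)
    (fun i h => by
      rw [hEi (i+1) h, hEi i (Nat.lt_of_succ_lt h), hWc (i+1) (le_of_lt h)]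
      exact P.alternating i h)
  have hsum : (∑ i : Fin P.len, (if (μ (P.edge i)).2 = v then q (P.edge i) else 0))
      = ∑ i ∈ Finset.range k, (if (μ (E i)).2 = v then q (E i) else 0) := by
    rw [← Fin.sum_univ_eq_sum_range (fun i => if (μ (E i)).2 = v then q (E i) else 0) k]
    exact Finset.sum_congr rfl (fun i _ => by rw [hEi i.1 i.2, Fin.eta])
  rw [hsum]
  refine ⟨habs.1, fun hne => ?_⟩
  have hfirst : E 0 = P.firstEdge := hEi 0 hk
  have hlast : E (k-1) = P.lastEdge := hEi (k-1) (Nat.sub_lt hk one_pos)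
  have hW0 : W 0 = P.vert 0 := by rw [hWc 0 (Nat.zero_le _)]; rfl
  have hWk : W k = P.vert (Fin.last P.len) := by rw [hWc k (le_refl _)]; rfl
  rcases habs.2 hne with ⟨h1, h2⟩ | ⟨h1, h2⟩
  · left; rw [← hfirst, ← hW0]; exact ⟨h2.symm, h1⟩
  · right; rw [← hlast, ← hWk]; exact ⟨h2.symm, h1⟩

end PathLemma

section Global
variable {V : Type*} [Fintype V] [DecidableEq V]

lemma incoming_global (G : SimpleGraph V) [DecidableRel G.Adj] (μ : Sym2 V → V × V)
    (hμ : ∀ e ∈ G.edgeSet, Sym2.mk.uncurry (μ e) = e)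
    (n : ℕ) (D : Fin n → ADPath G μ)
    (hdisj : ∀ j k, j ≠ k → Disjoint (D j).edges (D k).edges)
    (hcover : (⋃ j, (D j).edges) = G.edgeSet)
    (hin : ∀ v : V, ∀ j k, (D j).IsIncomingEndpoint v → (D k).IsIncomingEndpoint v → j = k)
    (q : Sym2 V → ℤ) (hq : ∀ e ∈ G.edgeSet, q e = 1 ∨ q e = -1)
    (halt : ∀ j, ∀ (i : ℕ) (h1 : i + 1 < (D j).len),
      q ((D j).edge ⟨i + 1, h1⟩) = - q ((D j).edge ⟨i, Nat.lt_of_succ_lt h1⟩)) :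
    ∀ v : V, |∑ e ∈ G.edgeFinset.filter (fun e => (μ e).2 = v), q e| ≤ 1 := by
  intro v
  set S : Fin n → ℤ :=
    fun j => ∑ i : Fin (D j).len, (if (μ ((D j).edge i)).2 = v then q ((D j).edge i) else 0)
    with hSdef
  have hpath : ∀ j, |S j| ≤ 1 ∧ (S j ≠ 0 → (D j).IsIncomingEndpoint v) :=
    fun j => (D j).sum_incoming v hμ q hq (halt j)
  -- rewrite the edge finset as a biUnion over paths
  have hbi : G.edgeFinset = Finset.univ.biUnion
      (fun j : Fin n => Finset.univ.image (D j).edge) := by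
    ext e
    simp only [SimpleGraph.mem_edgeFinset, Finset.mem_biUnion, Finset.mem_univ, true_and,
      Finset.mem_image]
    rw [← hcover]
    simp [ADPath.edges, Set.mem_iUnion, Set.mem_range, eq_comm]
  have hsum : ∑ e ∈ G.edgeFinset.filter (fun e => (μ e).2 = v), q e = ∑ j, S j := by
    rw [hbi, Finset.filter_biUnion, Finset.sum_biUnion]
    · refine Finset.sum_congr rfl (fun j _ => ?_)
      rw [Finset.sum_filter, Finset.sum_image (fun x _ y _ h => (D j).edge_inj h)]
    · intro x _ y _ hxy
      have := hdisj x y hxy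
      refine Finset.disjoint_filter_filter ?_
      rw [← Finset.disjoint_coe]
      simpa [ADPath.edges] using this
  rw [hsum]
  by_cases hz : ∀ j, S j = 0
  · simp [Finset.sum_congr rfl (fun j _ => hz j)]
  · push_neg at hz
    obtain ⟨j0, hj0⟩ := hz
    rw [Finset.sum_eq_single j0]
    · exact (hpath j0).1
    · intro b _ hb
      by_contra hc
      exact hb (hin v b j0 ((hpath b).2 hc) ((hpath j0).2 hj0))
    · intro h; exact absurd (Finset.mem_univ j0) h

end Global

def ADPath.swap {V : Type*} {G : SimpleGraph V} {μ : Sym2 V → V × V} (P : ADPath G μ) :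
    ADPath G (fun e => ((μ e).2, (μ e).1)) where
  len := P.len
  len_pos := P.len_pos
  vert := P.vert
  edge := P.edge
  edge_eq := P.edge_eq
  edge_mem := P.edge_mem
  edge_inj := P.edge_inj
  alternating := fun i h1 => (P.alternating i h1).symm


/-- alternately coloring the paths of an AD paths decomposition of degree
at most 1 yields an oriented degree-splitting with discrepancy at most 1. -/
theorem ad_paths_alternate_coloring_discrepancy {V : Type*} [Fintype V] [DecidableEq V]
    (G : SimpleGraph V) [DecidableRel G.Adj] (μ : Sym2 V → V × V)
    (hμ : ∀ e ∈ G.edgeSet, Sym2.mk.uncurry (μ e) = e)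
    (n : ℕ) (D : Fin n → ADPath G μ)
    (hdisj : ∀ j k, j ≠ k → Disjoint (D j).edges (D k).edges)
    (hcover : (⋃ j, (D j).edges) = G.edgeSet)
    (hin : ∀ v : V, ∀ j k, (D j).IsIncomingEndpoint v → (D k).IsIncomingEndpoint v → j = k)
    (hout : ∀ v : V, ∀ j k, (D j).IsOutgoingEndpoint v → (D k).IsOutgoingEndpoint v → j = k)
    (q : Sym2 V → ℤ) (hq : ∀ e ∈ G.edgeSet, q e = 1 ∨ q e = -1)
    (halt : ∀ j, ∀ (i : ℕ) (h1 : i + 1 < (D j).len),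
      q ((D j).edge ⟨i + 1, h1⟩) = - q ((D j).edge ⟨i, Nat.lt_of_succ_lt h1⟩)) :
    ∀ v : V,
      |∑ e ∈ G.edgeFinset.filter (fun e => (μ e).2 = v), q e| ≤ 1 ∧
      |∑ e ∈ G.edgeFinset.filter (fun e => (μ e).1 = v), q e| ≤ 1 := by
  intro v
  refine ⟨incoming_global G μ hμ n D hdisj hcover hin q hq halt v, ?_⟩
  have hμ' : ∀ e ∈ G.edgeSet, Sym2.mk.uncurry ((μ e).2, (μ e).1) = e := by
    intro e he
    have h1 : Sym2.mk.uncurry ((μ e).2, (μ e).1) = Sym2.mk.uncurry ((μ e).1, (μ e).2) := by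
      simp [Function.uncurry, Sym2.eq_swap]
    rw [h1, Prod.mk.eta]
    exact hμ e he
  exact incoming_global G (fun e => ((μ e).2, (μ e).1)) hμ' n (fun j => (D j).swap)
    hdisj hcover hout q hq halt v
end

section
/- Let G = (V, E) be a finite simple graph and let μ be an orientation of its edges. Then there exists an assignment q : E → {−1, 1} such that for every vertex v ∈ V, both the incoming discrepancy |Σ_{e incoming to v} q(e)| and the outgoing discrepancy |Σ_{e outgoing from v} q(e)| are at most 1. -/
namespace OrientedSplit

variable {W : Type*} [DecidableEq W]

/-- Signed incidence of an arrow `p` at a node `u`. -/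
def d (u : W) (p : W × W) : ℤ :=
  (if p.1 = u then 1 else 0) - (if p.2 = u then 1 else 0)

lemma d_abs_le (u : W) (p : W × W) : |d u p| ≤ 1 := by
  unfold d; split_ifs <;> norm_num

lemma merge (w : W) (p r : W × W) (hp : d w p ≠ 0) (hr : d w r ≠ 0) :
    ∃ ε : ℤ, ∃ m : W × W, (ε = 1 ∨ ε = -1) ∧ ∀ u, d u p + ε * d u r = d u m := by
  obtain ⟨x1, y1⟩ := p
  obtain ⟨x2, y2⟩ := r
  simp only [d] at hp hr ⊢
  by_cases h1 : x1 = w <;> by_cases h2 : y1 = w <;>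
    by_cases h3 : x2 = w <;> by_cases h4 : y2 = w <;>
    simp [h1, h2, h3, h4] at hp hr
  · -- x1 = w, y1 ≠ w, x2 = w, y2 ≠ w
    subst h1; subst h3
    exact ⟨-1, (y2, y1), Or.inr rfl, fun u => by split_ifs <;> ring⟩
  · -- x1 = w, y1 ≠ w, x2 ≠ w, y2 = w
    subst h1; subst h4
    exact ⟨1, (x2, y1), Or.inl rfl, fun u => by split_ifs <;> ring⟩
  · -- x1 ≠ w, y1 = w, x2 = w, y2 ≠ w
    subst h2; subst h3
    exact ⟨1, (x1, y2), Or.inl rfl, fun u => by split_ifs <;> ring⟩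
  · -- x1 ≠ w, y1 = w, x2 ≠ w, y2 = w
    subst h2; subst h4
    exact ⟨-1, (x1, x2), Or.inr rfl, fun u => by split_ifs <;> ring⟩

lemma key {ι : Type*} [DecidableEq ι] :
    ∀ (n : ℕ) (s : Finset ι), s.card = n → ∀ (f : ι → W × W),
    ∃ q : ι → ℤ, (∀ i ∈ s, q i = 1 ∨ q i = -1) ∧
      ∀ u : W, |∑ i ∈ s, q i * d u (f i)| ≤ 1 := by
  intro n
  induction n using Nat.strong_induction_on with
  | _ n ih =>
  intro s hs f
  by_cases h : ∃ u : W, ∃ i ∈ s, ∃ j ∈ s, i ≠ j ∧ d u (f i) ≠ 0 ∧ d u (f j) ≠ 0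
  · obtain ⟨w, i, hi, j, hj, hij, hdi, hdj⟩ := h
    obtain ⟨ε, m, hε, hid⟩ := merge w (f i) (f j) hdi hdj
    have hi' : i ∈ s.erase j := Finset.mem_erase.mpr ⟨hij, hi⟩
    have hcard : (s.erase j).card < n := by
      rw [← hs]; exact Finset.card_erase_lt_of_mem hj
    obtain ⟨q', hq1, hq2⟩ := ih _ hcard (s.erase j) rfl (Function.update f i m)
    have hqi := hq1 i hi'
    refine ⟨fun k => if k = j then ε * q' i else q' k, ?_, ?_⟩
    · intro k hk
      by_cases hkj : k = j
      · simp only [hkj, if_pos rfl]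
        rcases hε with hε | hε <;> rcases hqi with hqi | hqi <;>
          rw [hε, hqi] <;> norm_num
      · simp only [if_neg hkj]
        exact hq1 k (Finset.mem_erase.mpr ⟨hkj, hk⟩)
    · intro u
      have hrest : ∑ k ∈ (s.erase j).erase i,
          (if k = j then ε * q' i else q' k) * d u (f k)
          = ∑ k ∈ (s.erase j).erase i, q' k * d u (Function.update f i m k) := by
        apply Finset.sum_congr rfl
        intro k hk
        have hki : k ≠ i := (Finset.mem_erase.mp hk).1
        have hkj : k ≠ j := (Finset.mem_erase.mp (Finset.mem_erase.mp hk).2).1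
        rw [if_neg hkj, Function.update_of_ne hki]
      have hsum : ∑ k ∈ s, (if k = j then ε * q' i else q' k) * d u (f k)
          = ∑ k ∈ s.erase j, q' k * d u (Function.update f i m k) := by
        rw [← Finset.sum_erase_add s _ hj, ← Finset.sum_erase_add (s.erase j) _ hi',
          ← Finset.sum_erase_add (s.erase j) (fun k => q' k * d u (Function.update f i m k)) hi',
          hrest, if_neg hij, if_pos rfl, Function.update_self, ← hid u]
        ring
      rw [hsum]
      exact hq2 u
  · push_neg at h
    refine ⟨fun _ => 1, fun i _ => Or.inl rfl, fun u => ?_⟩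
    simp only [one_mul]
    have hone : ∀ i ∈ s, ∀ j ∈ s, d u (f i) ≠ 0 → d u (f j) ≠ 0 → i = j := by
      intro i hi j hj hdi hdj
      by_contra hij
      exact hdj (h u i hi j hj hij hdi)
    rw [← Finset.sum_filter_ne_zero]
    have hc1 : (s.filter (fun i => d u (f i) ≠ 0)).card ≤ 1 := by
      rw [Finset.card_le_one]
      intro a ha b hb
      rw [Finset.mem_filter] at ha hb
      exact hone a ha.1 b hb.1 ha.2 hb.2
    rcases Finset.eq_empty_or_nonempty (s.filter (fun i => d u (f i) ≠ 0)) with he | hne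
    · rw [he, Finset.sum_empty]; norm_num
    · have : (s.filter (fun i => d u (f i) ≠ 0)).card = 1 :=
        le_antisymm hc1 (Finset.card_pos.mpr hne)
      obtain ⟨a, ha⟩ := Finset.card_eq_one.mp this
      rw [ha, Finset.sum_singleton]
      exact d_abs_le u (f a)

end OrientedSplit

/-- every oriented graph admits an oriented degree-splitting with
discrepancy at most 1: each vertex has incoming and outgoing discrepancies at most 1. -/
theorem oriented_degree_splitting_exists {V : Type*} [Fintype V] [DecidableEq V]
    (G : SimpleGraph V) [DecidableRel G.Adj] (μ : Sym2 V → V × V)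
    (hμ : ∀ e ∈ G.edgeSet, Sym2.mk (μ e).1 (μ e).2 = e) :
    ∃ q : Sym2 V → ℤ,
      (∀ e ∈ G.edgeFinset, q e = 1 ∨ q e = -1) ∧
      ∀ v : V,
        |∑ e ∈ G.edgeFinset.filter (fun e => (μ e).2 = v), q e| ≤ 1 ∧
        |∑ e ∈ G.edgeFinset.filter (fun e => (μ e).1 = v), q e| ≤ 1 := by
  obtain ⟨q, hq1, hq2⟩ := OrientedSplit.key (W := V × Bool) G.edgeFinset.card
    G.edgeFinset rfl (fun e => (((μ e).1, false), ((μ e).2, true)))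
  refine ⟨q, hq1, fun v => ⟨?_, ?_⟩⟩
  · have h := hq2 (v, true)
    have heq : ∑ e ∈ G.edgeFinset, q e *
        OrientedSplit.d (v, true) (((μ e).1, false), ((μ e).2, true))
        = -∑ e ∈ G.edgeFinset.filter (fun e => (μ e).2 = v), q e := by
      rw [Finset.sum_filter, ← Finset.sum_neg_distrib]
      apply Finset.sum_congr rfl
      intro e _
      simp only [OrientedSplit.d, Prod.mk.injEq]
      split_ifs <;> simp_all <;> ring
    rw [heq, abs_neg] at h
    exact h
  · have h := hq2 (v, false)
    have heq : ∑ e ∈ G.edgeFinset, q e *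
        OrientedSplit.d (v, false) (((μ e).1, false), ((μ e).2, true))
        = ∑ e ∈ G.edgeFinset.filter (fun e => (μ e).1 = v), q e := by
      rw [Finset.sum_filter]
      apply Finset.sum_congr rfl
      intro e _
      simp only [OrientedSplit.d, Prod.mk.injEq]
      split_ifs <;> simp_all <;> ring
    rw [heq] at h
    exact h
end

section
/- Let G = (V, E) be a finite simple graph with an orientation μ, and let i be a natural number. Then there exists a partition of E into 2^i pairwise disjoint sets E_1, …, E_{2^i} such that for every vertex v ∈ V and every j ∈ {1, …, 2^i}: indeg(v)/2^i − 1 ≤ indeg_j(v) ≤ indeg(v)/2^i + 1 and outdeg(v)/2^i − 1 ≤ outdeg_j(v) ≤ outdeg(v)/2^i + 1 (as inequalities between real numbers), where indeg_j(v) and outdeg_j(v) denote the numbers of edges of E_j that are incoming to v and outgoing from v, respectively. -/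
set_option linter.unusedSectionVars false

namespace PartitionAux

variable {α A B : Type*} [DecidableEq α] [DecidableEq A] [DecidableEq B]
variable (p : α → A) (q : α → B)

/-- count of elements of `F` in class `c`. -/
def cnt (F : Finset α) : A ⊕ B → ℕ
  | .inl a => (F.filter (fun e => p e = a)).card
  | .inr b => (F.filter (fun e => q e = b)).card

/-- incidence indicator -/
def ind (c : A ⊕ B) (e : α) : ℤ :=
  match c with
  | .inl a => if p e = a then 1 else 0
  | .inr b => if q e = b then 1 else 0

lemma cnt_insert {F : Finset α} {e : α} (he : e ∉ F) (c : A ⊕ B) :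
    (cnt p q (insert e F) c : ℤ) = cnt p q F c + ind p q c e := by
  cases c with
  | inl a =>
    simp only [cnt, ind, Finset.filter_insert]
    split_ifs with h
    · rw [Finset.card_insert_of_notMem (fun hm => he (Finset.mem_of_mem_filter _ hm))]
      push_cast; ring
    · simp
  | inr b =>
    simp only [cnt, ind, Finset.filter_insert]
    split_ifs with h
    · rw [Finset.card_insert_of_notMem (fun hm => he (Finset.mem_of_mem_filter _ hm))]
      push_cast; ring
    · simp

lemma cnt_union {F G : Finset α} (h : Disjoint F G) (c : A ⊕ B) :
    cnt p q (F ∪ G) c = cnt p q F c + cnt p q G c := by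
  cases c <;>
  · simp only [cnt, Finset.filter_union]
    exact Finset.card_union_of_disjoint (Finset.disjoint_filter_filter h)

lemma cnt_mono {F G : Finset α} (h : F ⊆ G) (c : A ⊕ B) : cnt p q F c ≤ cnt p q G c := by
  cases c <;> exact Finset.card_le_card (Finset.filter_subset_filter _ h)

lemma cnt_empty (c : A ⊕ B) : cnt p q (∅ : Finset α) c = 0 := by cases c <;> simp [cnt]

/-- start class of a dart -/
def dst (d : α × Bool) : A ⊕ B := if d.2 then Sum.inl (p d.1) else Sum.inr (q d.1)

/-- end class of a dart -/
def dfn (d : α × Bool) : A ⊕ B := if d.2 then Sum.inr (q d.1) else Sum.inl (p d.1)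

lemma ind_eq_dart (c : A ⊕ B) (d : α × Bool) :
    ind p q c d.1 =
      (if dst p q d = c then (1:ℤ) else 0) + (if dfn p q d = c then (1:ℤ) else 0) := by
  obtain ⟨e, dir⟩ := d
  cases c <;> cases dir <;> simp [ind, dst, dfn] <;> split_ifs <;> simp_all

/-- alternating signed incidence count of a dart list at class c -/
def alt (c : A ⊕ B) : List (α × Bool) → ℤ
  | [] => 0
  | d :: D => (if dst p q d = c then (1:ℤ) else 0) + (if dfn p q d = c then (1:ℤ) else 0)
      - alt c D

/-- chain relation between consecutive darts -/
def Rel (d d' : α × Bool) : Prop := dfn p q d = dst p q d'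

lemma alt_eq (c : A ⊕ B) : ∀ (D : List (α × Bool)) (hD : D ≠ []), D.Chain' (Rel p q) →
    alt p q c D = (if dst p q (D.head hD) = c then (1:ℤ) else 0)
      + (-1) ^ (D.length + 1) * (if dfn p q (D.getLast hD) = c then (1:ℤ) else 0)
  | [], hD => by simp at hD
  | [d], _ => by intro _; simp [alt]; rfl
  | d :: d' :: D, _ => by
    intro hch
    unfold List.Chain' at hch; rw [List.isChain_cons_cons] at hch
    have IH := alt_eq c (d' :: D) (by simp) hch.2
    have hd : (if dfn p q d = c then (1:ℤ) else 0) = (if dst p q d' = c then (1:ℤ) else 0) := by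
      rw [hch.1]
    show ((if dst p q d = c then (1:ℤ) else 0) + (if dfn p q d = c then (1:ℤ) else 0))
        - alt p q c (d' :: D) = _
    rw [List.getLast_cons (by simp : d' :: D ≠ []), IH, hd]
    simp only [List.head_cons, List.length_cons]
    by_cases h1 : dst p q d = c <;> by_cases h2 : dst p q d' = c <;> by_cases h3 : dfn p q ((d' :: D).getLast (by simp)) = c <;> simp only [h1, h2, h3, ↓reduceIte] <;> ring

/-- side of a class -/
def sd : A ⊕ B → Bool := Sum.elim (fun _ => false) (fun _ => true)

lemma sd_dfn (d : α × Bool) : sd (dfn p q d) = ! sd (dst p q d) := by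
  obtain ⟨e, dir⟩ := d; cases dir <;> simp [sd, dst, dfn]

lemma sd_parity : ∀ (D : List (α × Bool)) (hD : D ≠ []), D.Chain' (Rel p q) →
    sd (dfn p q (D.getLast hD)) =
      (if Even D.length then sd (dst p q (D.head hD)) else ! sd (dst p q (D.head hD)))
  | [], hD => by simp at hD
  | [d], _ => by
    intro _
    simp [sd_dfn, Nat.even_iff]
  | d :: d' :: D, _ => by
    intro hch
    unfold List.Chain' at hch; rw [List.isChain_cons_cons] at hch
    have IH := sd_parity (d' :: D) (by simp) hch.2
    have h1 : sd (dst p q d') = ! sd (dst p q d) := by rw [← hch.1, sd_dfn]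
    rw [List.getLast_cons (by simp : d' :: D ≠ []), IH]
    simp only [List.head_cons, List.length_cons, h1]
    by_cases he : Even (D.length + 1)
    · have h2 : ¬ Even (D.length + 1 + 1) := by simp [Nat.even_add_one, he]
      simp [he, h2]
    · have h2 : Even (D.length + 1 + 1) := by
        rw [Nat.even_add_one]; exact he
      simp [he, h2]

lemma abs_alt_le (c : A ⊕ B) (D : List (α × Bool)) (hD : D ≠ []) (hch : D.Chain' (Rel p q)) :
    |alt p q c D| ≤ 1 := by
  rw [alt_eq p q c D hD hch]
  rcases Nat.even_or_odd (D.length + 1) with he | ho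
  · rw [he.neg_one_pow]
    have hodd : ¬ Even D.length := Nat.even_add_one.mp he
    have hside := sd_parity p q D hD hch
    rw [if_neg hodd] at hside
    by_cases h1 : dst p q (D.head hD) = c <;> by_cases h2 : dfn p q (D.getLast hD) = c
    · exfalso; rw [h1, h2] at hside; simp at hside
    all_goals simp [h1, h2]
  · rw [ho.neg_one_pow]
    split_ifs <;> norm_num

end PartitionAux
namespace PartitionAux

variable {α A B : Type*} [DecidableEq α] [DecidableEq A] [DecidableEq B]
variable (p : α → A) (q : α → B)

/-- alternate selection of edges from dart list -/
def pick : Bool → List (α × Bool) → Finset α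
  | _, [] => ∅
  | b, d :: D => if b then insert d.1 (pick false D) else pick true D

lemma pick_subset (b : Bool) (D : List (α × Bool)) :
    pick b D ⊆ (D.map Prod.fst).toFinset := by
  induction D generalizing b with
  | nil => simp [pick]
  | cons d D ih =>
    cases b with
    | true =>
      simp only [pick, if_true, List.map_cons, List.toFinset_cons]
      exact Finset.insert_subset_insert _ ((ih false).trans (by simp))
    | false =>
      simp only [pick, if_false, List.map_cons, List.toFinset_cons]
      exact (ih true).trans (Finset.subset_insert _ _)

lemma pick_cnt (c : A ⊕ B) : ∀ (b : Bool) (D : List (α × Bool)), (D.map Prod.fst).Nodup →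
    2 * (cnt p q (pick b D) c : ℤ) - cnt p q (D.map Prod.fst).toFinset c
      = (if b then 1 else -1) * alt p q c D
  | b, [] => by intro _; simp [pick, cnt_empty, alt]
  | b, d :: D => by
    intro hnd
    simp only [List.map_cons, List.nodup_cons] at hnd
    have hmem : d.1 ∉ (D.map Prod.fst).toFinset := by simpa using hnd.1
    have htf : (cnt p q (insert d.1 (D.map Prod.fst).toFinset) c : ℤ)
        = cnt p q (D.map Prod.fst).toFinset c + ind p q c d.1 := cnt_insert p q hmem c
    have hdartsum := ind_eq_dart p q c d
    cases b with
    | true =>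
      have hnp : d.1 ∉ pick false D := fun h => hmem (pick_subset false D h)
      have hp : (cnt p q (pick true (d :: D)) c : ℤ)
          = cnt p q (pick false D) c + ind p q c d.1 := by
        simp only [pick, if_true]
        exact cnt_insert p q hnp c
      have IH := pick_cnt c false D hnd.2
      norm_num at IH ⊢
      rw [hp, htf]
      simp only [alt]
      rw [hdartsum] at *
      linarith
    | false =>
      have hp : cnt p q (pick false (d :: D)) c = cnt p q (pick true D) c := by
        simp [pick]
      have IH := pick_cnt c true D hnd.2
      norm_num at IH ⊢
      rw [hp, htf]
      simp only [alt]
      rw [hdartsum] at *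
      linarith

/-- a trail in `S` -/
def IsTrail (S : Finset α) (D : List (α × Bool)) : Prop :=
  D ≠ [] ∧ D.Chain' (Rel p q) ∧ (D.map Prod.fst).Nodup ∧ ∀ d ∈ D, d.1 ∈ S

lemma trail_edges_subset {S : Finset α} {D : List (α × Bool)} (h : IsTrail p q S D) :
    (D.map Prod.fst).toFinset ⊆ S := by
  intro e he
  simp only [List.mem_toFinset, List.mem_map] at he
  obtain ⟨d, hd, rfl⟩ := he
  exact h.2.2.2 d hd

lemma trail_length_le {S : Finset α} {D : List (α × Bool)} (h : IsTrail p q S D) :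
    D.length ≤ S.card := by
  have h1 : (D.map Prod.fst).toFinset.card = D.length := by
    rw [List.toFinset_card_of_nodup h.2.2.1, List.length_map]
  rw [← h1]
  exact Finset.card_le_card (trail_edges_subset p q h)

lemma exists_maximal_trail {S : Finset α} (hS : S.Nonempty) :
    ∃ D, IsTrail p q S D ∧ ∀ D', IsTrail p q S D' → D'.length ≤ D.length := by
  obtain ⟨e, he⟩ := hS
  have hne : {n | ∃ D, IsTrail p q S D ∧ D.length = n}.Nonempty := by
    refine ⟨1, [(e, true)], ⟨by simp, List.isChain_singleton _, by simp, ?_⟩, by simp⟩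
    intro d hd; simp at hd; simp [hd, he]
  have hbdd : BddAbove {n | ∃ D, IsTrail p q S D ∧ D.length = n} := by
    refine ⟨S.card, fun n hn => ?_⟩
    obtain ⟨D, hD, rfl⟩ := hn
    exact trail_length_le p q hD
  obtain ⟨D, hD, hlen⟩ := Nat.sSup_mem hne hbdd
  exact ⟨D, hD, fun D' h' => hlen ▸ le_csSup hbdd ⟨D', h', rfl⟩⟩

end PartitionAux
namespace PartitionAux

variable {α A B : Type*} [DecidableEq α] [DecidableEq A] [DecidableEq B]
variable (p : α → A) (q : α → B)

lemma halve (S : Finset α) :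
    ∃ T ⊆ S, ∀ c, |2 * (cnt p q T c : ℤ) - cnt p q S c| ≤ 1 := by
  induction S using Finset.strongInduction with
  | _ S IH =>
  rcases S.eq_empty_or_nonempty with rfl | hS
  · exact ⟨∅, le_refl _, fun c => by simp [cnt_empty]⟩
  obtain ⟨D, hD, hmax⟩ := exists_maximal_trail p q hS
  obtain ⟨hne, hch, hnd, hmem⟩ := hD
  set U := (D.map Prod.fst).toFinset with hU
  have hUS : U ⊆ S := trail_edges_subset p q ⟨hne, hch, hnd, hmem⟩
  have hUne : U.Nonempty := by
    obtain ⟨d, D', rfl⟩ := List.exists_cons_of_ne_nil hne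
    exact ⟨d.1, by simp [hU]⟩
  have hss : S \ U ⊂ S := Finset.sdiff_ssubset hUS hUne
  obtain ⟨T', hT'sub, hT'⟩ := IH (S \ U) hss
  have hpksub : pick true D ⊆ U := pick_subset true D
  have hdisj : Disjoint (pick true D) T' :=
    Finset.disjoint_sdiff.mono hpksub hT'sub
  refine ⟨pick true D ∪ T',
    Finset.union_subset (hpksub.trans hUS) (hT'sub.trans (Finset.sdiff_subset)), fun c => ?_⟩
  have hpk := pick_cnt p q c true D hnd
  norm_num at hpk
  have key : 2 * (cnt p q (pick true D ∪ T') c : ℤ) - cnt p q S c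
      = alt p q c D + (2 * (cnt p q T' c : ℤ) - cnt p q (S \ U) c) := by
    have h1 : (cnt p q (pick true D ∪ T') c : ℤ)
        = cnt p q (pick true D) c + cnt p q T' c := by
      exact_mod_cast cnt_union p q hdisj c
    have h2 : (cnt p q S c : ℤ) = cnt p q U c + cnt p q (S \ U) c := by
      have : cnt p q S c = cnt p q (U ∪ (S \ U)) c := by
        rw [Finset.union_sdiff_of_subset hUS]
      rw [this, cnt_union p q Finset.disjoint_sdiff c]; push_cast; ring
    rw [h1, h2]; linarith [hpk]
  rw [key]
  set cs := dst p q (D.head hne) with hcs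
  set ce := dfn p q (D.getLast hne) with hce
  by_cases hc : c = cs ∨ c = ce
  · -- the endpoint classes: remaining graph has no incidences there
    have hfwd : ∀ nd : α × Bool, nd.1 ∈ S → nd.1 ∉ U → dst p q nd ≠ ce := by
      intro nd h1 h2 h3
      have hnotin : nd.1 ∉ D.map Prod.fst := by simpa [hU, List.mem_toFinset] using h2
      have htr : IsTrail p q S (D ++ [nd]) := by
        refine ⟨by simp, ?_, ?_, ?_⟩
        · unfold List.Chain'; rw [List.isChain_append]
          refine ⟨hch, List.isChain_singleton _, ?_⟩
          intro x hx y hy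
          rw [List.getLast?_eq_getLast hne, Option.mem_some_iff] at hx
          simp only [List.head?_cons, Option.mem_some_iff] at hy
          subst hx; subst hy
          show dfn p q (D.getLast hne) = dst p q nd
          rw [h3, hce]
        · rw [List.map_append]
          exact List.Nodup.append hnd (by simp)
            (fun x hx hy => by simp at hy; exact absurd (hy ▸ hx) hnotin)
        · intro d hd
          rcases List.mem_append.mp hd with h | h
          · exact hmem d h
          · simp at h; rw [h]; exact h1
      have := hmax _ htr
      simp at this
    have hbwd : ∀ nd : α × Bool, nd.1 ∈ S → nd.1 ∉ U → dfn p q nd ≠ cs := by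
      intro nd h1 h2 h3
      have hnotin : nd.1 ∉ D.map Prod.fst := by simpa [hU, List.mem_toFinset] using h2
      have htr : IsTrail p q S (nd :: D) := by
        refine ⟨by simp, ?_, ?_, ?_⟩
        · unfold List.Chain'; rw [List.isChain_cons]
          refine ⟨?_, hch⟩
          intro y hy
          rw [List.head?_eq_head hne, Option.mem_some_iff] at hy
          subst hy
          show dfn p q nd = dst p q (D.head hne)
          rw [h3, hcs]
        · rw [List.map_cons, List.nodup_cons]
          exact ⟨hnotin, hnd⟩
        · intro d hd
          rcases List.mem_cons.mp hd with h | h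
          · rw [h]; exact h1
          · exact hmem d h
      have := hmax _ htr
      simp at this
    have hzero : cnt p q (S \ U) c = 0 := by
      rcases c with a | b
      · simp only [cnt, Finset.card_eq_zero, Finset.filter_eq_empty_iff]
        intro e heSU hpe
        have h1 : e ∈ S := (Finset.mem_sdiff.mp heSU).1
        have h2 : e ∉ U := (Finset.mem_sdiff.mp heSU).2
        rcases hc with h | h
        · exact hbwd (e, false) h1 h2 (by simp [dfn, hpe, ← h])
        · exact hfwd (e, true) h1 h2 (by simp [dst, hpe, ← h])
      · simp only [cnt, Finset.card_eq_zero, Finset.filter_eq_empty_iff]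
        intro e heSU hpe
        have h1 : e ∈ S := (Finset.mem_sdiff.mp heSU).1
        have h2 : e ∉ U := (Finset.mem_sdiff.mp heSU).2
        rcases hc with h | h
        · exact hbwd (e, true) h1 h2 (by simp [dfn, hpe, ← h])
        · exact hfwd (e, false) h1 h2 (by simp [dst, hpe, ← h])
    have hT'0 : cnt p q T' c = 0 := Nat.le_zero.mp (hzero ▸ cnt_mono p q hT'sub c)
    rw [hzero, hT'0]
    simpa using abs_alt_le p q c D hne hch
  · push_neg at hc
    have halt : alt p q c D = 0 := by
      rw [alt_eq p q c D hne hch, if_neg (fun h => hc.1 h.symm), if_neg (fun h => hc.2 h.symm)]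
      ring
    rw [halt, zero_add]
    exact hT' c

end PartitionAux
namespace PartitionAux

variable {α A B : Type*} [DecidableEq α] [DecidableEq A] [DecidableEq B]
variable (p : α → A) (q : α → B)

lemma multiSplit (i : ℕ) (S : Finset α) :
    ∃ E : Fin (2 ^ i) → Finset α,
      (∀ j k, j ≠ k → Disjoint (E j) (E k)) ∧
      Finset.univ.biUnion E = S ∧
      ∀ (c : A ⊕ B) (j : Fin (2 ^ i)),
        |2 ^ i * (cnt p q (E j) c : ℤ) - cnt p q S c| ≤ 2 ^ i - 1 := by
  induction i generalizing S with
  | zero =>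
    refine ⟨fun _ => S, fun j k hjk => absurd (by omega : (j:ℕ) = (k:ℕ)) (fun h => hjk (Fin.ext h)), by simp, ?_⟩
    intro c j; simp
  | succ i IH =>
    obtain ⟨T, hTS, hT⟩ := halve p q S
    obtain ⟨E1, hd1, hu1, hb1⟩ := IH T
    obtain ⟨E2, hd2, hu2, hb2⟩ := IH (S \ T)
    have hpow : 2 ^ (i + 1) = 2 ^ i + 2 ^ i := by rw [pow_succ]; ring
    have hsub1 : ∀ a : Fin (2 ^ i), E1 a ⊆ T :=
      fun a => hu1 ▸ Finset.subset_biUnion_of_mem E1 (Finset.mem_univ a)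
    have hsub2 : ∀ a : Fin (2 ^ i), E2 a ⊆ S \ T :=
      fun a => hu2 ▸ Finset.subset_biUnion_of_mem E2 (Finset.mem_univ a)
    refine ⟨fun j => if h : (j : ℕ) < 2 ^ i then E1 ⟨j, h⟩
      else E2 ⟨(j : ℕ) - 2 ^ i, by have := j.isLt; omega⟩, ?_, ?_, ?_⟩
    · intro j k hjk
      dsimp only
      split_ifs with h1 h2 h2
      · exact hd1 _ _ (fun h => hjk (Fin.ext (by simpa using congrArg Fin.val h)))
      · exact Finset.disjoint_sdiff.mono (hsub1 _) (hsub2 _)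
      · exact (Finset.disjoint_sdiff.mono (hsub1 _) (hsub2 _)).symm
      · refine hd2 _ _ (fun h => hjk (Fin.ext ?_))
        have := congrArg Fin.val h
        simp only at this
        have hj := j.isLt; have hk := k.isLt
        omega
    · apply Finset.ext; intro e
      simp only [Finset.mem_biUnion, Finset.mem_univ, true_and]
      constructor
      · rintro ⟨j, hj⟩
        split_ifs at hj with h
        · exact hTS (hsub1 _ hj)
        · exact Finset.sdiff_subset (hsub2 _ hj)
      · intro he
        by_cases heT : e ∈ T
        · rw [← hu1] at heT
          obtain ⟨a, -, ha⟩ := Finset.mem_biUnion.mp heT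
          have lt1 : (a : ℕ) < 2 ^ (i + 1) := by have := a.isLt; omega
          refine ⟨⟨(a : ℕ), lt1⟩, ?_⟩
          dsimp only
          rw [dif_pos (show ((a : ℕ)) < 2 ^ i from a.isLt)]
          exact ha
        · have heST : e ∈ S \ T := Finset.mem_sdiff.mpr ⟨he, heT⟩
          rw [← hu2] at heST
          obtain ⟨a, -, ha⟩ := Finset.mem_biUnion.mp heST
          have lt2 : (a : ℕ) + 2 ^ i < 2 ^ (i + 1) := by have := a.isLt; omega
          refine ⟨⟨(a : ℕ) + 2 ^ i, lt2⟩, ?_⟩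
          dsimp only
          rw [dif_neg (by omega : ¬ ((a : ℕ) + 2 ^ i < 2 ^ i))]
          convert ha using 2
          exact Fin.ext (by simp)
    · intro c j
      have hsd : (cnt p q S c : ℤ) = cnt p q T c + cnt p q (S \ T) c := by
        have : cnt p q S c = cnt p q (T ∪ (S \ T)) c := by
          rw [Finset.union_sdiff_of_subset hTS]
        rw [this, cnt_union p q Finset.disjoint_sdiff c]; push_cast; ring
      have h2 := hT c
      have e1 : (2 : ℤ) ^ (i + 1) = 2 * 2 ^ i := by ring
      dsimp only
      split_ifs with h
      · have h1 := hb1 c ⟨j, h⟩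
        rw [abs_le] at h1 h2 ⊢
        rw [e1]
        constructor <;> nlinarith [h1.1, h1.2, h2.1, h2.2]
      · have h1 := hb2 c ⟨(j : ℕ) - 2 ^ i, by have := j.isLt; omega⟩
        rw [abs_le] at h1 h2 ⊢
        rw [e1]
        constructor <;> nlinarith [h1.1, h1.2, h2.1, h2.2]

end PartitionAux
namespace PartitionAux

lemma real_bound {x n i : ℕ} (h : |2 ^ i * (x : ℤ) - n| ≤ 2 ^ i - 1) :
    (n : ℝ) / 2 ^ i - 1 ≤ x ∧ (x : ℝ) ≤ n / 2 ^ i + 1 := by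
  rw [abs_le] at h
  have h1 : (-(2 ^ i - 1) : ℝ) ≤ 2 ^ i * x - n := by exact_mod_cast h.1
  have h2 : ((2 : ℝ) ^ i * x - n : ℝ) ≤ 2 ^ i - 1 := by exact_mod_cast h.2
  have hp : (0 : ℝ) < 2 ^ i := by positivity
  constructor
  · rw [sub_le_iff_le_add, div_le_iff₀ hp]
    nlinarith
  · have hx : ((x : ℝ) - 1) ≤ n / 2 ^ i := by
      rw [le_div_iff₀ hp]; nlinarith
    linarith

end PartitionAux

/-- The number of edges of `F` that are incoming to `v` under the orientation `μ`. -/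
def inCount {V : Type*} [DecidableEq V] (μ : Sym2 V → V × V) (F : Finset (Sym2 V)) (v : V) : ℕ :=
  (F.filter (fun e => (μ e).2 = v)).card

/-- The number of edges of `F` that are outgoing from `v` under the orientation `μ`. -/
def outCount {V : Type*} [DecidableEq V] (μ : Sym2 V → V × V) (F : Finset (Sym2 V)) (v : V) : ℕ :=
  (F.filter (fun e => (μ e).1 = v)).card

/-- E can be partitioned into 2^i parts so that for each vertex, the numbers of
incoming and outgoing edges in every part are within 1 of `indeg(v)/2^i` and
`outdeg(v)/2^i`, respectively. -/
theorem partition_oriented_degree_bounds {V : Type*} [Fintype V] [DecidableEq V]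
    (G : SimpleGraph V) [DecidableRel G.Adj] (μ : Sym2 V → V × V)
    (hμ : ∀ e ∈ G.edgeSet, Sym2.mk (μ e).1 (μ e).2 = e) (i : ℕ) :
    ∃ E : Fin (2 ^ i) → Finset (Sym2 V),
      (∀ j k, j ≠ k → Disjoint (E j) (E k)) ∧
      Finset.univ.biUnion E = G.edgeFinset ∧
      ∀ (v : V) (j : Fin (2 ^ i)),
        ((inCount μ G.edgeFinset v : ℝ) / 2 ^ i - 1 ≤ (inCount μ (E j) v : ℝ) ∧
         (inCount μ (E j) v : ℝ) ≤ (inCount μ G.edgeFinset v : ℝ) / 2 ^ i + 1) ∧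
        ((outCount μ G.edgeFinset v : ℝ) / 2 ^ i - 1 ≤ (outCount μ (E j) v : ℝ) ∧
         (outCount μ (E j) v : ℝ) ≤ (outCount μ G.edgeFinset v : ℝ) / 2 ^ i + 1) := by
  classical
  set p : Sym2 V → V := fun e => (μ e).1
  set q : Sym2 V → V := fun e => (μ e).2
  obtain ⟨E, hdisj, huni, hbound⟩ := PartitionAux.multiSplit p q i G.edgeFinset
  refine ⟨E, hdisj, huni, fun v j => ?_⟩
  have hin : ∀ F : Finset (Sym2 V), inCount μ F v = PartitionAux.cnt p q F (Sum.inr v) :=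
    fun F => rfl
  have hout : ∀ F : Finset (Sym2 V), outCount μ F v = PartitionAux.cnt p q F (Sum.inl v) :=
    fun F => rfl
  constructor
  · rw [hin, hin]
    exact PartitionAux.real_bound (hbound (Sum.inr v) j)
  · rw [hout, hout]
    exact PartitionAux.real_bound (hbound (Sum.inl v) j)
end

section
/- Let G = (V, E) be a finite simple graph with maximum degree Δ and with an orientation μ, and let i be a natural number. Then there exists a partition of E into 2^i pairwise disjoint sets E_1, …, E_{2^i} such that for every j ∈ {1, …, 2^i}, the maximum degree of the spanning subgraph (V, E_j) is at most Δ/2^i + 2 (as an inequality between real numbers). -/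
set_option linter.unusedSectionVars false
set_option maxHeartbeats 800000

namespace PartAux

variable {V : Type*} [DecidableEq V]

def degE (F : Finset (Sym2 V)) (v : V) : ℕ := (F.filter (fun e => v ∈ e)).card

def edgesOf : List V → List (Sym2 V)
  | [] => []
  | [_] => []
  | a :: b :: r => s(a, b) :: edgesOf (b :: r)

def partAlt {α : Type*} : List α → List α × List α
  | [] => ([], [])
  | x :: xs => (x :: (partAlt xs).2, (partAlt xs).1)

def cntZ (v : V) (L : List (Sym2 V)) : ℤ := L.countP (fun e => decide (v ∈ e))

lemma partAlt_perm {α : Type*} (L : List α) :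
    ((partAlt L).1 ++ (partAlt L).2).Perm L := by
  induction L with
  | nil => simp [partAlt]
  | cons x xs ih =>
      simp only [partAlt]
      simpa using ((List.perm_append_comm.trans ih).cons x)

lemma edgesOf_cons (a : V) (p : List V) (hp : p ≠ []) :
    edgesOf (a :: p) = s(a, p.head hp) :: edgesOf p := by
  cases p with
  | nil => simp at hp
  | cons b r => rfl

lemma edgesOf_append_singleton (p : List V) (hp : p ≠ []) (w : V) :
    edgesOf (p ++ [w]) = edgesOf p ++ [s(p.getLast hp, w)] := by
  induction p with
  | nil => simp at hp
  | cons a q ih =>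
      cases q with
      | nil => simp [edgesOf]
      | cons b r =>
          have h2 : (b :: r) ≠ [] := by simp
          have : (a :: b :: r) ++ [w] = a :: ((b :: r) ++ [w]) := by simp
          rw [this, edgesOf_cons a ((b :: r) ++ [w]) (by simp),
            edgesOf_cons a (b :: r) h2, ih h2]
          simp [List.getLast_cons h2]

lemma edgesOf_reverse (p : List V) : edgesOf p.reverse = (edgesOf p).reverse := by
  induction p with
  | nil => simp [edgesOf]
  | cons a q ih =>
      cases q with
      | nil => simp [edgesOf]
      | cons b r =>
          have h2 : (b :: r) ≠ [] := by simp
          have hrev : (b :: r).reverse ≠ [] := by simp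
          rw [edgesOf_cons a (b :: r) h2, List.reverse_cons,
            edgesOf_append_singleton _ hrev, ih]
          simp [List.getLast_reverse, Sym2.eq_swap]

def good (F : Finset (Sym2 V)) (p : List V) : Prop :=
  (edgesOf p).Nodup ∧ ∀ e ∈ edgesOf p, e ∈ F

lemma length_le_card {F : Finset (Sym2 V)} {p : List V} (h : good F p) :
    (edgesOf p).length ≤ F.card := by
  classical
  rw [← List.toFinset_card_of_nodup h.1]
  exact Finset.card_le_card (fun e he => h.2 e (List.mem_toFinset.mp he))

lemma frontmax (F : Finset (Sym2 V)) :
    ∀ (k : ℕ) (p : List V) (hp : p ≠ []), good F p →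
      F.card - (edgesOf p).length ≤ k →
      ∃ (q : List V) (hq : q ≠ []), good F q ∧ q.getLast hq = p.getLast hp ∧
        (∀ e ∈ edgesOf p, e ∈ edgesOf q) ∧
        (∀ e ∈ F, q.head hq ∈ e → e ∈ edgesOf q) := by
  intro k
  induction k with
  | zero =>
      intro p hp hg hk
      by_cases hmax : ∀ e ∈ F, p.head hp ∈ e → e ∈ edgesOf p
      · exact ⟨p, hp, hg, rfl, fun e he => he, hmax⟩
      · push_neg at hmax
        obtain ⟨e, heF, hve, henot⟩ := hmax
        exfalso
        -- extending gives a trail with more edges than F.card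
        obtain ⟨w, rfl⟩ := Sym2.mem_iff_exists.mp hve
        have hgood : good F (w :: p) := by
          constructor
          · rw [edgesOf_cons w p hp]
            refine List.Nodup.cons ?_ hg.1
            rw [Sym2.eq_swap]; exact henot
          · intro e' he'
            rw [edgesOf_cons w p hp] at he'
            rcases List.mem_cons.mp he' with h | h
            · rw [h, Sym2.eq_swap]; exact heF
            · exact hg.2 e' h
        have h1 := length_le_card hgood
        rw [edgesOf_cons w p hp] at h1
        simp only [List.length_cons] at h1
        omega
  | succ k ih =>
      intro p hp hg hk
      by_cases hmax : ∀ e ∈ F, p.head hp ∈ e → e ∈ edgesOf p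
      · exact ⟨p, hp, hg, rfl, fun e he => he, hmax⟩
      · push_neg at hmax
        obtain ⟨e, heF, hve, henot⟩ := hmax
        obtain ⟨w, rfl⟩ := Sym2.mem_iff_exists.mp hve
        have hgood : good F (w :: p) := by
          constructor
          · rw [edgesOf_cons w p hp]
            refine List.Nodup.cons ?_ hg.1
            rw [Sym2.eq_swap]; exact henot
          · intro e' he'
            rw [edgesOf_cons w p hp] at he'
            rcases List.mem_cons.mp he' with h | h
            · rw [h, Sym2.eq_swap]; exact heF
            · exact hg.2 e' h
        have hk' : F.card - (edgesOf (w :: p)).length ≤ k := by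
          rw [edgesOf_cons w p hp]; simp only [List.length_cons]; omega
        obtain ⟨q, hq, hqg, hql, hqsub, hqmax⟩ := ih (w :: p) (by simp) hgood hk'
        refine ⟨q, hq, hqg, ?_, ?_, hqmax⟩
        · rw [hql, List.getLast_cons hp]
        · intro e' he'
          exact hqsub e' (by rw [edgesOf_cons w p hp]; exact List.mem_cons_of_mem _ he')

lemma exists_maxtrail (F : Finset (Sym2 V)) (hne : F.Nonempty)
    (hd : ∀ e ∈ F, ¬ e.IsDiag) :
    ∃ (p : List V) (hp : p ≠ []), good F p ∧ edgesOf p ≠ [] ∧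
      (∀ e ∈ F, p.head hp ∈ e → e ∈ edgesOf p) ∧
      (∀ e ∈ F, p.getLast hp ∈ e → e ∈ edgesOf p) := by
  obtain ⟨e₀, he₀⟩ := hne
  induction e₀ using Sym2.ind with
  | _ x y =>
  have hxy : x ≠ y := by
    have := hd _ he₀; simpa [Sym2.isDiag_iff_proj_eq] using this
  have hg0 : good F [x, y] := by
    constructor
    · simp [edgesOf]
    · intro e he; simp only [edgesOf] at he
      rcases List.mem_cons.mp he with h | h
      · rw [h]; exact he₀
      · simp [edgesOf] at h
  obtain ⟨q, hq, hqg, hql, hqsub, hqmax⟩ :=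
    frontmax F F.card [x, y] (by simp) hg0 (by omega)
  have hqr : q.reverse ≠ [] := by simpa using hq
  have hgr : good F q.reverse := by
    constructor
    · rw [edgesOf_reverse]; exact List.nodup_reverse.mpr hqg.1
    · intro e he; rw [edgesOf_reverse, List.mem_reverse] at he; exact hqg.2 e he
  obtain ⟨r, hr, hrg, hrl, hrsub, hrmax⟩ :=
    frontmax F F.card q.reverse hqr hgr (by omega)
  refine ⟨r, hr, hrg, ?_, hrmax, ?_⟩
  · have : s(x, y) ∈ edgesOf r := by
      apply hrsub
      rw [edgesOf_reverse, List.mem_reverse]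
      exact hqsub _ (by simp [edgesOf])
    intro h; rw [h] at this; simp at this
  · intro e heF hve
    have hlast : r.getLast hr = q.head hq := by
      rw [hrl, List.getLast_reverse]
    rw [hlast] at hve
    have := hqmax e heF hve
    apply hrsub
    rw [edgesOf_reverse, List.mem_reverse]
    exact this

lemma cntZ_cons (v : V) (e : Sym2 V) (L : List (Sym2 V)) :
    cntZ v (e :: L) = (if v ∈ e then 1 else 0) + cntZ v L := by
  by_cases h : v ∈ e <;> simp [cntZ, List.countP_cons, h] <;> ring

lemma alt (p : List V) (hp : p ≠ []) (hd : ∀ e ∈ edgesOf p, ¬ e.IsDiag) (v : V) :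
    cntZ v (partAlt (edgesOf p)).1 - cntZ v (partAlt (edgesOf p)).2
      = (if p.head hp = v then 1 else 0)
        + (-1 : ℤ) ^ p.length * (if p.getLast hp = v then 1 else 0) := by
  induction p with
  | nil => simp at hp
  | cons a q ih =>
      cases q with
      | nil =>
          simp only [edgesOf, partAlt, cntZ, List.countP_nil, List.head_cons,
            List.getLast_singleton, List.length_singleton, pow_one]
          by_cases h : a = v <;> simp [h] <;> ring
      | cons b r =>
          have hab : a ≠ b := by
            have := hd s(a, b) (by simp [edgesOf])
            simpa [Sym2.isDiag_iff_proj_eq] using this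
          have hd' : ∀ e ∈ edgesOf (b :: r), ¬ e.IsDiag := fun e he =>
            hd e (by simp [edgesOf, he])
          have ih' := ih (by simp) hd'
          have hmem : (if v ∈ s(a, b) then (1 : ℤ) else 0)
              = (if a = v then 1 else 0) + (if b = v then 1 else 0) := by
            by_cases h1 : a = v <;> by_cases h2 : b = v <;>
              simp_all [Sym2.mem_iff, eq_comm]
          have hgl : (a :: b :: r).getLast (by simp) = (b :: r).getLast (by simp) :=
            List.getLast_cons (by simp)
          have hlen : (a :: b :: r).length = (b :: r).length + 1 := rfl
          show cntZ v (partAlt (s(a, b) :: edgesOf (b :: r))).1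
              - cntZ v (partAlt (s(a, b) :: edgesOf (b :: r))).2 = _
          simp only [partAlt, cntZ_cons, List.head_cons] at *
          rw [hmem, hgl, hlen, pow_succ]
          linear_combination (norm := skip) (-1 : ℤ) * ih'
          by_cases h3 : (b :: r).getLast (List.cons_ne_nil _ _) = v <;> simp only [h3, ↓reduceIte] <;>
            by_cases h1 : a = v <;> by_cases h2 : b = v <;> simp [h1, h2] <;> ring


lemma degE_mono {A B : Finset (Sym2 V)} (h : A ⊆ B) (v : V) : degE A v ≤ degE B v :=
  Finset.card_le_card (Finset.filter_subset_filter _ h)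

lemma degE_union {A B : Finset (Sym2 V)} (h : Disjoint A B) (v : V) :
    degE (A ∪ B) v = degE A v + degE B v := by
  unfold degE
  rw [Finset.filter_union, Finset.card_union_of_disjoint
    (h.mono (Finset.filter_subset _ _) (Finset.filter_subset _ _))]

lemma degE_toFinset (L : List (Sym2 V)) (h : L.Nodup) (v : V) :
    degE L.toFinset v = L.countP (fun e => decide (v ∈ e)) := by
  unfold degE
  have h1 : L.toFinset.filter (fun e => v ∈ e) = (L.filter (fun e => decide (v ∈ e))).toFinset := by
    ext e; simp
  rw [h1, List.toFinset_card_of_nodup (h.filter _), List.countP_eq_length_filter]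


lemma bal : ∀ (n : ℕ) (F : Finset (Sym2 V)), F.card ≤ n → (∀ e ∈ F, ¬ e.IsDiag) →
    ∃ A ⊆ F, ∀ v, 2 * (degE A v : ℤ) - degE F v ≤ 2 ∧
      (degE F v : ℤ) - 2 * degE A v ≤ 2 := by
  intro n
  induction n with
  | zero =>
      intro F hF _
      have : F = ∅ := Finset.card_eq_zero.mp (by omega)
      subst this
      exact ⟨∅, Finset.Subset.refl _, fun v => by simp [degE]⟩
  | succ n ih =>
      intro F hF hd
      rcases Finset.eq_empty_or_nonempty F with rfl | hne
      · exact ⟨∅, Finset.Subset.refl _, fun v => by simp [degE]⟩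
      obtain ⟨p, hp, hg, hpe, hmaxh, hmaxl⟩ := exists_maxtrail F hne hd
      set L := edgesOf p with hL
      have hTF : L.toFinset ⊆ F := fun e he => hg.2 e (List.mem_toFinset.mp he)
      have hTne : L.toFinset.Nonempty := ⟨L.head hpe, List.mem_toFinset.mpr (List.head_mem _)⟩
      set F' := F \ L.toFinset with hF'
      have hcard : F'.card ≤ n := by
        have h1 : F' ⊂ F := Finset.sdiff_ssubset hTF hTne
        have := Finset.card_lt_card h1
        omega
      obtain ⟨A', hA', hbal⟩ := ih F' hcard (fun e he => hd e (Finset.mem_sdiff.mp he).1)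
      have hperm := partAlt_perm L
      have hnodup2 : ((partAlt L).1 ++ (partAlt L).2).Nodup := hperm.nodup_iff.mpr hg.1
      have hevnd : (partAlt L).1.Nodup := (List.nodup_append.mp hnodup2).1
      have hevsub : ∀ e ∈ (partAlt L).1, e ∈ L := fun e he =>
        hperm.mem_iff.mp (List.mem_append_left _ he)
      have hdisj : Disjoint F' L.toFinset := Finset.sdiff_disjoint
      have hAdisj : Disjoint A' (partAlt L).1.toFinset :=
        (hdisj.mono hA' (fun e he => List.mem_toFinset.mpr (hevsub e (List.mem_toFinset.mp he))))
      refine ⟨A' ∪ (partAlt L).1.toFinset, ?_, ?_⟩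
      · intro e he
        rcases Finset.mem_union.mp he with h | h
        · exact (Finset.mem_sdiff.mp (hA' h)).1
        · exact hg.2 e (hevsub e (List.mem_toFinset.mp h))
      intro v
      have hA : degE (A' ∪ (partAlt L).1.toFinset) v
          = degE A' v + (partAlt L).1.countP (fun e => decide (v ∈ e)) := by
        rw [degE_union hAdisj, degE_toFinset _ hevnd]
      have hFT : F' ∪ L.toFinset = F := Finset.sdiff_union_of_subset hTF
      have hFdeg : degE F v = degE F' v + L.countP (fun e => decide (v ∈ e)) := by
        rw [← hFT, degE_union hdisj, degE_toFinset _ hg.1]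
      have hsplit : L.countP (fun e => decide (v ∈ e))
          = (partAlt L).1.countP (fun e => decide (v ∈ e))
            + (partAlt L).2.countP (fun e => decide (v ∈ e)) := by
        rw [← hperm.countP_eq, List.countP_append]
      have halt := alt p hp (fun e he => hd e (hg.2 e he)) v
      simp only [cntZ] at halt
      rw [hA, hFdeg, hsplit]
      set te := (partAlt L).1.countP (fun e => decide (v ∈ e)) with hte
      set tod := (partAlt L).2.countP (fun e => decide (v ∈ e)) with hto
      by_cases hv : p.head hp = v ∨ p.getLast hp = v
      · have hd0 : degE F' v = 0 := by
          unfold degE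
          rw [Finset.card_eq_zero, Finset.filter_eq_empty_iff]
          intro e he hve
          have heF : e ∈ F := (Finset.mem_sdiff.mp he).1
          have heL : e ∈ L := by
            rcases hv with h | h
            · exact hmaxh e heF (by rw [h]; exact hve)
            · exact hmaxl e heF (by rw [h]; exact hve)
          exact (Finset.mem_sdiff.mp he).2 (List.mem_toFinset.mpr heL)
        have hx : degE A' v = 0 :=
          Nat.le_zero.mp (hd0 ▸ degE_mono hA' v)
        rcases neg_one_pow_eq_or ℤ p.length with hpw | hpw <;> rw [hpw] at halt <;>
          split_ifs at halt <;> omega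
      · push_neg at hv
        rw [if_neg hv.1, if_neg hv.2] at halt
        simp only [mul_zero, add_zero] at halt
        have := hbal v
        omega

lemma key : ∀ (i : ℕ) (F : Finset (Sym2 V)), (∀ e ∈ F, ¬ e.IsDiag) →
    ∃ E : Fin (2 ^ i) → Finset (Sym2 V),
      (∀ j k, j ≠ k → Disjoint (E j) (E k)) ∧
      Finset.univ.biUnion E = F ∧
      ∀ j v, (degE (E j) v : ℝ) ≤ (degE F v : ℝ) / 2 ^ i + 2 - 2 / 2 ^ i := by
  intro i
  induction i with
  | zero =>
      intro F hd
      refine ⟨fun _ => F, ?_, ?_, ?_⟩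
      · intro j k hjk
        exact absurd (Fin.ext (by omega : (j : ℕ) = k)) hjk
      · ext e; simp
      · intro j v; simp
  | succ i ih =>
      intro F hd
      obtain ⟨A, hAF, hbal⟩ := bal F.card F le_rfl hd
      have hdA : ∀ e ∈ A, ¬ e.IsDiag := fun e he => hd e (hAF he)
      have hdB : ∀ e ∈ F \ A, ¬ e.IsDiag := fun e he => hd e (Finset.mem_sdiff.mp he).1
      obtain ⟨E₁, hdis1, hbi1, hb1⟩ := ih A hdA
      obtain ⟨E₂, hdis2, hbi2, hb2⟩ := ih (F \ A) hdB
      have hsub1 : ∀ j, E₁ j ⊆ A := fun j =>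
        hbi1 ▸ Finset.subset_biUnion_of_mem E₁ (Finset.mem_univ j)
      have hsub2 : ∀ j, E₂ j ⊆ F \ A := fun j =>
        hbi2 ▸ Finset.subset_biUnion_of_mem E₂ (Finset.mem_univ j)
      have hpow : 2 ^ (i + 1) = 2 ^ i + 2 ^ i := by ring
      have hAB : Disjoint A (F \ A) := Finset.disjoint_sdiff
      refine ⟨fun j => if h : (j : ℕ) < 2 ^ i then E₁ ⟨j, h⟩
        else E₂ ⟨(j : ℕ) - 2 ^ i, by have := j.isLt; omega⟩, ?_, ?_, ?_⟩
      · intro j k hjk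
        have hjk' : (j : ℕ) ≠ (k : ℕ) := fun h => hjk (Fin.ext h)
        dsimp only
        split_ifs with h1 h2 h2
        · exact hdis1 _ _ (fun h => hjk' (by simpa using congrArg Fin.val h))
        · exact hAB.mono (hsub1 _) (hsub2 _)
        · exact (hAB.mono (hsub1 _) (hsub2 _)).symm
        · refine hdis2 _ _ (fun h => ?_)
          have := congrArg Fin.val h
          simp only at this
          omega
      · ext e
        simp only [Finset.mem_biUnion, Finset.mem_univ, true_and]
        constructor
        · rintro ⟨j, hj⟩
          by_cases h : (j : ℕ) < 2 ^ i
          · rw [dif_pos h] at hj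
            exact hAF (hsub1 _ hj)
          · rw [dif_neg h] at hj
            exact (Finset.mem_sdiff.mp (hsub2 _ hj)).1
        · intro he
          by_cases hA : e ∈ A
          · rw [← hbi1] at hA
            obtain ⟨j₁, -, hj₁⟩ := Finset.mem_biUnion.mp hA
            refine ⟨⟨(j₁ : ℕ), by have := j₁.isLt; omega⟩, ?_⟩
            rw [dif_pos j₁.isLt]
            simpa using hj₁
          · have heB : e ∈ F \ A := Finset.mem_sdiff.mpr ⟨he, hA⟩
            rw [← hbi2] at heB
            obtain ⟨j₂, -, hj₂⟩ := Finset.mem_biUnion.mp heB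
            have hlt : (j₂ : ℕ) + 2 ^ i < 2 ^ (i + 1) := by have := j₂.isLt; omega
            refine ⟨⟨(j₂ : ℕ) + 2 ^ i, hlt⟩, ?_⟩
            rw [dif_neg (by simp)]
            have : (⟨(j₂ : ℕ) + 2 ^ i - 2 ^ i, by have := j₂.isLt; omega⟩ : Fin (2 ^ i)) = j₂ :=
              Fin.ext (by simp)
            rw [this]
            exact hj₂
      · intro j v
        have hdd : degE F v = degE A v + degE (F \ A) v := by
          rw [← degE_union hAB, Finset.union_sdiff_of_subset hAF]
        have hb1' := (hbal v).1
        have hb2' := (hbal v).2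
        have hAhalf : (degE A v : ℝ) ≤ ((degE F v : ℝ) + 2) / 2 := by
          have : 2 * (degE A v : ℝ) - (degE F v : ℝ) ≤ 2 := by exact_mod_cast hb1'
          linarith
        have hBhalf : (degE (F \ A) v : ℝ) ≤ ((degE F v : ℝ) + 2) / 2 := by
          have h2 : (degE F v : ℤ) - 2 * degE A v ≤ 2 := hb2'
          have h3 : 2 * (degE (F \ A) v : ℤ) ≤ degE F v + 2 := by omega
          have : 2 * (degE (F \ A) v : ℝ) ≤ (degE F v : ℝ) + 2 := by exact_mod_cast h3
          linarith
        have hkey : (((degE F v : ℝ) + 2) / 2) / 2 ^ i + 2 - 2 / 2 ^ i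
            = (degE F v : ℝ) / 2 ^ (i + 1) + 2 - 2 / 2 ^ (i + 1) := by
          rw [pow_succ]
          have h2i : (2 : ℝ) ^ i ≠ 0 := by positivity
          field_simp
          ring
        have hpos : (0 : ℝ) < 2 ^ i := by positivity
        dsimp only
        split_ifs with h
        · calc (degE (E₁ ⟨(j : ℕ), h⟩) v : ℝ)
              ≤ (degE A v : ℝ) / 2 ^ i + 2 - 2 / 2 ^ i := hb1 _ v
            _ ≤ (((degE F v : ℝ) + 2) / 2) / 2 ^ i + 2 - 2 / 2 ^ i := by gcongr
            _ = _ := hkey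
        · calc (degE (E₂ _) v : ℝ)
              ≤ (degE (F \ A) v : ℝ) / 2 ^ i + 2 - 2 / 2 ^ i := hb2 _ v
            _ ≤ (((degE F v : ℝ) + 2) / 2) / 2 ^ i + 2 - 2 / 2 ^ i := by gcongr
            _ = _ := hkey

end PartAux

/-- for an oriented graph, E can be partitioned into 2^i parts whose
maximum degrees are at most `Δ/2^i + 2`. -/
theorem oriented_partition_maxDegree_bound {V : Type*} [Fintype V] [DecidableEq V]
    (G : SimpleGraph V) [DecidableRel G.Adj] (μ : Sym2 V → V × V)
    (hμ : ∀ e ∈ G.edgeSet, Sym2.mk (μ e).1 (μ e).2 = e) (i : ℕ) :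
    ∃ E : Fin (2 ^ i) → Finset (Sym2 V),
      (∀ j k, j ≠ k → Disjoint (E j) (E k)) ∧
      Finset.univ.biUnion E = G.edgeFinset ∧
      ∀ j, (maxDegreeOn (E j) : ℝ) ≤ (G.maxDegree : ℝ) / 2 ^ i + 2 := by
  classical
  obtain ⟨E, hdis, hbi, hb⟩ := PartAux.key i G.edgeFinset
    (fun e he => G.not_isDiag_of_mem_edgeSet (SimpleGraph.mem_edgeFinset.mp he))
  refine ⟨E, hdis, hbi, ?_⟩
  intro j
  have hdeg : ∀ v, (PartAux.degE (E j) v : ℝ) ≤ (G.maxDegree : ℝ) / 2 ^ i + 2 := by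
    intro v
    have h1 := hb j v
    have h2 : PartAux.degE G.edgeFinset v = G.degree v := by
      unfold PartAux.degE
      rw [← SimpleGraph.incidenceFinset_eq_filter, SimpleGraph.card_incidenceFinset_eq_degree]
    have h3 : (G.degree v : ℝ) ≤ (G.maxDegree : ℝ) := by
      exact_mod_cast G.degree_le_maxDegree v
    rw [h2] at h1
    have hpos : (0 : ℝ) < 2 ^ i := by positivity
    calc (PartAux.degE (E j) v : ℝ)
        ≤ (G.degree v : ℝ) / 2 ^ i + 2 - 2 / 2 ^ i := h1
      _ ≤ (G.maxDegree : ℝ) / 2 ^ i + 2 - 0 := by gcongr <;> positivity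
      _ = (G.maxDegree : ℝ) / 2 ^ i + 2 := by ring
  rcases isEmpty_or_nonempty V with hV | hV
  · have h0 : maxDegreeOn (E j) = 0 := by
      simp [maxDegreeOn, Finset.univ_eq_empty]
    rw [h0]
    push_cast
    positivity
  · obtain ⟨v, -, hv⟩ := Finset.exists_mem_eq_sup Finset.univ Finset.univ_nonempty
      (fun v : V => ((E j).filter (fun e => v ∈ e)).card)
    have h0 : maxDegreeOn (E j) = PartAux.degE (E j) v := hv
    rw [h0]
    exact hdeg v
end

section
/- Let G = (V, E) be a finite simple graph with arboricity at most α, i.e., |E(G[S])| ≤ α·(|S| − 1) for every subset S ⊆ V with |S| ≥ 2. Then G admits an acyclic orientation μ of its edges in which every vertex has outdegree at most 2α. -/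
open Finset

/-- Handshake count within an induced subset. -/
lemma arb_double_count {V : Type*} [Fintype V] [DecidableEq V]
    (G : SimpleGraph V) [DecidableRel G.Adj] (S : Finset V) :
    ∑ v ∈ S, (S.filter (G.Adj v)).card
      = 2 * (G.edgeFinset.filter (fun e => ∀ v ∈ e, v ∈ S)).card := by
  classical
  set P := (S ×ˢ S).filter (fun p => G.Adj p.1 p.2) with hP
  set ES := G.edgeFinset.filter (fun e => ∀ v ∈ e, v ∈ S) with hES
  have h1 : P.card = ∑ v ∈ S, (S.filter (G.Adj v)).card := by
    rw [Finset.card_eq_sum_card_fiberwise (f := Prod.fst) (t := S)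
      (by intro p hp; simp only [hP, Finset.mem_coe, mem_filter, mem_product] at hp; exact hp.1.1)]
    refine Finset.sum_congr rfl (fun v hv => ?_)
    refine Finset.card_bij (fun p _ => p.2) ?_ ?_ ?_
    · rintro ⟨a, b⟩ hp
      simp only [hP, mem_filter, mem_product] at hp ⊢
      obtain ⟨⟨⟨_, hb⟩, hadj⟩, rfl⟩ := hp
      exact ⟨hb, hadj⟩
    · rintro ⟨a, b⟩ hp ⟨a', b'⟩ hp' h
      simp only [hP, mem_filter, mem_product] at hp hp'
      simp only at h
      cases h; cases hp.2; cases hp'.2; rfl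
    · intro w hw
      simp only [mem_filter] at hw
      refine ⟨(v, w), ?_, rfl⟩
      simp only [hP, mem_filter, mem_product]
      exact ⟨⟨⟨hv, hw.1⟩, hw.2⟩, trivial⟩
  have h2 : P.card = 2 * ES.card := by
    rw [Finset.card_eq_sum_card_fiberwise (f := fun p => Sym2.mk p.1 p.2) (t := ES) ?_]
    · rw [Finset.sum_congr rfl (g := fun _ => 2) ?_, Finset.sum_const, smul_eq_mul,
        mul_comm]
      intro e he
      induction e using Sym2.ind with
      | _ a b =>
        simp only [hES, mem_filter, SimpleGraph.mem_edgeFinset, SimpleGraph.mem_edgeSet] at he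
        obtain ⟨hadj, hmem⟩ := he
        have ha : a ∈ S := hmem a (by simp)
        have hb : b ∈ S := hmem b (by simp)
        have hne : a ≠ b := G.ne_of_adj hadj
        have : P.filter (fun p => Sym2.mk p.1 p.2 = s(a, b)) = {(a, b), (b, a)} := by
          ext ⟨x, y⟩
          simp only [hP, mem_filter, mem_product, mem_insert, mem_singleton, Prod.mk.injEq,
            Sym2.eq_iff]
          constructor
          · rintro ⟨_, (⟨rfl, rfl⟩ | ⟨rfl, rfl⟩)⟩
            · left; exact ⟨rfl, rfl⟩
            · right; exact ⟨rfl, rfl⟩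
          · rintro (⟨rfl, rfl⟩ | ⟨rfl, rfl⟩)
            · exact ⟨⟨⟨ha, hb⟩, hadj⟩, Or.inl ⟨rfl, rfl⟩⟩
            · exact ⟨⟨⟨hb, ha⟩, hadj.symm⟩, Or.inr ⟨rfl, rfl⟩⟩
        rw [this, Finset.card_insert_of_notMem (by simp [hne]), Finset.card_singleton]
    · rintro ⟨a, b⟩ hp
      simp only [hP, Finset.mem_coe, mem_filter, mem_product] at hp
      simp only [hES, Finset.mem_coe, mem_filter, SimpleGraph.mem_edgeFinset, SimpleGraph.mem_edgeSet]
      refine ⟨hp.2, ?_⟩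
      intro v hv
      rw [Sym2.mem_iff] at hv
      rcases hv with rfl | rfl
      · exact hp.1.1
      · exact hp.1.2
  omega

/-- Existence of a degeneracy ordering. -/
lemma arb_exists_order {V : Type*} [Fintype V] [DecidableEq V]
    (G : SimpleGraph V) [DecidableRel G.Adj] (α : ℕ)
    (harb : ∀ S : Finset V, 2 ≤ S.card →
      (G.edgeFinset.filter (fun e => ∀ v ∈ e, v ∈ S)).card ≤ α * (S.card - 1)) :
    ∀ (n : ℕ) (S : Finset V), S.card = n →
      ∃ f : V → ℕ, Set.InjOn f S ∧
        ∀ v ∈ S, (S.filter (fun w => G.Adj v w ∧ f v < f w)).card ≤ 2 * α := by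
  intro n
  induction n with
  | zero =>
    intro S hS
    rw [Finset.card_eq_zero] at hS
    subst hS
    exact ⟨fun _ => 0, by simp, by simp⟩
  | succ n ih =>
    intro S hS
    have hne : S.Nonempty := by rw [← Finset.card_pos, hS]; omega
    obtain ⟨v, hv, hdeg⟩ : ∃ v ∈ S, (S.filter (G.Adj v)).card ≤ 2 * α := by
      by_contra h
      push_neg at h
      have hsum : (2 * α + 1) * S.card ≤ ∑ v ∈ S, (S.filter (G.Adj v)).card := by
        calc (2 * α + 1) * S.card = ∑ _v ∈ S, (2 * α + 1) := by
              rw [Finset.sum_const, smul_eq_mul, mul_comm]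
          _ ≤ _ := Finset.sum_le_sum (fun v hv => h v hv)
      rw [arb_double_count] at hsum
      rcases Nat.lt_or_ge S.card 2 with h2 | h2
      · obtain ⟨v, hvS⟩ := hne
        have hcard1 : S.card = 1 := by
          have := Finset.card_pos.mpr ⟨v, hvS⟩; omega
        have hdeg0 : (S.filter (G.Adj v)).card = 0 := by
          rw [Finset.card_eq_zero, Finset.eq_empty_iff_forall_notMem]
          intro w hw
          rw [Finset.mem_filter] at hw
          have : w = v := by
            rw [Finset.card_eq_one] at hcard1
            obtain ⟨a, ha⟩ := hcard1
            rw [ha, Finset.mem_singleton] at hw hvS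
            rw [hw.1, hvS]
          exact G.irrefl (this ▸ hw.2)
        have := h v hvS
        omega
      · have hE := harb S h2
        have key : (2 * α + 1) * S.card ≤ 2 * (α * (S.card - 1)) :=
          hsum.trans (Nat.mul_le_mul_left 2 hE)
        have h3 : 2 * (α * (S.card - 1)) ≤ 2 * α * S.card := by
          rw [← mul_assoc]
          exact Nat.mul_le_mul_left _ (Nat.sub_le _ _)
        have h4 : 2 * α * S.card < (2 * α + 1) * S.card := by
          have hpos : 0 < S.card := by omega
          calc 2 * α * S.card < 2 * α * S.card + S.card := by omega
            _ = (2 * α + 1) * S.card := by ring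
        omega
    obtain ⟨f, hf_inj, hf⟩ := ih (S.erase v)
      (by rw [Finset.card_erase_of_mem hv, hS]; rfl)
    refine ⟨fun w => if w = v then 0 else f w + 1, ?_, ?_⟩
    · intro a ha b hb hab
      simp only at hab
      by_cases hav : a = v <;> by_cases hbv : b = v
      · rw [hav, hbv]
      · simp [hav, hbv] at hab
      · simp [hav, hbv] at hab
      · simp only [if_neg hav, if_neg hbv, Nat.add_right_cancel_iff] at hab
        exact hf_inj (Finset.mem_coe.mpr (Finset.mem_erase.mpr ⟨hav, ha⟩))
          (Finset.mem_coe.mpr (Finset.mem_erase.mpr ⟨hbv, hb⟩)) hab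
    · intro u hu
      by_cases huv : u = v
      · subst huv
        refine le_trans (Finset.card_le_card ?_) hdeg
        intro w hw
        rw [Finset.mem_filter] at hw ⊢
        exact ⟨hw.1, hw.2.1⟩
      · refine le_trans (Finset.card_le_card ?_) (hf u (Finset.mem_erase.mpr ⟨huv, hu⟩))
        intro w hw
        simp only [Finset.mem_filter, Finset.mem_erase] at hw ⊢
        obtain ⟨hwS, hadj, hlt⟩ := hw
        simp only [if_neg huv] at hlt
        by_cases hwv : w = v
        · simp [hwv] at hlt
        · simp only [if_neg hwv] at hlt
          exact ⟨⟨hwv, hwS⟩, hadj, by omega⟩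

/-- a graph of arboricity at most `α` admits an acyclic orientation in which
every vertex has outdegree at most `2α`. -/
theorem acyclic_orientation_of_arboricity {V : Type*} [Fintype V] [DecidableEq V]
    (G : SimpleGraph V) [DecidableRel G.Adj] (α : ℕ)
    (harb : ∀ S : Finset V, 2 ≤ S.card →
      (G.edgeFinset.filter (fun e => ∀ v ∈ e, v ∈ S)).card ≤ α * (S.card - 1)) :
    ∃ μ : Sym2 V → V × V,
      (∀ e ∈ G.edgeSet, Sym2.mk (μ e).1 (μ e).2 = e) ∧
      (∀ v : V, (G.edgeFinset.filter (fun e => (μ e).1 = v)).card ≤ 2 * α) ∧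
      ¬ ∃ (n : ℕ) (c : Fin (n + 1) → V), 0 < n ∧ c 0 = c (Fin.last n) ∧
          ∀ i : Fin n, G.Adj (c i.castSucc) (c i.succ) ∧
            μ s(c i.castSucc, c i.succ) = (c i.castSucc, c i.succ) := by
  classical
  obtain ⟨f, hf_inj, hf⟩ := arb_exists_order G α harb (Finset.univ.card) Finset.univ rfl
  have hinj : Function.Injective f := fun a b h =>
    hf_inj (Finset.mem_coe.mpr (Finset.mem_univ a)) (Finset.mem_coe.mpr (Finset.mem_univ b)) h
  set μ : Sym2 V → V × V := Sym2.lift ⟨fun a b => if f a < f b then (a, b) else (b, a), by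
    intro a b
    rcases lt_trichotomy (f a) (f b) with h | h | h
    · simp [h, asymm h]
    · have : a = b := hinj h
      subst this; simp
    · simp [h, asymm h]⟩ with hμdef
  have hμ : ∀ a b : V, μ s(a, b) = if f a < f b then (a, b) else (b, a) := fun a b => rfl
  have hmk : ∀ e : Sym2 V, Sym2.mk (μ e).1 (μ e).2 = e := by
    intro e
    induction e using Sym2.ind with
    | _ a b =>
      rw [hμ]
      split_ifs
      · rfl
      · exact Sym2.eq_swap
  have horient : ∀ e ∈ G.edgeFinset, G.Adj (μ e).1 (μ e).2 ∧ f (μ e).1 < f (μ e).2 := by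
    intro e he
    induction e using Sym2.ind with
    | _ a b =>
      rw [SimpleGraph.mem_edgeFinset, SimpleGraph.mem_edgeSet] at he
      rw [hμ]
      have hne : f a ≠ f b := fun h => G.ne_of_adj he (hinj h)
      split_ifs with h
      · exact ⟨he, h⟩
      · exact ⟨he.symm, lt_of_le_of_ne (not_lt.mp h) (Ne.symm hne)⟩
  refine ⟨μ, fun e _ => hmk e, ?_, ?_⟩
  · intro v
    have hsub := hf v (Finset.mem_univ v)
    refine le_trans (Finset.card_le_card_of_injOn (fun e => (μ e).2) ?_ ?_) hsub
    · intro e he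
      rw [Finset.mem_coe, Finset.mem_filter] at he
      rw [Finset.mem_coe, Finset.mem_filter]
      obtain ⟨heE, hfst⟩ := he
      obtain ⟨hadj, hlt⟩ := horient e heE
      rw [hfst] at hadj hlt
      exact ⟨Finset.mem_univ _, hadj, hlt⟩
    · intro e₁ h₁ e₂ h₂ h
      simp only [Finset.coe_filter, Set.mem_setOf_eq] at h₁ h₂
      have : μ e₁ = μ e₂ := Prod.ext (h₁.2.trans h₂.2.symm) h
      rw [← hmk e₁, ← hmk e₂, this]
  · rintro ⟨n, c, hn, hc0, hstep⟩
    have hmono : StrictMono (fun i => f (c i)) := by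
      rw [Fin.strictMono_iff_lt_succ]
      intro i
      obtain ⟨hadj, heq⟩ := hstep i
      rw [hμ] at heq
      split_ifs at heq with h
      · exact h
      · have : c i.succ = c i.castSucc := congrArg Prod.fst heq
        exact absurd this.symm (G.ne_of_adj hadj)
    have h0last : (0 : Fin (n + 1)) < Fin.last n := by
      rw [Fin.lt_def]
      simp [hn]
    exact ne_of_lt (hmono h0last) (congrArg f hc0)
end
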